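/- arXiv:1008.3919 — 9 statements merged into one kernel-verified Lean document; each statement's English description precedes it below -/
import Mathlib

section
/- If T̂ is the transfer operator of a conservative ergodic measure preserving transformation and g : X → [0,∞) is measurable and subinvariant, i.e. T̂ g ≤ g a.e., then g is constant a.e. -/
open MeasureTheory Filter Topology ENNReal Set

set_option linter.unusedSectionVars false

section Aux

variable {X : Type*} [MeasurableSpace X] {μ : Measure X} [SigmaFinite μ]
  {T : X → X} {Phat : (X → ℝ≥0∞) → (X → ℝ≥0∞)}

private lemma setDual (hT : Measurable T)
    (hPdual : ∀ f g : X → ℝ≥0∞, Measurable f → Measurable g →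
      ∫⁻ x, f (T x) * g x ∂μ = ∫⁻ x, f x * Phat g x ∂μ)
    {u : X → ℝ≥0∞} (hu : Measurable u) {E : Set X} (hE : MeasurableSet E) :
    ∫⁻ x in T ⁻¹' E, u x ∂μ = ∫⁻ x in E, Phat u x ∂μ := by
  have h := hPdual (E.indicator 1) u (measurable_one.indicator hE) hu
  have l1 : ∀ x, (E.indicator 1) (T x) * u x = (T ⁻¹' E).indicator u x := by
    intro x
    by_cases hx : T x ∈ E
    · simp [Set.indicator_of_mem, hx, Set.mem_preimage]
    · simp [Set.indicator_of_notMem, hx, Set.mem_preimage]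
  have l2 : ∀ x, (E.indicator 1) x * Phat u x = E.indicator (Phat u) x := by
    intro x
    by_cases hx : x ∈ E
    · simp [Set.indicator_of_mem, hx]
    · simp [Set.indicator_of_notMem, hx]
  simp_rw [l1, l2] at h
  rwa [lintegral_indicator (hT hE) u, lintegral_indicator hE (Phat u)] at h

private lemma monoP (hT : Measurable T)
    (hPmeas : ∀ f, Measurable f → Measurable (Phat f))
    (hPdual : ∀ f g : X → ℝ≥0∞, Measurable f → Measurable g →
      ∫⁻ x, f (T x) * g x ∂μ = ∫⁻ x, f x * Phat g x ∂μ)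
    {u v : X → ℝ≥0∞} (hu : Measurable u) (hv : Measurable v) (h : u ≤ᵐ[μ] v) :
    Phat u ≤ᵐ[μ] Phat v := by
  refine ae_le_of_forall_setLIntegral_le_of_sigmaFinite (hPmeas u hu) fun s hs _ => ?_
  rw [← setDual hT hPdual hu hs, ← setDual hT hPdual hv hs]
  exact lintegral_mono_ae (ae_restrict_of_ae h)

private lemma congrP (hT : Measurable T)
    (hPmeas : ∀ f, Measurable f → Measurable (Phat f))
    (hPdual : ∀ f g : X → ℝ≥0∞, Measurable f → Measurable g →
      ∫⁻ x, f (T x) * g x ∂μ = ∫⁻ x, f x * Phat g x ∂μ)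
    {u v : X → ℝ≥0∞} (hu : Measurable u) (hv : Measurable v) (h : u =ᵐ[μ] v) :
    Phat u =ᵐ[μ] Phat v := by
  refine ae_eq_of_forall_setLIntegral_eq_of_sigmaFinite (hPmeas u hu) (hPmeas v hv)
    fun s hs _ => ?_
  rw [← setDual hT hPdual hu hs, ← setDual hT hPdual hv hs]
  exact lintegral_congr_ae (ae_restrict_of_ae h)

private lemma constP (hmp : MeasurePreserving T μ μ)
    (hPmeas : ∀ f, Measurable f → Measurable (Phat f))
    (hPdual : ∀ f g : X → ℝ≥0∞, Measurable f → Measurable g →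
      ∫⁻ x, f (T x) * g x ∂μ = ∫⁻ x, f x * Phat g x ∂μ)
    (c : ℝ≥0∞) : Phat (fun _ => c) =ᵐ[μ] fun _ => c := by
  refine ae_eq_of_forall_setLIntegral_eq_of_sigmaFinite
    (hPmeas _ measurable_const) measurable_const fun s hs _ => ?_
  rw [← setDual hmp.measurable hPdual measurable_const hs, setLIntegral_const,
    setLIntegral_const, hmp.measure_preimage hs.nullMeasurableSet]

private lemma addP (hT : Measurable T)
    (hPmeas : ∀ f, Measurable f → Measurable (Phat f))
    (hPdual : ∀ f g : X → ℝ≥0∞, Measurable f → Measurable g →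
      ∫⁻ x, f (T x) * g x ∂μ = ∫⁻ x, f x * Phat g x ∂μ)
    {u v : X → ℝ≥0∞} (hu : Measurable u) (hv : Measurable v) :
    Phat (fun x => u x + v x) =ᵐ[μ] fun x => Phat u x + Phat v x := by
  refine ae_eq_of_forall_setLIntegral_eq_of_sigmaFinite
    (hPmeas _ (hu.add hv)) ((hPmeas u hu).add (hPmeas v hv)) fun s hs _ => ?_
  rw [← setDual (u := fun x => u x + v x) hT hPdual (hu.add hv) hs, lintegral_add_left hu,
    lintegral_add_left (hPmeas u hu), setDual hT hPdual hu hs, setDual hT hPdual hv hs]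

private lemma smulP (hT : Measurable T)
    (hPmeas : ∀ f, Measurable f → Measurable (Phat f))
    (hPdual : ∀ f g : X → ℝ≥0∞, Measurable f → Measurable g →
      ∫⁻ x, f (T x) * g x ∂μ = ∫⁻ x, f x * Phat g x ∂μ)
    {u : X → ℝ≥0∞} (hu : Measurable u) (c : ℝ≥0∞) :
    Phat (fun x => c * u x) =ᵐ[μ] fun x => c * Phat u x := by
  refine ae_eq_of_forall_setLIntegral_eq_of_sigmaFinite
    (hPmeas _ (hu.const_mul c)) ((hPmeas u hu).const_mul c) fun s hs _ => ?_
  rw [← setDual hT hPdual (hu.const_mul c) hs, lintegral_const_mul c hu,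
    lintegral_const_mul c (hPmeas u hu), setDual hT hPdual hu hs]

private lemma iterMeas (hPmeas : ∀ f, Measurable f → Measurable (Phat f))
    {u : X → ℝ≥0∞} (hu : Measurable u) (n : ℕ) : Measurable (Phat^[n] u) := by
  induction n generalizing u hu with
  | zero => exact hu
  | succ n ih => rw [Function.iterate_succ_apply]; exact ih (hPmeas u hu)

private lemma iterSetDual (hT : Measurable T)
    (hPmeas : ∀ f, Measurable f → Measurable (Phat f))
    (hPdual : ∀ f g : X → ℝ≥0∞, Measurable f → Measurable g →
      ∫⁻ x, f (T x) * g x ∂μ = ∫⁻ x, f x * Phat g x ∂μ)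
    {u : X → ℝ≥0∞} (hu : Measurable u) {E : Set X} (hE : MeasurableSet E) (n : ℕ) :
    ∫⁻ x in (T^[n]) ⁻¹' E, u x ∂μ = ∫⁻ x in E, Phat^[n] u x ∂μ := by
  induction n generalizing u hu with
  | zero => simp
  | succ n ih =>
    rw [Function.iterate_succ, Set.preimage_comp, setDual hT hPdual hu ((hT.iterate n) hE),
      ih (hPmeas u hu), Function.iterate_succ_apply] at *

private lemma iterCongr (hT : Measurable T)
    (hPmeas : ∀ f, Measurable f → Measurable (Phat f))
    (hPdual : ∀ f g : X → ℝ≥0∞, Measurable f → Measurable g →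
      ∫⁻ x, f (T x) * g x ∂μ = ∫⁻ x, f x * Phat g x ∂μ)
    {u v : X → ℝ≥0∞} (hu : Measurable u) (hv : Measurable v) (h : u =ᵐ[μ] v) (n : ℕ) :
    Phat^[n] u =ᵐ[μ] Phat^[n] v := by
  induction n generalizing u v hu hv h with
  | zero => exact h
  | succ n ih =>
    rw [Function.iterate_succ_apply, Function.iterate_succ_apply]
    exact ih (hPmeas u hu) (hPmeas v hv) (congrP hT hPmeas hPdual hu hv h)

private lemma iterAdd (hT : Measurable T)
    (hPmeas : ∀ f, Measurable f → Measurable (Phat f))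
    (hPdual : ∀ f g : X → ℝ≥0∞, Measurable f → Measurable g →
      ∫⁻ x, f (T x) * g x ∂μ = ∫⁻ x, f x * Phat g x ∂μ)
    {u v : X → ℝ≥0∞} (hu : Measurable u) (hv : Measurable v) (n : ℕ) :
    Phat^[n] (fun x => u x + v x) =ᵐ[μ] fun x => Phat^[n] u x + Phat^[n] v x := by
  induction n generalizing u v hu hv with
  | zero => rfl
  | succ n ih =>
    rw [Function.iterate_succ_apply, Function.iterate_succ_apply, Function.iterate_succ_apply]
    calc Phat^[n] (Phat fun x => u x + v x)
        =ᵐ[μ] Phat^[n] (fun x => Phat u x + Phat v x) :=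
          iterCongr hT hPmeas hPdual (hPmeas _ (hu.add hv))
            ((hPmeas u hu).add (hPmeas v hv)) (addP hT hPmeas hPdual hu hv) n
      _ =ᵐ[μ] fun x => Phat^[n] (Phat u) x + Phat^[n] (Phat v) x :=
          ih (hPmeas u hu) (hPmeas v hv)


private lemma hopf (hmp : MeasurePreserving T μ μ) (hc : Conservative T μ)
    (hPmeas : ∀ f, Measurable f → Measurable (Phat f))
    (hPdual : ∀ f g : X → ℝ≥0∞, Measurable f → Measurable g →
      ∫⁻ x, f (T x) * g x ∂μ = ∫⁻ x, f x * Phat g x ∂μ)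
    {h : X → ℝ≥0∞} (hh : Measurable h) (hfin : ∀ x, h x ≠ ⊤)
    (hsub : Phat h ≤ᵐ[μ] h) : Phat h =ᵐ[μ] h := by
  have hT : Measurable T := hmp.measurable
  set d : X → ℝ≥0∞ := fun x => h x - Phat h x with hd_def
  have hdmeas : Measurable d := hh.sub (hPmeas h hh)
  suffices hd0 : d =ᵐ[μ] 0 by
    filter_upwards [hsub, hd0] with x h1 h2
    exact le_antisymm h1 (tsub_eq_zero_iff_le.1 h2)
  have key1 : (fun x => Phat h x + d x) =ᵐ[μ] h :=
    hsub.mono fun x hx => add_tsub_cancel_of_le hx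
  have claim : ∀ m : ℕ,
      h =ᵐ[μ] fun x => Phat^[m] h x + ∑ k ∈ Finset.range m, Phat^[k] d x := by
    intro m
    induction m with
    | zero => simp
    | succ m ih =>
      have step : Phat^[m] h =ᵐ[μ] fun x => Phat^[m + 1] h x + Phat^[m] d x := by
        calc Phat^[m] h =ᵐ[μ] Phat^[m] (fun x => Phat h x + d x) :=
              iterCongr hT hPmeas hPdual hh ((hPmeas h hh).add hdmeas) key1.symm m
          _ =ᵐ[μ] fun x => Phat^[m] (Phat h) x + Phat^[m] d x :=
              iterAdd hT hPmeas hPdual (hPmeas h hh) hdmeas m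
          _ = fun x => Phat^[m + 1] h x + Phat^[m] d x := by
              simp [Function.iterate_succ_apply]
      calc h =ᵐ[μ] fun x => Phat^[m] h x + ∑ k ∈ Finset.range m, Phat^[k] d x := ih
        _ =ᵐ[μ] fun x => (Phat^[m + 1] h x + Phat^[m] d x)
            + ∑ k ∈ Finset.range m, Phat^[k] d x := by
              filter_upwards [step] with x hx; rw [← hx]
        _ = fun x => Phat^[m + 1] h x + ∑ k ∈ Finset.range (m + 1), Phat^[k] d x := by
              funext x; rw [Finset.sum_range_succ]; ring
  by_contra hne
  rw [EventuallyEq, ae_iff] at hne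
  simp only [Pi.zero_apply] at hne
  set A : ℕ → Set X := fun n =>
    ({x | ((n : ℝ≥0∞) + 1)⁻¹ ≤ d x ∧ h x ≤ (n : ℝ≥0∞)} ∩ spanningSets μ n) with hA_def
  have hAmeas : ∀ n, MeasurableSet (A n) := fun n =>
    ((measurableSet_le measurable_const hdmeas).inter
      (measurableSet_le hh measurable_const)).inter (measurableSet_spanningSets μ n)
  have cover : {x | ¬ d x = 0} ⊆ ⋃ n, A n := by
    intro x hx
    simp only [Set.mem_setOf_eq] at hx
    obtain ⟨n₁, hn₁⟩ := ENNReal.exists_inv_nat_lt hx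
    obtain ⟨n₂, hn₂⟩ := ENNReal.exists_nat_gt (hfin x)
    obtain ⟨n₃, hn₃⟩ : ∃ n, x ∈ spanningSets μ n := by
      have := iUnion_spanningSets μ
      exact Set.mem_iUnion.1 (this ▸ Set.mem_univ x)
    refine Set.mem_iUnion.2 ⟨n₁ ⊔ n₂ ⊔ n₃, ⟨⟨?_, ?_⟩, ?_⟩⟩
    · have e2 : (((n₁ ⊔ n₂ ⊔ n₃ : ℕ) : ℝ≥0∞) + 1)⁻¹ ≤ ((n₁ : ℝ≥0∞))⁻¹ := by
        refine ENNReal.inv_le_inv.2 ?_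
        calc ((n₁ : ℝ≥0∞)) ≤ ((n₁ ⊔ n₂ ⊔ n₃ : ℕ) : ℝ≥0∞) :=
              Nat.cast_le.2 (le_sup_of_le_left le_sup_left)
          _ ≤ ((n₁ ⊔ n₂ ⊔ n₃ : ℕ) : ℝ≥0∞) + 1 := le_self_add
      exact (e2.trans_lt hn₁).le
    · exact le_trans hn₂.le (Nat.cast_le.2 (le_sup_of_le_left le_sup_right))
    · exact monotone_spanningSets μ le_sup_right hn₃
  obtain ⟨n, hn⟩ : ∃ n, μ (A n) ≠ 0 := by
    by_contra h'
    push_neg at h'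
    exact hne (measure_mono_null cover (measure_iUnion_null h'))
  set C := A n with hC_def
  set ε : ℝ≥0∞ := ((n : ℝ≥0∞) + 1)⁻¹ with hε_def
  have hε : ε ≠ 0 := ENNReal.inv_ne_zero.2 (by simp)
  have hC : MeasurableSet C := hAmeas n
  have hCfin : μ C < ∞ :=
    lt_of_le_of_lt (measure_mono Set.inter_subset_right) (measure_spanningSets_lt_top μ n)
  have hCd : ∀ x ∈ C, ε ≤ d x := fun x hx => hx.1.1
  have hCh : ∀ x ∈ C, h x ≤ (n : ℝ≥0∞) := fun x hx => hx.1.2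
  -- upper bound on partial sums
  have bound : ∀ m : ℕ,
      ∫⁻ x in C, (∑ k ∈ Finset.range m, Phat^[k] d x) ∂μ ≤ (n : ℝ≥0∞) * μ C := by
    intro m
    calc ∫⁻ x in C, (∑ k ∈ Finset.range m, Phat^[k] d x) ∂μ
        ≤ ∫⁻ x in C, h x ∂μ := by
          refine lintegral_mono_ae ?_
          filter_upwards [ae_restrict_of_ae (claim m)] with x hx
          rw [hx]; exact le_add_self
      _ ≤ ∫⁻ _ in C, (n : ℝ≥0∞) ∂μ := by
          refine lintegral_mono_ae ?_
          filter_upwards [ae_restrict_mem hC] with x hx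
          exact hCh x hx
      _ = (n : ℝ≥0∞) * μ C := by rw [setLIntegral_const]
  have lower : ∀ k : ℕ, ε * μ (C ∩ (T^[k]) ⁻¹' C) ≤ ∫⁻ x in C, Phat^[k] d x ∂μ := by
    intro k
    rw [← iterSetDual hT hPmeas hPdual hdmeas hC k]
    calc ε * μ (C ∩ (T^[k]) ⁻¹' C)
        = ∫⁻ x in (T^[k]) ⁻¹' C, C.indicator (fun _ => ε) x ∂μ := by
          rw [lintegral_indicator hC, lintegral_const, Measure.restrict_restrict hC,
            Measure.restrict_apply MeasurableSet.univ, Set.univ_inter]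
      _ ≤ ∫⁻ x in (T^[k]) ⁻¹' C, d x ∂μ := by
          refine lintegral_mono fun x => ?_
          by_cases hx : x ∈ C
          · rw [Set.indicator_of_mem hx]; exact hCd x hx
          · rw [Set.indicator_of_notMem hx]; exact zero_le
  have sumbound : ε * ∑' k : ℕ, μ (C ∩ (T^[k]) ⁻¹' C) ≤ (n : ℝ≥0∞) * μ C := by
    rw [ENNReal.tsum_eq_iSup_nat, ENNReal.mul_iSup]
    refine iSup_le fun m => ?_
    rw [Finset.mul_sum]
    calc ∑ k ∈ Finset.range m, ε * μ (C ∩ (T^[k]) ⁻¹' C)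
        ≤ ∑ k ∈ Finset.range m, ∫⁻ x in C, Phat^[k] d x ∂μ :=
          Finset.sum_le_sum fun k _ => lower k
      _ = ∫⁻ x in C, (∑ k ∈ Finset.range m, Phat^[k] d x) ∂μ :=
          (lintegral_finset_sum _ fun k _ => iterMeas hPmeas hdmeas k).symm
      _ ≤ (n : ℝ≥0∞) * μ C := bound m
  have top : ∑' k : ℕ, μ (C ∩ (T^[k]) ⁻¹' C) = ⊤ := by
    have hrec := hc.ae_mem_imp_frequently_image_mem hC.nullMeasurableSet
    have eq1 : ∫⁻ x in C,
        (∑' k : ℕ, ((T^[k]) ⁻¹' C).indicator (fun _ => (1 : ℝ≥0∞)) x) ∂μ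
        = ∑' k : ℕ, μ (C ∩ (T^[k]) ⁻¹' C) := by
      rw [lintegral_tsum fun k =>
        ((measurable_const (a := (1 : ℝ≥0∞))).indicator ((hT.iterate k) hC)).aemeasurable]
      refine tsum_congr fun k => ?_
      rw [lintegral_indicator ((hT.iterate k) hC), lintegral_const,
        Measure.restrict_restrict ((hT.iterate k) hC),
        Measure.restrict_apply MeasurableSet.univ, Set.univ_inter, one_mul, Set.inter_comm]
    have eq2 : ∫⁻ x in C,
        (∑' k : ℕ, ((T^[k]) ⁻¹' C).indicator (fun _ => (1 : ℝ≥0∞)) x) ∂μ = ⊤ := by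
      have hae : ∀ᵐ x ∂(μ.restrict C),
          (∑' k : ℕ, ((T^[k]) ⁻¹' C).indicator (fun _ => (1 : ℝ≥0∞)) x) = ⊤ := by
        filter_upwards [ae_restrict_mem hC, ae_restrict_of_ae hrec] with x hx hfreq
        have hsinf : {k : ℕ | T^[k] x ∈ C}.Infinite :=
          Nat.frequently_atTop_iff_infinite.1 (hfreq hx)
        haveI := hsinf.to_subtype
        calc (∑' k : ℕ, ((T^[k]) ⁻¹' C).indicator (fun _ => (1 : ℝ≥0∞)) x)
            = ∑' k : ℕ, {k : ℕ | T^[k] x ∈ C}.indicator (fun _ => (1 : ℝ≥0∞)) k := by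
              refine tsum_congr fun k => ?_
              by_cases hk : T^[k] x ∈ C
              · rw [Set.indicator_of_mem (Set.mem_preimage.2 hk),
                  Set.indicator_of_mem (show k ∈ {k | T^[k] x ∈ C} from hk)]
              · rw [Set.indicator_of_notMem (fun hxk => hk (Set.mem_preimage.1 hxk)),
                  Set.indicator_of_notMem (show k ∉ {k | T^[k] x ∈ C} from hk)]
          _ = ∑' _ : {k : ℕ | T^[k] x ∈ C}, (1 : ℝ≥0∞) :=
              (tsum_subtype _ _).symm
          _ = ⊤ := ENNReal.tsum_const_eq_top_of_ne_zero one_ne_zero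
      rw [lintegral_congr_ae hae, setLIntegral_const, ENNReal.top_mul hn]
    rw [← eq1, eq2]
  rw [top, ENNReal.mul_top hε] at sumbound
  exact (ENNReal.mul_ne_top (ENNReal.natCast_ne_top n) hCfin.ne)
    (top_le_iff.1 sumbound)

end Aux

/-- Subinvariant nonnegative functions for the transfer operator of a conservative
ergodic measure preserving transformation are a.e. constant. Here `Phat` is the
transfer operator, characterized by duality: `∫ (f ∘ T) · g = ∫ f · Phat g`. -/
theorem stmt2 {X : Type*} [MeasurableSpace X] (μ : Measure X) [SigmaFinite μ]
    (T : X → X) (hc : Conservative T μ) (herg : Ergodic T μ)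
    (Phat : (X → ℝ≥0∞) → (X → ℝ≥0∞))
    (hPmeas : ∀ f, Measurable f → Measurable (Phat f))
    (hPdual : ∀ f g : X → ℝ≥0∞, Measurable f → Measurable g →
      ∫⁻ x, f (T x) * g x ∂μ = ∫⁻ x, f x * Phat g x ∂μ)
    (g : X → ℝ≥0∞) (hg : Measurable g) (hgfin : ∀ x, g x ≠ ⊤)
    (hsub : ∀ᵐ x ∂μ, Phat g x ≤ g x) :
    ∃ c : ℝ≥0∞, g =ᵐ[μ] fun _ => c := by
  have hmp : MeasurePreserving T μ μ := herg.toMeasurePreserving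
  have hT : Measurable T := hmp.measurable
  have hgi : Phat g =ᵐ[μ] g := hopf hmp hc hPmeas hPdual hg hgfin hsub
  -- dichotomy for level sets at finite levels
  have dich : ∀ c : ℝ≥0∞, c ≠ ⊤ →
      {x | c < g x} =ᵐ[μ] (∅ : Set X) ∨ {x | c < g x} =ᵐ[μ] Set.univ := by
    intro c hcne
    set B : Set X := {x | c < g x} with hB_def
    have hB : MeasurableSet B := measurableSet_lt measurable_const hg
    set hm : X → ℝ≥0∞ := fun x => min (g x) c with hm_def
    have hmmeas : Measurable hm := hg.min measurable_const
    have hmfin : ∀ x, hm x ≠ ⊤ := fun x => ne_top_of_le_ne_top hcne (min_le_right _ _)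
    have hsubm : Phat hm ≤ᵐ[μ] hm := by
      have l1 : Phat hm ≤ᵐ[μ] Phat g := monoP hT hPmeas hPdual hmmeas hg
        (Filter.Eventually.of_forall fun x => min_le_left _ _)
      have l2 : Phat hm ≤ᵐ[μ] Phat (fun _ => c) := monoP hT hPmeas hPdual hmmeas
        measurable_const (Filter.Eventually.of_forall fun x => min_le_right _ _)
      filter_upwards [l1, l2, hgi, constP hmp hPmeas hPdual c] with x e1 e2 e3 e4
      exact le_min (e1.trans e3.le) (e2.trans e4.le)
    have heqm : Phat hm =ᵐ[μ] hm := hopf hmp hc hPmeas hPdual hmmeas hmfin hsubm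
    set hd : X → ℝ≥0∞ := fun x => g x - c with hd_def
    have hdmeas : Measurable hd := hg.sub measurable_const
    have hdfin : ∀ x, hd x ≠ ⊤ := fun x => ne_top_of_le_ne_top (hgfin x) tsub_le_self
    have ptid : (fun x => hd x + hm x) = g := by
      funext x
      rcases le_total (g x) c with hle | hle
      · simp [hd_def, hm_def, tsub_eq_zero_of_le hle, min_eq_left hle]
      · simp [hd_def, hm_def, min_eq_right hle, tsub_add_cancel_of_le hle]
    have heqd : Phat hd =ᵐ[μ] hd := by
      have l1 : Phat (fun x => hd x + hm x) =ᵐ[μ] fun x => Phat hd x + Phat hm x :=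
        addP hT hPmeas hPdual hdmeas hmmeas
      rw [ptid] at l1
      filter_upwards [l1, hgi, heqm] with x e1 e2 e3
      have key : Phat hd x + hm x = hd x + hm x := by
        rw [← e3, ← e1, e2, ← congrFun ptid x, e3]
      have hmx : hm x ≠ ⊤ := hmfin x
      rw [← ENNReal.add_left_inj hmx]
      exact key
    set u : ℕ → X → ℝ≥0∞ := fun n x => min ((n : ℝ≥0∞) * hd x) 1 with hu_def
    have humeas : ∀ n, Measurable (u n) := fun n => (hdmeas.const_mul _).min measurable_const
    have humono : Monotone u := fun a b hab x =>
      min_le_min (mul_le_mul_left (Nat.cast_le.2 hab) _) le_rfl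
    have husub : ∀ n, Phat (u n) ≤ᵐ[μ] u n := by
      intro n
      have l1 : Phat (u n) ≤ᵐ[μ] Phat (fun x => (n : ℝ≥0∞) * hd x) :=
        monoP hT hPmeas hPdual (humeas n) (hdmeas.const_mul _)
          (Filter.Eventually.of_forall fun x => min_le_left _ _)
      have l2 : Phat (u n) ≤ᵐ[μ] Phat (fun _ => (1 : ℝ≥0∞)) :=
        monoP hT hPmeas hPdual (humeas n) measurable_const
          (Filter.Eventually.of_forall fun x => min_le_right _ _)
      filter_upwards [l1, l2, smulP hT hPmeas hPdual hdmeas (n : ℝ≥0∞), heqd,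
        constP hmp hPmeas hPdual 1] with x e1 e2 e3 e4 e5
      refine le_min ?_ (e2.trans e5.le)
      calc Phat (u n) x ≤ Phat (fun x => (n : ℝ≥0∞) * hd x) x := e1
        _ = (n : ℝ≥0∞) * Phat hd x := e3
        _ = (n : ℝ≥0∞) * hd x := by rw [e4]
    set indB : X → ℝ≥0∞ := B.indicator (fun _ => 1) with hind_def
    have hindmeas : Measurable indB := measurable_const.indicator hB
    have supu : (fun x => ⨆ n : ℕ, u n x) = indB := by
      funext x
      by_cases hx : x ∈ B
      · rw [hind_def, Set.indicator_of_mem hx]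
        refine le_antisymm (iSup_le fun n => min_le_right _ _) ?_
        have hdx : hd x ≠ 0 := by
          simp only [hd_def, ne_eq, tsub_eq_zero_iff_le, not_le]
          exact hx
        obtain ⟨n, hn⟩ := ENNReal.exists_inv_nat_lt hdx
        have hn0 : (n : ℝ≥0∞) ≠ 0 := by
          rintro h0
          rw [h0, ENNReal.inv_zero] at hn
          exact (hdfin x) (top_le_iff.1 hn.le)
        have h1 : (1 : ℝ≥0∞) ≤ (n : ℝ≥0∞) * hd x := by
          calc (1 : ℝ≥0∞) = (n : ℝ≥0∞) * (n : ℝ≥0∞)⁻¹ :=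
                (ENNReal.mul_inv_cancel hn0 (ENNReal.natCast_ne_top n)).symm
            _ ≤ (n : ℝ≥0∞) * hd x := mul_le_mul_right hn.le _
        refine le_trans ?_ (le_iSup (fun n => u n x) n)
        rw [hu_def]
        simp only [min_eq_right h1, le_refl]
      · rw [hind_def, Set.indicator_of_notMem hx]
        have hd0 : hd x = 0 := tsub_eq_zero_of_le (not_lt.1 hx)
        simp [hu_def, hd0]
    have hsupmeas : Measurable (fun x => ⨆ n : ℕ, u n x) := Measurable.iSup fun n => humeas n
    have hsubind : Phat indB ≤ᵐ[μ] indB := by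
      rw [← supu]
      refine ae_le_of_forall_setLIntegral_le_of_sigmaFinite (hPmeas _ hsupmeas)
        fun s hs _ => ?_
      rw [← setDual hT hPdual hsupmeas hs,
        lintegral_iSup (fun n => humeas n) (fun a b hab x => humono hab x)]
      refine iSup_le fun n => ?_
      rw [setDual hT hPdual (humeas n) hs]
      calc ∫⁻ x in s, Phat (u n) x ∂μ
          ≤ ∫⁻ x in s, u n x ∂μ := lintegral_mono_ae (ae_restrict_of_ae (husub n))
        _ ≤ ∫⁻ x in s, (⨆ m : ℕ, u m x) ∂μ :=
            lintegral_mono fun x => le_iSup (fun m => u m x) n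
    have hindfin : ∀ x, indB x ≠ ⊤ := by
      intro x
      by_cases hx : x ∈ B <;> simp [hind_def, hx]
    have heqind : Phat indB =ᵐ[μ] indB := hopf hmp hc hPmeas hPdual hindmeas hindfin hsubind
    set indBc : X → ℝ≥0∞ := Bᶜ.indicator (fun _ => 1) with hindc_def
    have hindcmeas : Measurable indBc := measurable_const.indicator hB.compl
    have hsum1 : (fun x => indB x + indBc x) = fun _ => (1 : ℝ≥0∞) := by
      funext x
      by_cases hx : x ∈ B
      · simp [hind_def, hindc_def, hx]
      · simp [hind_def, hindc_def, hx]
    have heqindc : Phat indBc =ᵐ[μ] indBc := by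
      have l1 : Phat (fun x => indB x + indBc x) =ᵐ[μ]
          fun x => Phat indB x + Phat indBc x := addP hT hPmeas hPdual hindmeas hindcmeas
      rw [hsum1] at l1
      filter_upwards [l1, constP hmp hPmeas hPdual 1, heqind] with x e1 e2 e3
      have key : indB x + Phat indBc x = indB x + indBc x := by
        rw [← e3, ← e1, e2, ← congrFun hsum1 x, e3]
      exact (ENNReal.add_right_inj (hindfin x)).1 key
    have i3 : ∀ (v : Set X), MeasurableSet v → ∀ s : Set X, MeasurableSet s →
        ∫⁻ x in s, v.indicator (fun _ => (1 : ℝ≥0∞)) x ∂μ = μ (v ∩ s) := by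
      intro v hv s hs
      rw [lintegral_indicator hv, lintegral_const, Measure.restrict_restrict hv,
        Measure.restrict_apply MeasurableSet.univ, Set.univ_inter, one_mul]
    have setid : ∀ E : Set X, MeasurableSet E → μ (B ∩ T ⁻¹' E) = μ (B ∩ E) := by
      intro E hE
      have i1 : ∫⁻ x in T ⁻¹' E, indB x ∂μ = ∫⁻ x in E, Phat indB x ∂μ :=
        setDual hT hPdual hindmeas hE
      have i2 : ∫⁻ x in E, Phat indB x ∂μ = ∫⁻ x in E, indB x ∂μ :=
        lintegral_congr_ae (ae_restrict_of_ae heqind)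
      rw [← i3 B hB _ (hT hE), ← i3 B hB _ hE, i1, i2]
    have setidc : ∀ E : Set X, MeasurableSet E → μ (Bᶜ ∩ T ⁻¹' E) = μ (Bᶜ ∩ E) := by
      intro E hE
      have i1 : ∫⁻ x in T ⁻¹' E, indBc x ∂μ = ∫⁻ x in E, Phat indBc x ∂μ :=
        setDual hT hPdual hindcmeas hE
      have i2 : ∫⁻ x in E, Phat indBc x ∂μ = ∫⁻ x in E, indBc x ∂μ :=
        lintegral_congr_ae (ae_restrict_of_ae heqindc)
      rw [← i3 Bᶜ hB.compl _ (hT hE), ← i3 Bᶜ hB.compl _ hE, i1, i2]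
    have d1 : μ (B \ T ⁻¹' B) = 0 := by
      calc μ (B \ T ⁻¹' B) = μ (B ∩ T ⁻¹' Bᶜ) := by rw [Set.diff_eq, Set.preimage_compl]
        _ = μ (B ∩ Bᶜ) := setid Bᶜ hB.compl
        _ = 0 := by simp
    have d2 : μ (T ⁻¹' B \ B) = 0 := by
      calc μ (T ⁻¹' B \ B) = μ (Bᶜ ∩ T ⁻¹' B) := by rw [Set.diff_eq, Set.inter_comm]
        _ = μ (Bᶜ ∩ B) := setidc B hB
        _ = 0 := by simp
    have hinv : T ⁻¹' B =ᵐ[μ] B := by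
      rw [ae_eq_set]
      exact ⟨d2, d1⟩
    exact herg.quasiErgodic.ae_empty_or_univ₀ hB.nullMeasurableSet hinv
  -- final assembly
  set S : Set ℝ≥0∞ := {c | μ {x | c < g x} = 0} with hS_def
  set c₀ : ℝ≥0∞ := sInf S with hc₀_def
  refine ⟨c₀, ?_⟩
  have null1 : μ {x | c₀ < g x} = 0 := by
    have cover : {x | c₀ < g x} ⊆ ⋃ q : ℚ,
        {x | c₀ < (Real.toNNReal q : ℝ≥0∞) ∧ (Real.toNNReal q : ℝ≥0∞) < g x} := by
      intro x hx
      obtain ⟨q, _, h1, h2⟩ := ENNReal.lt_iff_exists_rat_btwn.1 hx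
      exact Set.mem_iUnion.2 ⟨q, h1, h2⟩
    refine measure_mono_null cover (measure_iUnion_null fun q => ?_)
    by_cases hq : c₀ < (Real.toNNReal q : ℝ≥0∞)
    · obtain ⟨a, haS, haq⟩ := sInf_lt_iff.1 hq
      have h0 : μ {x | (Real.toNNReal q : ℝ≥0∞) < g x} = 0 :=
        measure_mono_null (fun x hx => lt_trans haq hx) haS
      exact measure_mono_null (fun x hx => hx.2) h0
    · have : {x | c₀ < (Real.toNNReal q : ℝ≥0∞) ∧ (Real.toNNReal q : ℝ≥0∞) < g x}
          = (∅ : Set X) := Set.eq_empty_of_forall_notMem fun x hx => hq hx.1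
      rw [this, measure_empty]
  have null2 : μ {x | g x < c₀} = 0 := by
    have cover : {x | g x < c₀} ⊆ ⋃ q : ℚ,
        {x | (Real.toNNReal q : ℝ≥0∞) < c₀ ∧ g x ≤ (Real.toNNReal q : ℝ≥0∞)} := by
      intro x hx
      obtain ⟨q, _, h1, h2⟩ := ENNReal.lt_iff_exists_rat_btwn.1 hx
      exact Set.mem_iUnion.2 ⟨q, h2, h1.le⟩
    refine measure_mono_null cover (measure_iUnion_null fun q => ?_)
    by_cases hq : (Real.toNNReal q : ℝ≥0∞) < c₀
    · have hqS : (Real.toNNReal q : ℝ≥0∞) ∉ S := fun hmem => (sInf_le hmem).not_gt hq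
      have hfull : {x | (Real.toNNReal q : ℝ≥0∞) < g x} =ᵐ[μ] Set.univ := by
        rcases dich (Real.toNNReal q : ℝ≥0∞) ENNReal.coe_ne_top with h | h
        · exact absurd (ae_eq_empty.1 h) hqS
        · exact h
      have h0 : μ {x | (Real.toNNReal q : ℝ≥0∞) < g x}ᶜ = 0 := ae_eq_univ.1 hfull
      refine measure_mono_null (fun x hx => ?_) h0
      simp only [Set.mem_compl_iff, Set.mem_setOf_eq, not_lt]
      exact hx.2
    · have : {x | (Real.toNNReal q : ℝ≥0∞) < c₀ ∧ g x ≤ (Real.toNNReal q : ℝ≥0∞)}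
          = (∅ : Set X) := Set.eq_empty_of_forall_notMem fun x hx => hq hx.1
      rw [this, measure_empty]
  have huni : μ ({x | g x < c₀} ∪ {x | c₀ < g x}) = 0 := measure_union_null null2 null1
  rw [Filter.EventuallyEq, ae_iff]
  refine measure_mono_null (fun x hx => ?_) huni
  rcases lt_or_gt_of_ne (hx : ¬ g x = c₀) with h | h
  · exact Or.inl h
  · exact Or.inr h
end

section
/- Let R_n be nonnegative random variables with E(R_n) = 1. If R_n ≤ 1 + ε(1 + dμ/dP) a.e., where μ is a probability measure absolutely continuous with respect to P, then for every t ∈ (0,1), P([R_n ≤ t]) ≤ 2ε / (1 + ε − t). -/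
open MeasureTheory Filter Topology ENNReal

/-- If `R ≥ 0`, `E(R) = 1` and `R ≤ 1 + ε(1 + dμ/dP)` a.e., then
`P([R ≤ t]) ≤ 2ε/(1 + ε − t)` for every `t ∈ (0,1)`. -/
theorem stmt5 {Ω : Type*} [MeasurableSpace Ω] (P μ : Measure Ω)
    [IsProbabilityMeasure P] [IsProbabilityMeasure μ] (hac : μ ≪ P)
    (R : Ω → ℝ) (hRmeas : Measurable R) (hRpos : ∀ x, 0 ≤ R x)
    (hRint : Integrable R P) (hRmean : ∫ x, R x ∂P = 1)
    (ε : ℝ) (hε : 0 < ε)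
    (hbd : ∀ᵐ x ∂P, R x ≤ 1 + ε * (1 + (μ.rnDeriv P x).toReal))
    (t : ℝ) (ht : t ∈ Set.Ioo (0 : ℝ) 1) :
    (P {x | R x ≤ t}).toReal ≤ 2 * ε / (1 + ε - t) := by
  obtain ⟨ht0, ht1⟩ := ht
  set A : Set Ω := {x | R x ≤ t} with hA
  have hAm : MeasurableSet A := measurableSet_le hRmeas measurable_const
  set p : ℝ := (P A).toReal with hp
  have hp0 : 0 ≤ p := ENNReal.toReal_nonneg
  have hp1 : p ≤ 1 := by
    rw [hp]
    exact (ENNReal.toReal_le_toReal (measure_ne_top _ _) one_ne_top).2 prob_le_one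
  have hPc : (P Aᶜ).toReal = 1 - p := by
    rw [measure_compl hAm (measure_ne_top _ _), measure_univ]
    rw [ENNReal.toReal_sub_of_le prob_le_one one_ne_top]
    simp [hp]
  set f : Ω → ℝ := fun x => (μ.rnDeriv P x).toReal with hf
  have hfint : Integrable f P := Measure.integrable_toReal_rnDeriv
  have hfnn : ∀ x, 0 ≤ f x := fun x => ENNReal.toReal_nonneg
  have hfmean : ∫ x, f x ∂P = 1 := by
    rw [hf]
    simpa using Measure.integral_toReal_rnDeriv hac
  set g : Ω → ℝ := fun x => 1 + ε * (1 + f x) with hg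
  have hgint : Integrable g P := by
    apply Integrable.add (integrable_const 1)
    exact ((integrable_const (1:ℝ)).add hfint).const_mul ε
  -- split the integral
  have hsplit : ∫ x in A, R x ∂P + ∫ x in Aᶜ, R x ∂P = 1 := by
    rw [integral_add_compl hAm hRint, hRmean]
  have h1 : ∫ x in A, R x ∂P ≤ t * p := by
    calc ∫ x in A, R x ∂P ≤ ∫ _x in A, t ∂P := by
          apply setIntegral_mono_on hRint.integrableOn (integrableOn_const (measure_ne_top _ _)) hAm
          intro x hx; exact hx
      _ = t * p := by rw [setIntegral_const, smul_eq_mul, mul_comm, measureReal_def]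
  have h2 : ∫ x in Aᶜ, R x ∂P ≤ (1 + ε) * (1 - p) + ε := by
    have step1 : ∫ x in Aᶜ, R x ∂P ≤ ∫ x in Aᶜ, g x ∂P := by
      apply setIntegral_mono_ae_restrict hRint.integrableOn hgint.integrableOn
      exact ae_restrict_of_ae hbd
    have step2 : ∫ x in Aᶜ, g x ∂P = (1 + ε) * (1 - p) + ε * ∫ x in Aᶜ, f x ∂P := by
      have : ∫ x in Aᶜ, g x ∂P = ∫ x in Aᶜ, ((1 + ε) + ε * f x) ∂P := by
        apply setIntegral_congr_fun hAm.compl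
        intro x _; simp [hg]; ring
      rw [this, integral_add (integrable_const _).integrableOn
        (hfint.const_mul ε).integrableOn, setIntegral_const, smul_eq_mul,
        integral_const_mul, measureReal_def, hPc]
      ring
    have step3 : ∫ x in Aᶜ, f x ∂P ≤ 1 := by
      rw [← hfmean]
      exact setIntegral_le_integral hfint (Filter.Eventually.of_forall hfnn)
    calc ∫ x in Aᶜ, R x ∂P ≤ (1 + ε) * (1 - p) + ε * ∫ x in Aᶜ, f x ∂P :=
          step1.trans step2.le
      _ ≤ (1 + ε) * (1 - p) + ε := by nlinarith
  have key : p * (1 + ε - t) ≤ 2 * ε := by nlinarith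
  have hd : 0 < 1 + ε - t := by linarith
  rw [le_div_iff₀ hd]
  exact key
end

section
/- If (a(n)) is γ-regularly varying with γ ∈ (0,1), b is an asymptotic inverse of a (i.e. b(a(n)) ∼ a(b(n)) ∼ n), and φ₋ is a nonincreasing sequence satisfying φ₋(a(a(n))) ≤ a(n)/n for all large n, then ∑_{n=1}^∞ φ₋(n)/n < ∞. -/
open MeasureTheory Filter Topology ENNReal

private lemma aux_potter (a : ℕ → ℕ) (hmono : Monotone a) (hpos : ∀ n, 0 < a n)
    (s : ℝ) (hs0 : 0 < s) (N : ℕ) (hN1 : 1 ≤ N)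
    (hdbl : ∀ n, N ≤ n → (a (2 * n) : ℝ) ≤ 2 ^ s * a n) :
    ∃ C : ℝ, 1 ≤ C ∧ ∀ n, 1 ≤ n → (a n : ℝ) ≤ C * (n : ℝ) ^ s := by
  have h2s : (0:ℝ) < 2 ^ s := Real.rpow_pos_of_pos two_pos s
  have haN1 : (1:ℝ) ≤ a N := by exact_mod_cast hpos N
  have hiter : ∀ k : ℕ, (a (2 ^ k * N) : ℝ) ≤ ((2:ℝ) ^ s) ^ k * a N := by
    intro k
    induction k with
    | zero => simp
    | succ k ih =>
      have h1 : (a (2 ^ (k+1) * N) : ℝ) ≤ 2 ^ s * a (2 ^ k * N) := by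
        have hNle : N ≤ 2 ^ k * N := Nat.le_mul_of_pos_left N (pow_pos two_pos k)
        have := hdbl (2 ^ k * N) hNle
        have heq : 2 * (2 ^ k * N) = 2 ^ (k+1) * N := by ring
        rwa [heq] at this
      calc (a (2 ^ (k+1) * N) : ℝ) ≤ 2 ^ s * a (2 ^ k * N) := h1
        _ ≤ 2 ^ s * (((2:ℝ) ^ s) ^ k * a N) := by
            exact mul_le_mul_of_nonneg_left ih h2s.le
        _ = ((2:ℝ) ^ s) ^ (k+1) * a N := by ring
  refine ⟨2 ^ s * a N + a N, ?_, ?_⟩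
  · nlinarith
  intro n hn1
  have hn0 : (0:ℝ) ≤ (n:ℝ) := Nat.cast_nonneg n
  have hns1 : (1:ℝ) ≤ (n:ℝ) ^ s := by
    have : ((1:ℝ)) ^ s ≤ (n:ℝ) ^ s :=
      Real.rpow_le_rpow zero_le_one (by exact_mod_cast hn1) hs0.le
    simpa using this
  have hns0 : (0:ℝ) ≤ (n:ℝ) ^ s := by linarith
  rcases le_or_gt N n with hNn | hnN
  · -- main case
    set k := Nat.log 2 (n / N) with hk
    have hdivpos : 0 < n / N := Nat.div_pos hNn (by omega)
    have h1 : 2 ^ k ≤ n / N := Nat.pow_log_le_self 2 (by omega)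
    have h2 : n / N < 2 ^ (k+1) := Nat.lt_pow_succ_log_self one_lt_two _
    have hle : n ≤ 2 ^ (k+1) * N := le_of_lt ((Nat.div_lt_iff_lt_mul (by omega)).mp h2)
    have hb1 : (a n : ℝ) ≤ ((2:ℝ) ^ s) ^ (k+1) * a N := by
      calc (a n : ℝ) ≤ (a (2 ^ (k+1) * N) : ℝ) := by exact_mod_cast hmono hle
        _ ≤ _ := hiter (k+1)
    have hpows : ((2:ℝ) ^ s) ^ k = ((2:ℝ) ^ (k:ℕ) : ℝ) ^ s := by
      rw [← Real.rpow_natCast ((2:ℝ) ^ s) k, ← Real.rpow_natCast (2:ℝ) k,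
        ← Real.rpow_mul (by norm_num), ← Real.rpow_mul (by norm_num), mul_comm]
    have h2kn : ((2:ℝ) ^ (k:ℕ) : ℝ) ≤ (n:ℝ) := by
      have : 2 ^ k ≤ n := le_trans h1 (Nat.div_le_self n N)
      exact_mod_cast this
    have hfin : ((2:ℝ) ^ (k:ℕ) : ℝ) ^ s ≤ (n:ℝ) ^ s :=
      Real.rpow_le_rpow (by positivity) h2kn hs0.le
    calc (a n : ℝ) ≤ ((2:ℝ) ^ s) ^ (k+1) * a N := hb1
      _ = 2 ^ s * a N * (((2:ℝ) ^ s) ^ k) := by ring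
      _ = 2 ^ s * a N * (((2:ℝ) ^ (k:ℕ) : ℝ) ^ s) := by rw [hpows]
      _ ≤ 2 ^ s * a N * ((n:ℝ) ^ s) := by
          apply mul_le_mul_of_nonneg_left hfin
          positivity
      _ ≤ (2 ^ s * a N + a N) * (n:ℝ) ^ s := by nlinarith
  · -- small case
    have h1 : (a n : ℝ) ≤ a N := by exact_mod_cast hmono hnN.le
    calc (a n : ℝ) ≤ a N := h1
      _ ≤ a N * (n:ℝ) ^ s := by nlinarith
      _ ≤ (2 ^ s * a N + a N) * (n:ℝ) ^ s := by
          nlinarith [mul_nonneg (mul_nonneg h2s.le (by linarith : (0:ℝ) ≤ (a N : ℝ))) hns0]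

private lemma aux_atTop (a : ℕ → ℕ) (hmono : Monotone a) (hpos : ∀ n, 0 < a n)
    (c : ℝ) (hc : 1 < c) (N : ℕ)
    (hdbl : ∀ n, N ≤ n → c * a n ≤ (a (2 * n) : ℝ)) :
    Tendsto a atTop atTop := by
  apply tendsto_atTop_atTop_of_monotone hmono
  intro b
  set M := N + 1 with hM
  have haM1 : (1:ℝ) ≤ a M := by exact_mod_cast hpos M
  have hiter : ∀ k : ℕ, (c ^ k * a M : ℝ) ≤ a (2 ^ k * M) := by
    intro k
    induction k with
    | zero => simp
    | succ k ih =>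
      have hNle : N ≤ 2 ^ k * M := by
        have : M ≤ 2 ^ k * M := Nat.le_mul_of_pos_left M (pow_pos two_pos k)
        omega
      have h1 := hdbl (2 ^ k * M) hNle
      have heq : 2 * (2 ^ k * M) = 2 ^ (k+1) * M := by ring
      rw [heq] at h1
      calc (c ^ (k+1) * a M : ℝ) = c * (c ^ k * a M) := by ring
        _ ≤ c * a (2 ^ k * M) := by
            exact mul_le_mul_of_nonneg_left ih (by linarith)
        _ ≤ a (2 ^ (k+1) * M) := h1
  obtain ⟨k, hk⟩ := pow_unbounded_of_one_lt (b : ℝ) hc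
  refine ⟨2 ^ k * M, ?_⟩
  have hck : (0:ℝ) < c ^ k := pow_pos (by linarith) k
  have : (b : ℝ) < a (2 ^ k * M) := by
    calc (b:ℝ) < c ^ k := hk
      _ = c ^ k * 1 := by ring
      _ ≤ c ^ k * a M := by exact mul_le_mul_of_nonneg_left haM1 hck.le
      _ ≤ a (2 ^ k * M) := hiter k
  exact_mod_cast this.le

/-- If `a` is `γ`-regularly varying with `γ ∈ (0,1)`, `b` is an asymptotic inverse of `a`,
and `φ₋` is nonincreasing with `φ₋(a(a(n))) ≤ a(n)/n` for all large `n`, then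
`∑ φ₋(n)/n < ∞`. -/
theorem stmt9 (γ : ℝ) (hγ0 : 0 < γ) (hγ1 : γ < 1)
    (a b : ℕ → ℕ) (hapos : ∀ n, 0 < a n) (hbpos : ∀ n, 0 < b n)
    (hamono : Monotone a)
    (hareg : ∀ l : ℝ, 0 < l →
      Tendsto (fun n : ℕ => (a ⌊l * n⌋₊ : ℝ) / (a n : ℝ)) atTop (𝓝 (l ^ γ)))
    (hba : Tendsto (fun n : ℕ => (b (a n) : ℝ) / (n : ℝ)) atTop (𝓝 1))
    (hab : Tendsto (fun n : ℕ => (a (b n) : ℝ) / (n : ℝ)) atTop (𝓝 1))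
    (φ : ℕ → ℝ) (hφ0 : ∀ n, 0 ≤ φ n) (hφmono : Antitone φ)
    (hbd : ∀ᶠ n : ℕ in atTop, φ (a (a n)) ≤ (a n : ℝ) / (n : ℝ)) :
    Summable (fun n : ℕ => φ (n + 1) / ((n : ℝ) + 1)) := by
  clear hba hab hbpos
  set s : ℝ := (1 + γ) / 2 with hsdef
  have hs0 : 0 < s := by simp only [hsdef]; linarith
  have hγs : γ < s := by simp only [hsdef]; linarith
  have hs1 : s < 1 := by simp only [hsdef]; linarith
  have hfl : ∀ n : ℕ, ⌊(2:ℝ) * n⌋₊ = 2 * n := by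
    intro n
    rw [show ((2:ℝ) * n) = ((2 * n : ℕ) : ℝ) by push_cast; ring, Nat.floor_natCast]
  have h2γ : (2:ℝ) ^ γ < 2 ^ s := Real.rpow_lt_rpow_of_exponent_lt one_lt_two hγs
  have hA : ∀ᶠ n : ℕ in atTop, (a (2 * n) : ℝ) ≤ 2 ^ s * a n := by
    filter_upwards [(hareg 2 two_pos).eventually (eventually_le_nhds h2γ)] with n hn
    rw [hfl n] at hn
    have hpos : (0:ℝ) < a n := by exact_mod_cast hapos n
    rw [div_le_iff₀ hpos] at hn
    linarith
  obtain ⟨N₀', hN₀'⟩ := eventually_atTop.mp hA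
  set N₀ := max N₀' 1 with hN₀def
  have hdbl : ∀ n, N₀ ≤ n → (a (2 * n) : ℝ) ≤ 2 ^ s * a n := fun n hn =>
    hN₀' n (le_trans (le_max_left _ _) hn)
  obtain ⟨C, hC1, hPot⟩ := aux_potter a hamono hapos s hs0 N₀ (le_max_right _ _) hdbl
  have hCpos : (0:ℝ) < C := by linarith
  -- lower doubling gives `a → ∞`
  have h1lt2γ : (1:ℝ) < 2 ^ γ := by
    rw [Real.one_lt_rpow_iff_of_pos two_pos]; left; exact ⟨one_lt_two, hγ0⟩
  set c : ℝ := (1 + 2 ^ γ) / 2 with hcdef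
  have hc1 : 1 < c := by simp only [hcdef]; linarith
  have hc2 : c < 2 ^ γ := by simp only [hcdef]; linarith
  have hB : ∀ᶠ n : ℕ in atTop, c * a n ≤ (a (2 * n) : ℝ) := by
    filter_upwards [(hareg 2 two_pos).eventually (eventually_ge_nhds hc2)] with n hn
    rw [hfl n] at hn
    have hpos : (0:ℝ) < a n := by exact_mod_cast hapos n
    rw [le_div_iff₀ hpos] at hn
    linarith
  obtain ⟨N₁, hN₁⟩ := eventually_atTop.mp hB
  have hatop : Tendsto a atTop atTop := aux_atTop a hamono hapos c hc1 N₁ hN₁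
  have haatop : Tendsto (fun n => a (a n)) atTop atTop := hatop.comp hatop
  -- iterated Potter bound
  have hs2 : (0:ℝ) < s * s := by positivity
  have hPot2 : ∀ n, 1 ≤ n → (a (a n) : ℝ) ≤ C * C * (n:ℝ) ^ (s * s) := by
    intro n hn
    have h1 : (a (a n) : ℝ) ≤ C * (a n : ℝ) ^ s := hPot (a n) (hapos n)
    have h2 : (a n : ℝ) ≤ C * (n:ℝ) ^ s := hPot n hn
    have h3 : ((a n : ℝ)) ^ s ≤ (C * (n:ℝ) ^ s) ^ s :=
      Real.rpow_le_rpow (Nat.cast_nonneg _) h2 hs0.le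
    have h4 : (C * (n:ℝ) ^ s) ^ s = C ^ s * ((n:ℝ) ^ s) ^ s :=
      Real.mul_rpow hCpos.le (by positivity)
    have h5 : ((n:ℝ) ^ s) ^ s = (n:ℝ) ^ (s * s) := by
      rw [← Real.rpow_mul (Nat.cast_nonneg n)]
    have h6 : C ^ s ≤ C := by
      calc C ^ s ≤ C ^ (1:ℝ) := Real.rpow_le_rpow_of_exponent_le hC1 hs1.le
        _ = C := Real.rpow_one C
    have hnss : (0:ℝ) ≤ (n:ℝ) ^ (s * s) := Real.rpow_nonneg (Nat.cast_nonneg n) _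
    calc (a (a n) : ℝ) ≤ C * ((a n : ℝ) ^ s) := h1
      _ ≤ C * (C ^ s * (n:ℝ) ^ (s * s)) := by
          rw [← h5, ← h4]; exact mul_le_mul_of_nonneg_left h3 hCpos.le
      _ ≤ C * (C * (n:ℝ) ^ (s * s)) := by
          exact mul_le_mul_of_nonneg_left (mul_le_mul_of_nonneg_right h6 hnss) hCpos.le
      _ = C * C * (n:ℝ) ^ (s * s) := by ring
  -- key pointwise bound
  set δ : ℝ := (1 - s) / (s * s) with hδdef
  have hδ0 : 0 < δ := div_pos (by linarith) hs2
  obtain ⟨N₂', hN₂⟩ := eventually_atTop.mp hbd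
  set N₃ := max N₂' 1 with hN₃def
  have hN₃1 : 1 ≤ N₃ := le_max_right _ _
  set C₃ : ℝ := C * C * 2 ^ (s * s) with hC₃def
  have hC₃pos : 0 < C₃ := by positivity
  set D : ℝ := C * C₃ ^ δ with hDdef
  have hDpos : 0 < D := by positivity
  have hkey : ∀ m : ℕ, a (a N₃) ≤ m → φ m ≤ D * (m:ℝ) ^ (-δ) := by
    intro m hm
    have hex : ∃ k, m < a (a (N₃ + k)) := by
      obtain ⟨L, hL⟩ := eventually_atTop.mp (haatop.eventually (eventually_gt_atTop m))
      exact ⟨L, hL (N₃ + L) (Nat.le_add_left L N₃)⟩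
    classical
    have hfind := Nat.find_spec hex
    have hK0 : Nat.find hex ≠ 0 := by
      intro h
      rw [h] at hfind
      simp only [Nat.add_zero] at hfind
      omega
    set n := N₃ + (Nat.find hex - 1) with hndef
    have hn1 : a (a n) ≤ m := by
      have h := Nat.find_min hex (show Nat.find hex - 1 < Nat.find hex by omega)
      push_neg at h
      rw [hndef]
      exact h
    have hn2 : m < a (a (n + 1)) := by
      have heq : n + 1 = N₃ + Nat.find hex := by omega
      rw [heq]
      exact hfind
    have hnN₃ : N₃ ≤ n := by omega
    have hn1' : 1 ≤ n := le_trans hN₃1 hnN₃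
    have hnpos : (0:ℝ) < (n:ℝ) := by exact_mod_cast lt_of_lt_of_le one_pos hn1'
    have hn1R : (1:ℝ) ≤ (n:ℝ) := by exact_mod_cast hn1'
    have hb1 : φ m ≤ φ (a (a n)) := hφmono hn1
    have hb2 : φ (a (a n)) ≤ (a n : ℝ) / n := hN₂ n (le_trans (le_max_left _ _) hnN₃)
    have hpowsplit : (n:ℝ) ^ (s - 1) * (n:ℝ) = (n:ℝ) ^ s := by
      rw [← Real.rpow_add_one (ne_of_gt hnpos) (s - 1)]
      norm_num
    have hb3 : (a n : ℝ) / n ≤ C * (n:ℝ) ^ (s - 1) := by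
      rw [div_le_iff₀ hnpos]
      calc (a n : ℝ) ≤ C * (n:ℝ) ^ s := hPot n hn1'
        _ = C * (n:ℝ) ^ (s - 1) * (n:ℝ) := by rw [mul_assoc, hpowsplit]
    have hm1 : (m:ℝ) ≤ C₃ * (n:ℝ) ^ (s * s) := by
      have h1 : (m:ℝ) ≤ (a (a (n + 1)) : ℝ) := by exact_mod_cast hn2.le
      have h2 : (a (a (n + 1)) : ℝ) ≤ C * C * ((n:ℝ) + 1) ^ (s * s) := by
        have h := hPot2 (n + 1) (by omega)
        push_cast at h
        exact h
      have h3 : ((n:ℝ) + 1) ^ (s * s) ≤ (2 * (n:ℝ)) ^ (s * s) :=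
        Real.rpow_le_rpow (by positivity) (by linarith) hs2.le
      have h4 : (2 * (n:ℝ)) ^ (s * s) = 2 ^ (s * s) * (n:ℝ) ^ (s * s) :=
        Real.mul_rpow (by norm_num) hnpos.le
      calc (m:ℝ) ≤ (a (a (n + 1)) : ℝ) := h1
        _ ≤ C * C * ((n:ℝ) + 1) ^ (s * s) := h2
        _ ≤ C * C * (2 * (n:ℝ)) ^ (s * s) := by
            exact mul_le_mul_of_nonneg_left h3 (by positivity)
        _ = C₃ * (n:ℝ) ^ (s * s) := by rw [h4, hC₃def]; ring
    have hmpos : (0:ℝ) < (m:ℝ) := by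
      have h0 : 0 < a (a N₃) := hapos _
      have : 0 < m := lt_of_lt_of_le h0 hm
      exact_mod_cast this
    have hdivpos : (0:ℝ) < (m:ℝ) / C₃ := div_pos hmpos hC₃pos
    have hnss_ge : (m:ℝ) / C₃ ≤ (n:ℝ) ^ (s * s) := (div_le_iff₀ hC₃pos).mpr (by linarith)
    have hexp : s - 1 = (s * s) * (-δ) := by
      rw [hδdef]
      field_simp
      ring
    have hstep : (n:ℝ) ^ (s - 1) ≤ ((m:ℝ) / C₃) ^ (-δ) := by
      rw [hexp, Real.rpow_mul hnpos.le]
      exact Real.rpow_le_rpow_of_nonpos hdivpos hnss_ge (by linarith)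
    have hfinal : ((m:ℝ) / C₃) ^ (-δ) = C₃ ^ δ * (m:ℝ) ^ (-δ) := by
      rw [Real.div_rpow (Nat.cast_nonneg m) hC₃pos.le, Real.rpow_neg hC₃pos.le]
      field_simp
    calc φ m ≤ φ (a (a n)) := hb1
      _ ≤ (a n : ℝ) / n := hb2
      _ ≤ C * (n:ℝ) ^ (s - 1) := hb3
      _ ≤ C * (((m:ℝ) / C₃) ^ (-δ)) := mul_le_mul_of_nonneg_left hstep hCpos.le
      _ = D * (m:ℝ) ^ (-δ) := by rw [hfinal, hDdef]; ring
  -- comparison and summability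
  set M := a (a N₃) with hMdef
  have hM1 : 1 ≤ M := hapos _
  have hMr : (1:ℝ) ≤ (M:ℝ) := by exact_mod_cast hM1
  have hMpos : (0:ℝ) < (M:ℝ) := by linarith
  set E : ℝ := D + φ 0 * (M:ℝ) ^ (1 + δ) with hEdef
  have hφ0M : (0:ℝ) ≤ φ 0 * (M:ℝ) ^ (1 + δ) := by
    apply mul_nonneg (hφ0 0) (Real.rpow_nonneg hMpos.le _)
  have hbound : ∀ n : ℕ, φ (n + 1) / ((n:ℝ) + 1) ≤ E * ((n:ℝ) + 1) ^ (-(1 + δ)) := by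
    intro n
    have hn0 : (0:ℝ) ≤ (n:ℝ) := Nat.cast_nonneg n
    have hn1R : (1:ℝ) ≤ (n:ℝ) + 1 := by linarith
    have hnpos : (0:ℝ) < (n:ℝ) + 1 := by linarith
    have hpw : (0:ℝ) < ((n:ℝ) + 1) ^ (-(1 + δ)) := Real.rpow_pos_of_pos hnpos _
    rcases le_or_gt M (n + 1) with hc | hc
    · have h1 : φ (n + 1) ≤ D * (((n + 1 : ℕ)):ℝ) ^ (-δ) := hkey (n + 1) hc
      push_cast at h1
      rw [div_le_iff₀ hnpos]
      have hsplit : ((n:ℝ) + 1) ^ (-(1 + δ)) * ((n:ℝ) + 1) = ((n:ℝ) + 1) ^ (-δ) := by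
        rw [← Real.rpow_add_one (ne_of_gt hnpos) (-(1 + δ))]
        norm_num
      calc φ (n + 1) ≤ D * ((n:ℝ) + 1) ^ (-δ) := h1
        _ ≤ E * ((n:ℝ) + 1) ^ (-δ) := by
            apply mul_le_mul_of_nonneg_right _ (Real.rpow_nonneg hnpos.le _)
            rw [hEdef]; linarith
        _ = E * ((n:ℝ) + 1) ^ (-(1 + δ)) * ((n:ℝ) + 1) := by
            rw [mul_assoc, hsplit]
    · have h1 : φ (n + 1) ≤ φ 0 := hφmono (Nat.zero_le _)
      have hle : ((n:ℝ) + 1) ≤ (M:ℝ) := by exact_mod_cast hc.le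
      have h2 : (M:ℝ) ^ (-(1 + δ)) ≤ ((n:ℝ) + 1) ^ (-(1 + δ)) :=
        Real.rpow_le_rpow_of_nonpos hnpos hle (by linarith)
      have hMM : (M:ℝ) ^ (1 + δ) * (M:ℝ) ^ (-(1 + δ)) = 1 := by
        rw [← Real.rpow_add hMpos, show (1 + δ) + (-(1 + δ)) = (0:ℝ) by ring,
          Real.rpow_zero]
      have h3 : φ 0 ≤ φ 0 * (M:ℝ) ^ (1 + δ) * ((n:ℝ) + 1) ^ (-(1 + δ)) := by
        calc φ 0 = φ 0 * ((M:ℝ) ^ (1 + δ) * (M:ℝ) ^ (-(1 + δ))) := by rw [hMM]; ring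
          _ ≤ φ 0 * ((M:ℝ) ^ (1 + δ) * ((n:ℝ) + 1) ^ (-(1 + δ))) := by
              apply mul_le_mul_of_nonneg_left _ (hφ0 0)
              exact mul_le_mul_of_nonneg_left h2 (Real.rpow_nonneg hMpos.le _)
          _ = _ := by ring
      calc φ (n + 1) / ((n:ℝ) + 1) ≤ φ (n + 1) := div_le_self (hφ0 _) hn1R
        _ ≤ φ 0 := h1
        _ ≤ φ 0 * (M:ℝ) ^ (1 + δ) * ((n:ℝ) + 1) ^ (-(1 + δ)) := h3
        _ ≤ E * ((n:ℝ) + 1) ^ (-(1 + δ)) := by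
            apply mul_le_mul_of_nonneg_right _ hpw.le
            rw [hEdef]; linarith
  have hsum : Summable (fun n : ℕ => E * ((n:ℝ) + 1) ^ (-(1 + δ))) := by
    apply Summable.mul_left
    have h := Real.summable_nat_rpow.mpr (show -(1 + δ) < -1 by linarith)
    have h2 := (summable_nat_add_iff 1).mpr h
    have heq : (fun n : ℕ => (((n + 1 : ℕ)):ℝ) ^ (-(1 + δ)))
        = fun n : ℕ => ((n:ℝ) + 1) ^ (-(1 + δ)) := by
      funext n; push_cast; ring_nf
    rw [← heq]
    exact h2
  exact Summable.of_nonneg_of_le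
    (fun n => div_nonneg (hφ0 _) (by positivity)) hbound hsum
end

section
/- Occupation time powers admit the combinatorial decomposition S_n(1_A)^p = ∑_{q=1}^p γ_p(q) a(q, n), where a(0,n) := 1, a(p+1,n)(x) := ∑_{k=1}^n 1_A(T^k x) · a(p, n−k)(T^k x), γ_1(q) := δ_{1,q}, and γ_{p+1}(q) := q(γ_p(q) + γ_p(q−1)); in particular γ_p(p) = p!. -/
open MeasureTheory Filter Topology

/-- The combinatorial quantities `a(p,n)`:
`a(0,n) = 1`, `a(p+1,n)(x) = ∑_{k=1}^n 1_A(T^k x) a(p, n−k)(T^k x)`. -/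
noncomputable def aFun {X : Type*} (T : X → X) (A : Set X) : ℕ → ℕ → X → ℕ
  | 0, _, _ => 1
  | (p + 1), n, x =>
      ∑ k ∈ Finset.Icc 1 n, A.indicator (fun y => aFun T A p (n - k) y) (T^[k] x)

/-- The coefficients `γ_p(q)`: `γ_1(q) = δ_{1,q}`, `γ_{p+1}(q) = q(γ_p(q) + γ_p(q−1))`. -/
def gam : ℕ → ℕ → ℕ
  | 0, _ => 0
  | 1, q => if q = 1 then 1 else 0
  | (p + 2), q => q * (gam (p + 1) q + gam (p + 1) (q - 1))

lemma gam_zero_right (p : ℕ) : gam p 0 = 0 := by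
  match p with
  | 0 => rfl
  | 1 => rfl
  | (p + 2) => simp [gam]

lemma gam_eq_zero : ∀ p q : ℕ, p < q → gam p q = 0 := by
  intro p
  induction p with
  | zero => intro q _; rfl
  | succ p ih =>
    intro q hq
    rcases p with _ | m
    · have : q ≠ 1 := by omega
      simp [gam, this]
    · show gam (m + 2) q = 0
      rw [gam, ih q (by omega), ih (q - 1) (by omega)]
      simp

lemma gam_self : ∀ p : ℕ, 1 ≤ p → gam p p = Nat.factorial p := by
  intro p
  induction p with
  | zero => omega
  | succ p ih =>
    intro _
    rcases p with _ | m
    · simp [gam]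
    · show gam (m + 2) (m + 2) = Nat.factorial (m + 2)
      rw [gam, gam_eq_zero (m + 1) (m + 2) (by omega)]
      simp [ih (by omega), Nat.factorial_succ]

lemma choose_key (s q : ℕ) :
    s * s.choose q = q * s.choose q + (q + 1) * s.choose (q + 1) := by
  rcases le_or_gt q s with h | h
  · have h1 : s.choose (q + 1) * (q + 1) = s.choose q * (s - q) :=
      Nat.choose_succ_right_eq s q
    have h2 : (q + 1) * s.choose (q + 1) = (s - q) * s.choose q := by
      rw [mul_comm, h1, mul_comm]
    rw [h2, ← add_mul]
    congr 1
    omega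
  · rw [Nat.choose_eq_zero_of_lt h, Nat.choose_eq_zero_of_lt (by omega)]
    ring

lemma sum_choose (f : ℕ → ℕ) (hf : ∀ k, f k ≤ 1) :
    ∀ n q, ∑ k ∈ Finset.Icc 1 n, f k * ((∑ j ∈ Finset.Icc (k + 1) n, f j).choose q)
      = (∑ j ∈ Finset.Icc 1 n, f j).choose (q + 1) := by
  intro n
  induction n with
  | zero => intro q; simp
  | succ n ih =>
    intro q
    have htop : ∀ a : ℕ, a ≤ n + 1 →
        ∑ j ∈ Finset.Icc a (n + 1), f j = (∑ j ∈ Finset.Icc a n, f j) + f (n + 1) := by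
      intro a ha
      exact Finset.sum_Icc_succ_top ha f
    have hempty : (Finset.Icc (n + 1 + 1) (n + 1)) = ∅ := by
      apply Finset.Icc_eq_empty; omega
    rw [Finset.sum_Icc_succ_top (by omega : 1 ≤ n + 1), hempty]
    simp only [Finset.sum_empty]
    have hstep : ∀ k ∈ Finset.Icc 1 n,
        f k * ((∑ j ∈ Finset.Icc (k + 1) (n + 1), f j).choose q)
          = f k * (((∑ j ∈ Finset.Icc (k + 1) n, f j) + f (n + 1)).choose q) := by
      intro k hk
      rw [htop (k + 1) (by simp at hk; omega)]
    rw [Finset.sum_congr rfl hstep, htop 1 (by omega)]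
    have hcase : f (n + 1) = 0 ∨ f (n + 1) = 1 := by
      have := hf (n + 1); omega
    rcases hcase with h0 | h1
    · rw [h0]
      simpa using ih q
    · rw [h1]
      rcases q with _ | q
      · simp only [Nat.choose_zero_right, mul_one, Nat.choose_one_right]
        have : ∀ k ∈ Finset.Icc 1 n, f k * 1 = f k := fun k _ => mul_one _
        simp
      · have hsplit : ∀ k ∈ Finset.Icc 1 n,
            f k * (((∑ j ∈ Finset.Icc (k + 1) n, f j) + 1).choose (q + 1))
              = f k * ((∑ j ∈ Finset.Icc (k + 1) n, f j).choose q)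
                + f k * ((∑ j ∈ Finset.Icc (k + 1) n, f j).choose (q + 1)) := by
          intro k _
          rw [Nat.choose_succ_succ, mul_add]
        rw [Finset.sum_congr rfl hsplit, Finset.sum_add_distrib, ih q, ih (q + 1)]
        rw [Nat.choose_succ_succ]
        simp

lemma indicator_mul {X : Type*} (A : Set X) (g : X → ℕ) (z : X) :
    A.indicator g z = A.indicator (fun _ => (1 : ℕ)) z * g z := by
  by_cases h : z ∈ A <;> simp [h]

lemma aFun_eq {X : Type*} (T : X → X) (A : Set X) :
    ∀ n q (x : X), aFun T A q n x
      = ((∑ k ∈ Finset.Icc 1 n, A.indicator (fun _ => (1 : ℕ)) (T^[k] x))).choose q := by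
  intro n
  induction n using Nat.strong_induction_on with
  | _ n ih =>
    intro q x
    cases q with
    | zero => simp [aFun]
    | succ q =>
      rw [aFun]
      have hstep : ∀ k ∈ Finset.Icc 1 n,
          A.indicator (fun y => aFun T A q (n - k) y) (T^[k] x)
            = A.indicator (fun _ => (1 : ℕ)) (T^[k] x)
              * ((∑ j ∈ Finset.Icc (k + 1) n,
                    A.indicator (fun _ => (1 : ℕ)) (T^[j] x)).choose q) := by
        intro k hk
        simp only [Finset.mem_Icc] at hk
        rw [indicator_mul]
        congr 1
        rw [ih (n - k) (by omega) q (T^[k] x)]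
        congr 1
        have hmap : Finset.Icc (k + 1) n
            = (Finset.Icc 1 (n - k)).map (addRightEmbedding k) := by
          rw [Finset.map_add_right_Icc]
          congr 1 <;> omega
        rw [hmap, Finset.sum_map]
        apply Finset.sum_congr rfl
        intro j _
        simp only [addRightEmbedding_apply]
        rw [← Function.iterate_add_apply]
      rw [Finset.sum_congr rfl hstep]
      exact sum_choose (fun j => A.indicator (fun _ => (1 : ℕ)) (T^[j] x))
        (fun k => by by_cases h : T^[k] x ∈ A <;> simp [h]) n q

lemma pow_eq (s : ℕ) : ∀ p : ℕ, 1 ≤ p →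
    s ^ p = ∑ q ∈ Finset.Icc 1 p, gam p q * s.choose q := by
  intro p
  induction p with
  | zero => omega
  | succ p ih =>
    intro _
    rcases p with _ | m
    · simp [gam]
    · have ihm := ih (by omega)
      have key : s ^ (m + 2)
          = ∑ q ∈ Finset.Icc 1 (m + 1), gam (m + 1) q * (q * s.choose q)
            + ∑ q ∈ Finset.Icc 1 (m + 1), gam (m + 1) q * ((q + 1) * s.choose (q + 1)) := by
        rw [pow_succ, ihm, Finset.sum_mul, ← Finset.sum_add_distrib]
        apply Finset.sum_congr rfl
        intro q _
        rw [mul_assoc, mul_comm (s.choose q) s, choose_key, mul_add]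
      rw [key]
      have hRHS : ∑ q ∈ Finset.Icc 1 (m + 2), gam (m + 2) q * s.choose q
          = ∑ q ∈ Finset.Icc 1 (m + 2), (q * gam (m + 1) q * s.choose q
              + q * gam (m + 1) (q - 1) * s.choose q) := by
        apply Finset.sum_congr rfl
        intro q _
        rw [gam]
        ring
      rw [hRHS, Finset.sum_add_distrib]
      congr 1
      · rw [Finset.sum_Icc_succ_top (by omega : 1 ≤ m + 2),
          gam_eq_zero (m + 1) (m + 2) (by omega)]
        simp only [mul_zero, zero_mul, add_zero]
        apply Finset.sum_congr rfl
        intro q _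
        ring
      · have h1 : ∑ q ∈ Finset.Icc 1 (m + 1), gam (m + 1) q * ((q + 1) * s.choose (q + 1))
            = ∑ q ∈ Finset.Icc 0 (m + 1), gam (m + 1) q * ((q + 1) * s.choose (q + 1)) := by
          apply Finset.sum_subset
          · apply Finset.Icc_subset_Icc_left; omega
          · intro q hmem hq
            have : q = 0 := by simp at hmem hq; omega
            rw [this, gam_zero_right, zero_mul]
        have h2 : Finset.Icc 1 (m + 2) = (Finset.Icc 0 (m + 1)).map (addRightEmbedding 1) := by
          rw [Finset.map_add_right_Icc]
        rw [h1, h2, Finset.sum_map]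
        apply Finset.sum_congr rfl
        intro q _
        simp only [addRightEmbedding_apply, Nat.add_sub_cancel]
        ring

/-- The occupation time powers decompose as
`S_n(1_A)^p = ∑_{q=1}^p γ_p(q) a(q,n)`; in particular `γ_p(p) = p!`. -/
theorem stmt10 {X : Type*} (T : X → X) (A : Set X) :
    (∀ (x : X) (n p : ℕ), 1 ≤ p →
      (∑ k ∈ Finset.Icc 1 n, A.indicator (fun _ => (1 : ℕ)) (T^[k] x)) ^ p =
        ∑ q ∈ Finset.Icc 1 p, gam p q * aFun T A q n x) ∧
    (∀ p : ℕ, 1 ≤ p → gam p p = Nat.factorial p) := by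
  constructor
  · intro x n p hp
    rw [pow_eq _ p hp]
    apply Finset.sum_congr rfl
    intro q _
    rw [aFun_eq T A n q x]
  · exact gam_self
end

section
/- Under θ_μ-mixing, the transfer operator satisfies the pointwise bound Ŝ^{j+p} 1_A ≤ P(A) + θ_μ(p) · dμ/dP a.e. on Ω, for all j, p ≥ 1 and A ∈ σ(α_j). -/
open MeasureTheory Filter Topology ENNReal

/-- Under `θ_μ`-mixing, the transfer operator satisfies
`Ŝ^{j+p} 1_A ≤ P(A) + θ_μ(p) dμ/dP` a.e., for `j, p ≥ 1` and `A ∈ σ(α_j)`.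
Here `F k` plays the role of `σ(α_k)` and `Shat` is the transfer operator of `S`
with respect to `P`, characterized by duality. -/
theorem stmt12 {Ω : Type*} [MeasurableSpace Ω] (P : Measure Ω) [IsProbabilityMeasure P]
    (S : Ω → Ω) (hS : MeasurePreserving S P P)
    (Shat : (Ω → ℝ≥0∞) → (Ω → ℝ≥0∞))
    (hSmeas : ∀ f, Measurable f → Measurable (Shat f))
    (hSdual : ∀ f g : Ω → ℝ≥0∞, Measurable f → Measurable g →
      ∫⁻ x, f (S x) * g x ∂P = ∫⁻ x, f x * Shat g x ∂P)
    (μ : Measure Ω) [IsProbabilityMeasure μ] (hμP : μ ≪ P) (hPμ : P ≪ μ)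
    (F : ℕ → MeasurableSpace Ω) (hF : ∀ k, F k ≤ ‹MeasurableSpace Ω›)
    (θ : ℕ → ℝ) (hθ : ∀ n, 0 ≤ θ n)
    (hmix : ∀ (n k : ℕ) (A B : Set Ω), 1 ≤ k → MeasurableSet[F k] A → MeasurableSet B →
      |(P (A ∩ S^[n + k] ⁻¹' B)).toReal - (P A).toReal * (P B).toReal| ≤
        θ n * (μ B).toReal)
    (j p : ℕ) (hj : 1 ≤ j) (hp : 1 ≤ p)
    (A : Set Ω) (hA : MeasurableSet[F j] A) :
    ∀ᵐ x ∂P, (Shat^[j + p]) (A.indicator (1 : Ω → ℝ≥0∞)) x ≤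
      P A + ENNReal.ofReal (θ p) * μ.rnDeriv P x := by
  have hAmeas : MeasurableSet A := hF j A hA
  -- measurability of iterates
  have hiter : ∀ (n : ℕ) (h : Ω → ℝ≥0∞), Measurable h → Measurable (Shat^[n] h) := by
    intro n
    induction n with
    | zero => intro h hh; simpa using hh
    | succ n ih =>
      intro h hh
      rw [Function.iterate_succ_apply']
      exact hSmeas _ (ih h hh)
  -- duality for iterates
  have hdual : ∀ (n : ℕ) (g h : Ω → ℝ≥0∞), Measurable g → Measurable h →
      ∫⁻ x, g (S^[n] x) * h x ∂P = ∫⁻ x, g x * Shat^[n] h x ∂P := by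
    intro n
    induction n with
    | zero => intro g h _ _; simp
    | succ n ih =>
      intro g h hg hh
      have h1 : ∫⁻ x, g (S^[n+1] x) * h x ∂P = ∫⁻ x, (g ∘ S) (S^[n] x) * h x ∂P := by
        apply lintegral_congr; intro x
        rw [Function.iterate_succ_apply']; rfl
      rw [h1, ih (g ∘ S) h (hg.comp hS.measurable) hh]
      have h2 : ∫⁻ x, (g ∘ S) x * Shat^[n] h x ∂P = ∫⁻ x, g x * Shat (Shat^[n] h) x ∂P :=
        hSdual g (Shat^[n] h) hg (hiter n h hh)
      rw [h2]
      apply lintegral_congr; intro x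
      rw [Function.iterate_succ_apply']
  set n := j + p with hn
  set f := Shat^[n] (A.indicator (1 : Ω → ℝ≥0∞)) with hf
  have hindA : Measurable (A.indicator (1 : Ω → ℝ≥0∞)) := measurable_one.indicator hAmeas
  have hfmeas : Measurable f := hiter n _ hindA
  refine ae_le_of_forall_setLIntegral_le_of_sigmaFinite hfmeas (fun B hB hBfin => ?_)
  -- LHS = P (A ∩ S^[n] ⁻¹' B)
  have hLHS : ∫⁻ x in B, f x ∂P = P (A ∩ S^[n] ⁻¹' B) := by
    have h1 : ∫⁻ x in B, f x ∂P = ∫⁻ x, B.indicator (1 : Ω → ℝ≥0∞) x * f x ∂P := by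
      rw [← lintegral_indicator hB]
      apply lintegral_congr; intro x
      by_cases hx : x ∈ B <;> simp [Set.indicator, hx]
    rw [h1, ← hdual n _ _ (measurable_one.indicator hB) hindA]
    have h2 : ∀ x, B.indicator (1 : Ω → ℝ≥0∞) (S^[n] x) * A.indicator 1 x
        = (A ∩ S^[n] ⁻¹' B).indicator (1 : Ω → ℝ≥0∞) x := by
      intro x
      by_cases hxA : x ∈ A <;> by_cases hxB : S^[n] x ∈ B <;>
        simp [Set.indicator, hxA, hxB, Set.mem_preimage]
    rw [lintegral_congr h2, lintegral_indicator (hAmeas.inter ((hS.iterate n).measurable hB))]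
    simp
  rw [hLHS]
  -- RHS
  have hRHS : ∫⁻ x in B, (P A + ENNReal.ofReal (θ p) * μ.rnDeriv P x) ∂P
      = P A * P B + ENNReal.ofReal (θ p) * μ B := by
    rw [lintegral_add_left measurable_const, lintegral_const,
      lintegral_const_mul _ (μ.measurable_rnDeriv P), Measure.setLIntegral_rnDeriv hμP,
      Measure.restrict_apply_univ]
  rw [hRHS]
  -- from the mixing bound
  have hmix' := hmix p j A B hj hA hB
  have hnn : n = p + j := by omega
  rw [← hnn] at hmix'
  have habs : (P (A ∩ S^[n] ⁻¹' B)).toReal ≤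
      (P A).toReal * (P B).toReal + θ p * (μ B).toReal := by
    have := abs_le.mp hmix'
    linarith [this.2]
  have hfin : P (A ∩ S^[n] ⁻¹' B) ≠ ∞ := measure_ne_top _ _
  have := ENNReal.ofReal_le_ofReal habs
  rw [ENNReal.ofReal_toReal hfin] at this
  refine this.trans ?_
  rw [ENNReal.ofReal_add (mul_nonneg ENNReal.toReal_nonneg ENNReal.toReal_nonneg) (mul_nonneg (hθ p) ENNReal.toReal_nonneg)]
  gcongr
  · rw [ENNReal.ofReal_mul (by positivity)]
    simp [ENNReal.ofReal_toReal (measure_ne_top P A), ENNReal.ofReal_toReal (measure_ne_top P B)]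
  · rw [ENNReal.ofReal_mul (hθ p)]
    simp [ENNReal.ofReal_toReal (measure_ne_top μ B)]
end

section
/- Under θ_μ-mixing, the dual sums satisfy the a.e. upper bound ∑_{k=1}^n T̂^k 1_Ω ≤ p + a(n) + n θ_μ(p) · dμ/dP a.e. on Ω, for all n, p ≥ 1, where a(n) = ∑_{j=1}^n P([φ_j ≤ n]). -/
open MeasureTheory Filter Topology ENNReal

/-- The first return time of the set `A` under `T`. -/
noncomputable def firstReturn {X : Type*} (T : X → X) (A : Set X) (x : X) : ℕ :=
  sInf {n : ℕ | 1 ≤ n ∧ T^[n] x ∈ A}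

/-- The induced (first return) map of `T` on `A`. -/
noncomputable def inducedMap {X : Type*} (T : X → X) (A : Set X) (x : X) : X :=
  T^[firstReturn T A x] x

/-- The time of the `j`-th return to `A`. -/
noncomputable def returnSum {X : Type*} (T : X → X) (A : Set X) (j : ℕ) (x : X) : ℕ :=
  ∑ i ∈ Finset.range j, firstReturn T A ((inducedMap T A)^[i] x)


section Helpers

variable {X : Type*} (T : X → X) (Ω : Set X)

lemma returnSum_zero (x : X) : returnSum T Ω 0 x = 0 := by
  simp [returnSum]

lemma returnSum_succ (j : ℕ) (x : X) :
    returnSum T Ω (j + 1) x =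
      returnSum T Ω j x + firstReturn T Ω ((inducedMap T Ω)^[j] x) := by
  simp [returnSum, Finset.sum_range_succ]

lemma inducedMap_iterate_eq (j : ℕ) (x : X) :
    (inducedMap T Ω)^[j] x = T^[returnSum T Ω j x] x := by
  induction j with
  | zero => simp [returnSum_zero]
  | succ j ih =>
      rw [Function.iterate_succ_apply', ih, returnSum_succ, inducedMap, ih,
        add_comm, Function.iterate_add_apply]

lemma returnSum_mono (x : X) : Monotone (fun j => returnSum T Ω j x) := by
  intro a b hab
  exact Finset.sum_le_sum_of_subset (Finset.range_subset_range.mpr hab)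

end Helpers

section Meas

variable {X : Type*} [MeasurableSpace X] {T : X → X} {Ω : Set X}
  (hT : Measurable T) (hΩ : MeasurableSet Ω)

lemma firstReturn_eq_zero_iff {x : X} :
    firstReturn T Ω x = 0 ↔ ∀ n, 1 ≤ n → T^[n] x ∉ Ω := by
  rw [firstReturn, Nat.sInf_eq_zero]
  constructor
  · rintro (h | h)
    · exact absurd h.1 (by norm_num)
    · intro n hn hmem
      exact Set.eq_empty_iff_forall_notMem.mp h n ⟨hn, hmem⟩
  · intro h
    right
    ext n
    simp only [Set.mem_setOf_eq, Set.mem_empty_iff_false, iff_false, not_and]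
    exact fun hn => h n hn

lemma firstReturn_eq_succ_iff {x : X} {k : ℕ} :
    firstReturn T Ω x = k + 1 ↔
      (T^[k + 1] x ∈ Ω ∧ ∀ i, 1 ≤ i → i < k + 1 → T^[i] x ∉ Ω) := by
  constructor
  · intro h
    have hne : {n : ℕ | 1 ≤ n ∧ T^[n] x ∈ Ω}.Nonempty := by
      by_contra hc
      rw [Set.not_nonempty_iff_eq_empty] at hc
      rw [firstReturn, hc, Nat.sInf_empty] at h
      exact Nat.succ_ne_zero k h.symm
    have hmem := Nat.sInf_mem hne
    rw [firstReturn] at h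
    rw [h] at hmem
    refine ⟨hmem.2, fun i hi hik hmemi => ?_⟩
    exact Nat.notMem_of_lt_sInf (lt_of_lt_of_eq hik h.symm) ⟨hi, hmemi⟩
  · rintro ⟨h1, h2⟩
    have hmem : k + 1 ∈ {n : ℕ | 1 ≤ n ∧ T^[n] x ∈ Ω} := ⟨by omega, h1⟩
    have hle : firstReturn T Ω x ≤ k + 1 := Nat.sInf_le hmem
    rcases Nat.lt_or_ge (firstReturn T Ω x) (k + 1) with hlt | hge
    · exfalso
      have hne : {n : ℕ | 1 ≤ n ∧ T^[n] x ∈ Ω}.Nonempty := ⟨k + 1, hmem⟩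
      have hm := Nat.sInf_mem hne
      exact h2 _ hm.1 hlt hm.2
    · omega

include hT hΩ in
lemma measurable_firstReturn : Measurable (firstReturn T Ω) := by
  apply measurable_to_countable'
  intro k
  match k with
  | 0 =>
      have : firstReturn T Ω ⁻¹' {0} = ⋂ n : ℕ, {x | n = 0 ∨ T^[n] x ∉ Ω} := by
        ext x
        simp only [Set.mem_preimage, Set.mem_singleton_iff, firstReturn_eq_zero_iff,
          Set.mem_iInter, Set.mem_setOf_eq]
        constructor
        · intro h n
          rcases Nat.eq_zero_or_pos n with h0 | h0
          · exact Or.inl h0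
          · exact Or.inr (h n h0)
        · intro h n hn
          rcases h n with h0 | h0
          · omega
          · exact h0
      rw [this]
      exact MeasurableSet.iInter fun n => by
        rcases Nat.eq_zero_or_pos n with h0 | h0
        · simp [h0]
        · have : {x : X | n = 0 ∨ T^[n] x ∉ Ω} = T^[n] ⁻¹' Ωᶜ := by
            ext x; simp [Nat.pos_iff_ne_zero.mp h0]
          rw [this]
          exact (hT.iterate n) hΩ.compl
  | k + 1 =>
      have : firstReturn T Ω ⁻¹' {k + 1} =
          (T^[k + 1] ⁻¹' Ω) ∩ ⋂ i : ℕ, {x | ¬(1 ≤ i) ∨ ¬(i < k + 1) ∨ T^[i] x ∉ Ω} := by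
        ext x
        simp only [Set.mem_preimage, Set.mem_singleton_iff, firstReturn_eq_succ_iff,
          Set.mem_inter_iff, Set.mem_iInter, Set.mem_setOf_eq]
        constructor
        · rintro ⟨h1, h2⟩
          refine ⟨h1, fun i => ?_⟩
          by_cases hi : 1 ≤ i
          · by_cases hik : i < k + 1
            · exact Or.inr (Or.inr (h2 i hi hik))
            · exact Or.inr (Or.inl hik)
          · exact Or.inl hi
        · rintro ⟨h1, h2⟩
          refine ⟨h1, fun i hi hik hmem => ?_⟩
          rcases h2 i with h | h | h <;> tauto
      rw [this]
      refine ((hT.iterate (k + 1)) hΩ).inter (MeasurableSet.iInter fun i => ?_)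
      by_cases hi : 1 ≤ i
      · by_cases hik : i < k + 1
        · have : {x : X | ¬(1 ≤ i) ∨ ¬(i < k + 1) ∨ T^[i] x ∉ Ω} = T^[i] ⁻¹' Ωᶜ := by
            ext x; simp [hi, hik]
          rw [this]; exact (hT.iterate i) hΩ.compl
        · have : {x : X | ¬(1 ≤ i) ∨ ¬(i < k + 1) ∨ T^[i] x ∉ Ω} = Set.univ := by
            ext x; simp [hik]
          rw [this]; exact MeasurableSet.univ
      · have : {x : X | ¬(1 ≤ i) ∨ ¬(i < k + 1) ∨ T^[i] x ∉ Ω} = Set.univ := by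
          ext x; simp [hi]
        rw [this]; exact MeasurableSet.univ

include hT hΩ in
lemma measurable_inducedMap : Measurable (inducedMap T Ω) := by
  have h1 : Measurable (fun p : X × ℕ => T^[p.2] p.1) :=
    measurable_from_prod_countable_left fun n => hT.iterate n
  exact h1.comp (measurable_id.prodMk (measurable_firstReturn hT hΩ))

include hT hΩ in
lemma measurable_returnSum (j : ℕ) : Measurable (returnSum T Ω j) := by
  unfold returnSum
  apply Finset.measurable_sum
  intro i _
  exact (measurable_firstReturn hT hΩ).comp ((measurable_inducedMap hT hΩ).iterate i)

end Meas

section Rec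

variable {X : Type*} {T : X → X} {Ω : Set X}

/-- Good points: in `Ω` and returning infinitely often. -/
def GoodPt (T : X → X) (Ω : Set X) (x : X) : Prop :=
  x ∈ Ω ∧ ∃ᶠ m in Filter.atTop, T^[m] x ∈ Ω

lemma GoodPt.one_le_firstReturn {x : X} (hx : GoodPt T Ω x) :
    1 ≤ firstReturn T Ω x ∧ T^[firstReturn T Ω x] x ∈ Ω := by
  have hne : {n : ℕ | 1 ≤ n ∧ T^[n] x ∈ Ω}.Nonempty := by
    obtain ⟨m, hm1, hm2⟩ := (Filter.frequently_atTop.mp hx.2) 1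
    exact ⟨m, hm1, hm2⟩
  have := Nat.sInf_mem hne
  exact ⟨this.1, this.2⟩

lemma GoodPt.induced {x : X} (hx : GoodPt T Ω x) :
    GoodPt T Ω (inducedMap T Ω x) := by
  obtain ⟨h1, h2⟩ := hx.one_le_firstReturn
  refine ⟨h2, ?_⟩
  rw [Filter.frequently_atTop]
  intro a
  obtain ⟨m, hm1, hm2⟩ := (Filter.frequently_atTop.mp hx.2) (a + firstReturn T Ω x)
  refine ⟨m - firstReturn T Ω x, by omega, ?_⟩
  rw [_root_.inducedMap, ← Function.iterate_add_apply,
    Nat.sub_add_cancel (by omega)]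
  exact hm2

lemma GoodPt.iter {x : X} (hx : GoodPt T Ω x) (j : ℕ) :
    GoodPt T Ω ((inducedMap T Ω)^[j] x) := by
  induction j with
  | zero => exact hx
  | succ j ih => rw [Function.iterate_succ_apply']; exact ih.induced

lemma GoodPt.returnSum_lt {x : X} (hx : GoodPt T Ω x) (j : ℕ) :
    returnSum T Ω j x < returnSum T Ω (j + 1) x := by
  rw [returnSum_succ]
  have := (hx.iter j).one_le_firstReturn.1
  omega

lemma GoodPt.le_returnSum {x : X} (hx : GoodPt T Ω x) (j : ℕ) :
    j ≤ returnSum T Ω j x := by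
  induction j with
  | zero => omega
  | succ j ih => have := hx.returnSum_lt j; omega

lemma GoodPt.returnSum_strictMono {x : X} (hx : GoodPt T Ω x) :
    StrictMono (fun j => returnSum T Ω j x) :=
  strictMono_nat_of_lt_succ fun j => hx.returnSum_lt j

lemma GoodPt.returnSum_mem {x : X} (hx : GoodPt T Ω x) (j : ℕ) :
    T^[returnSum T Ω j x] x ∈ Ω := by
  rw [← inducedMap_iterate_eq]
  exact (hx.iter j).1

/-- Every return time of a good point is one of the `returnSum`s. -/
lemma GoodPt.exists_eq_returnSum {x : X} (hx : GoodPt T Ω x) {k : ℕ} (hk : 1 ≤ k)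
    (hmem : T^[k] x ∈ Ω) : ∃ j, 1 ≤ j ∧ j ≤ k ∧ returnSum T Ω j x = k := by
  -- find j with r j ≤ k < r (j+1)
  have hex : ∀ k : ℕ, ∃ j, returnSum T Ω j x ≤ k ∧ k < returnSum T Ω (j + 1) x := by
    intro k
    induction k with
    | zero =>
        refine ⟨0, by simp [returnSum_zero], ?_⟩
        have := hx.returnSum_lt 0
        simp [returnSum_zero] at this ⊢
        omega
    | succ k ih =>
        obtain ⟨j, hj1, hj2⟩ := ih
        by_cases hcase : k + 1 < returnSum T Ω (j + 1) x
        · exact ⟨j, by omega, hcase⟩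
        · refine ⟨j + 1, by omega, ?_⟩
          have := hx.returnSum_lt (j + 1)
          omega
  obtain ⟨j, hj1, hj2⟩ := hex k
  have hkr : k = returnSum T Ω j x := by
    by_contra hne
    have hlt : returnSum T Ω j x < k := by omega
    set m := k - returnSum T Ω j x with hm
    have hm1 : 1 ≤ m := by omega
    have hmlt : m < firstReturn T Ω ((inducedMap T Ω)^[j] x) := by
      have := returnSum_succ T Ω j x
      omega
    have hmem2 : T^[m] ((inducedMap T Ω)^[j] x) ∈ Ω := by
      rw [inducedMap_iterate_eq, ← Function.iterate_add_apply]
      have : m + returnSum T Ω j x = k := by omega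
      rw [this]
      exact hmem
    exact Nat.notMem_of_lt_sInf hmlt ⟨hm1, hmem2⟩
  have hj0 : 1 ≤ j := by
    rcases Nat.eq_zero_or_pos j with h0 | h0
    · exfalso; rw [h0, returnSum_zero] at hkr; omega
    · exact h0
  exact ⟨j, hj0, by have := hx.le_returnSum j; omega, hkr.symm⟩

/-- Counting identity: sums over times `1..n` of an indicator supported in `Ω`
equal sums over return indices. -/
lemma GoodPt.count_eq {x : X} (hx : GoodPt T Ω x) {B : Set X} (hB : B ⊆ Ω) (n : ℕ) :
    ∑ k ∈ Finset.Icc 1 n, B.indicator (1 : X → ℝ≥0∞) (T^[k] x) =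
      ∑ j ∈ Finset.Icc 1 n,
        (if returnSum T Ω j x ≤ n then B.indicator (1 : X → ℝ≥0∞) ((inducedMap T Ω)^[j] x)
          else 0) := by
  classical
  rw [← Finset.sum_filter]
  rw [← Finset.sum_filter_of_ne (p := fun k => T^[k] x ∈ Ω)
    (by
      intro k hk hne
      by_contra hmem
      exact hne (Set.indicator_of_notMem (fun hB' => hmem (hB hB')) _))]
  refine (Finset.sum_bij (fun j _ => returnSum T Ω j x) ?_ ?_ ?_ ?_).symm
  · intro j hj
    simp only [Finset.mem_filter, Finset.mem_Icc] at hj ⊢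
    obtain ⟨⟨hj1, hjn⟩, hrj⟩ := hj
    refine ⟨⟨le_trans hj1 (hx.le_returnSum j), hrj⟩, hx.returnSum_mem j⟩
  · intro j hj j' hj' heq
    exact hx.returnSum_strictMono.injective heq
  · intro k hk
    simp only [Finset.mem_filter, Finset.mem_Icc] at hk
    obtain ⟨⟨hk1, hkn⟩, hmem⟩ := hk
    obtain ⟨j, hj1, hjk, hjr⟩ := hx.exists_eq_returnSum hk1 hmem
    refine ⟨j, ?_, hjr⟩
    simp only [Finset.mem_filter, Finset.mem_Icc]
    exact ⟨⟨hj1, by omega⟩, by omega⟩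
  · intro j hj
    rw [inducedMap_iterate_eq]

end Rec

section Kac

variable {X : Type*} [MeasurableSpace X] {μ : Measure X} {T : X → X} {Ω : Set X}

/-- The set of points of `Ω` that are not good is null, by conservativity. -/
lemma null_bad (hc : Conservative T μ) (hΩ : MeasurableSet Ω) :
    μ {x | x ∈ Ω ∧ ¬ GoodPt T Ω x} = 0 := by
  have h := hc.ae_mem_imp_frequently_image_mem hΩ.nullMeasurableSet
  rw [Filter.eventually_iff, mem_ae_iff] at h
  have hsub : {x | x ∈ Ω ∧ ¬ GoodPt T Ω x} ⊆
      {x | x ∈ Ω → ∃ᶠ n in Filter.atTop, T^[n] x ∈ Ω}ᶜ := by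
    intro x hx
    simp only [Set.mem_compl_iff, Set.mem_setOf_eq, not_forall] at hx ⊢
    exact ⟨hx.1, fun hcon => hx.2 ⟨hx.1, hcon⟩⟩
  exact le_antisymm (le_trans (measure_mono hsub) (le_of_eq h)) zero_le

/-- Kac-type inequality: the induced map does not expand the measure of subsets of `Ω`. -/
lemma kac_le (hT : Measurable T) (hm : MeasurePreserving T μ μ) (hΩ : MeasurableSet Ω)
    (hc : Conservative T μ) {B : Set X} (hB : MeasurableSet B) (hBΩ : B ⊆ Ω)
    (hfin : μ B ≠ ∞) :
    μ (Ω ∩ inducedMap T Ω ⁻¹' B) ≤ μ B := by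
  set W : ℕ → Set X := fun k => {x | T^[k] x ∈ B ∧ ∀ i, 1 ≤ i → i < k → T^[i] x ∉ Ω}
    with hW
  have hWmeas : ∀ k, MeasurableSet (W k) := by
    intro k
    have hrepr : W k = (T^[k] ⁻¹' B) ∩ ⋂ i ∈ Finset.Ico 1 k, T^[i] ⁻¹' Ωᶜ := by
      ext x
      simp only [hW, Set.mem_setOf_eq, Set.mem_inter_iff, Set.mem_preimage, Set.mem_iInter,
        Finset.mem_Ico, Set.mem_compl_iff]
      constructor
      · rintro ⟨h1, h2⟩; exact ⟨h1, fun i hi => h2 i hi.1 hi.2⟩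
      · rintro ⟨h1, h2⟩; exact ⟨h1, fun i h1' h2' => h2 i ⟨h1', h2'⟩⟩
    rw [hrepr]
    exact ((hT.iterate k) hB).inter
      (MeasurableSet.biInter (Set.to_countable _) fun i _ => (hT.iterate i) hΩ.compl)
  have hW1 : W 1 = T ⁻¹' B := by
    ext x
    simp only [hW, Set.mem_setOf_eq, Set.mem_preimage, Function.iterate_one]
    constructor
    · exact fun h => h.1
    · exact fun h => ⟨h, fun i h1 h2 => by omega⟩
  have hWrec : ∀ k, 1 ≤ k → W (k + 1) = T ⁻¹' (W k \ Ω) := by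
    intro k hk
    ext x
    simp only [hW, Set.mem_setOf_eq, Set.mem_preimage, Set.mem_diff]
    constructor
    · rintro ⟨h1, h2⟩
      refine ⟨⟨?_, fun i hi hik => ?_⟩, ?_⟩
      · rw [← Function.iterate_succ_apply]; exact h1
      · rw [← Function.iterate_succ_apply]; exact h2 (i + 1) (by omega) (by omega)
      · have := h2 1 (by omega) (by omega)
        simpa using this
    · rintro ⟨⟨h1, h2⟩, h3⟩
      refine ⟨by rw [Function.iterate_succ_apply]; exact h1, fun i hi hik => ?_⟩
      match i, hi with
      | 1, _ => simpa using h3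
      | (i + 2), _ =>
          rw [Function.iterate_succ_apply]
          exact h2 (i + 1) (by omega) (by omega)
  have hWsplit : ∀ k, 1 ≤ k → μ (W k) = μ (W k ∩ Ω) + μ (W (k + 1)) := by
    intro k hk
    rw [hWrec k hk, hm.measure_preimage ((hWmeas k).diff hΩ).nullMeasurableSet]
    rw [← measure_inter_add_diff (W k) hΩ]
  have htele : ∀ K, (∑ k ∈ Finset.range K, μ (W (k + 1) ∩ Ω)) + μ (W (K + 1)) = μ (W 1) := by
    intro K
    induction K with
    | zero => simp
    | succ K ih =>
        rw [Finset.sum_range_succ, add_assoc, ← hWsplit (K + 1) (by omega)]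
        exact ih
  have hpartial : ∀ K, (∑ k ∈ Finset.range K, μ (W (k + 1) ∩ Ω)) ≤ μ B := by
    intro K
    have := htele K
    have hW1B : μ (W 1) = μ B := by rw [hW1, hm.measure_preimage hB.nullMeasurableSet]
    rw [hW1B] at this
    calc (∑ k ∈ Finset.range K, μ (W (k + 1) ∩ Ω)) ≤
        (∑ k ∈ Finset.range K, μ (W (k + 1) ∩ Ω)) + μ (W (K + 1)) := le_self_add
      _ = μ B := this
  have htsum : (∑' k : ℕ, μ (W (k + 1) ∩ Ω)) ≤ μ B := by
    rw [ENNReal.tsum_eq_iSup_sum]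
    refine iSup_le fun s => ?_
    refine le_trans ?_ (hpartial (s.sup id + 1))
    refine Finset.sum_le_sum_of_subset fun k hk => ?_
    simp only [Finset.mem_range]
    exact lt_of_le_of_lt (Finset.le_sup (f := id) hk) (by omega)
  -- cover
  have hcover : Ω ∩ inducedMap T Ω ⁻¹' B ⊆
      {x | x ∈ Ω ∧ ¬ GoodPt T Ω x} ∪ ⋃ k : ℕ, (W (k + 1) ∩ Ω) := by
    rintro x ⟨hxΩ, hxB⟩
    by_cases hg : GoodPt T Ω x
    · right
      rw [Set.mem_preimage] at hxB
      obtain ⟨h1, -⟩ := hg.one_le_firstReturn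
      set k := firstReturn T Ω x with hk
      refine Set.mem_iUnion.mpr ⟨k - 1, ⟨?_, hxΩ⟩⟩
      show T^[k - 1 + 1] x ∈ B ∧ ∀ i, 1 ≤ i → i < k - 1 + 1 → T^[i] x ∉ Ω
      have hkk : k - 1 + 1 = k := by omega
      rw [hkk]
      refine ⟨by rwa [inducedMap, ← hk] at hxB, fun i hi hik hmem => ?_⟩
      refine Nat.notMem_of_lt_sInf (s := {n : ℕ | 1 ≤ n ∧ T^[n] x ∈ Ω}) ?_ ⟨hi, hmem⟩
      show i < firstReturn T Ω x
      omega
    · exact Or.inl ⟨hxΩ, hg⟩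
  calc μ (Ω ∩ inducedMap T Ω ⁻¹' B)
      ≤ μ ({x | x ∈ Ω ∧ ¬ GoodPt T Ω x} ∪ ⋃ k : ℕ, (W (k + 1) ∩ Ω)) := measure_mono hcover
    _ ≤ μ {x | x ∈ Ω ∧ ¬ GoodPt T Ω x} + μ (⋃ k : ℕ, (W (k + 1) ∩ Ω)) := measure_union_le _ _
    _ ≤ 0 + ∑' k : ℕ, μ (W (k + 1) ∩ Ω) :=
        add_le_add (le_of_eq (null_bad hc hΩ)) (measure_iUnion_le _)
    _ ≤ μ B := by rw [zero_add]; exact htsum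

/-- Iterated Kac-type inequality. -/
lemma kac_iter_le (hT : Measurable T) (hm : MeasurePreserving T μ μ) (hΩ : MeasurableSet Ω)
    (hc : Conservative T μ) (hfinΩ : μ Ω ≠ ∞) {B : Set X} (hB : MeasurableSet B) (hBΩ : B ⊆ Ω)
    (j : ℕ) :
    μ (Ω ∩ (inducedMap T Ω)^[j] ⁻¹' B) ≤ μ B := by
  induction j with
  | zero => exact measure_mono Set.inter_subset_right
  | succ j ih =>
      have hSmeas : Measurable (inducedMap T Ω) := measurable_inducedMap hT hΩ
      set C := (inducedMap T Ω)^[j] ⁻¹' B with hC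
      have hCmeas : MeasurableSet C := (hSmeas.iterate j) hB
      have hstep : Ω ∩ (inducedMap T Ω)^[j + 1] ⁻¹' B ⊆
          (Ω ∩ inducedMap T Ω ⁻¹' (Ω ∩ C)) ∪ {x | x ∈ Ω ∧ ¬ GoodPt T Ω x} := by
        rintro x ⟨hxΩ, hxB⟩
        rw [Set.mem_preimage, Function.iterate_succ_apply] at hxB
        by_cases hg : GoodPt T Ω x
        · exact Or.inl ⟨hxΩ, Set.mem_preimage.mpr ⟨hg.induced.1, hxB⟩⟩
        · exact Or.inr ⟨hxΩ, hg⟩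
      calc μ (Ω ∩ (inducedMap T Ω)^[j + 1] ⁻¹' B)
          ≤ μ (Ω ∩ inducedMap T Ω ⁻¹' (Ω ∩ C)) + μ {x | x ∈ Ω ∧ ¬ GoodPt T Ω x} :=
            le_trans (measure_mono hstep) (measure_union_le _ _)
        _ ≤ μ (Ω ∩ C) + 0 := by
            refine add_le_add (kac_le hT hm hΩ hc (hΩ.inter hCmeas) Set.inter_subset_left ?_)
              (le_of_eq (null_bad hc hΩ))
            exact fun h => hfinΩ (top_le_iff.mp (h ▸ measure_mono Set.inter_subset_left))
        _ ≤ μ B := by rw [add_zero]; exact ih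

end Kac

section Dual

variable {X : Type*} [MeasurableSpace X] {μ : Measure X} {T : X → X}
  {Phat : (X → ℝ≥0∞) → (X → ℝ≥0∞)}

lemma Phat_iter_meas (hPmeas : ∀ f, Measurable f → Measurable (Phat f))
    (k : ℕ) {g : X → ℝ≥0∞} (hg : Measurable g) : Measurable (Phat^[k] g) := by
  induction k with
  | zero => exact hg
  | succ k ih => rw [Function.iterate_succ_apply']; exact hPmeas _ ih

lemma Phat_iter_dual (hT : Measurable T)
    (hPmeas : ∀ f, Measurable f → Measurable (Phat f))
    (hPdual : ∀ f g : X → ℝ≥0∞, Measurable f → Measurable g →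
      ∫⁻ x, f (T x) * g x ∂μ = ∫⁻ x, f x * Phat g x ∂μ)
    (k : ℕ) {f g : X → ℝ≥0∞} (hf : Measurable f) (hg : Measurable g) :
    ∫⁻ x, f (T^[k] x) * g x ∂μ = ∫⁻ x, f x * (Phat^[k] g) x ∂μ := by
  induction k generalizing g with
  | zero => simp
  | succ k ih =>
      have hfk : Measurable (fun y => f (T^[k] y)) := hf.comp (hT.iterate k)
      calc ∫⁻ x, f (T^[k + 1] x) * g x ∂μ
          = ∫⁻ x, (fun y => f (T^[k] y)) (T x) * g x ∂μ := by
            apply lintegral_congr; intro x; rw [Function.iterate_succ_apply]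
        _ = ∫⁻ x, (fun y => f (T^[k] y)) x * Phat g x ∂μ := hPdual _ _ hfk hg
        _ = ∫⁻ x, f x * (Phat^[k] (Phat g)) x ∂μ := ih (hPmeas g hg)
        _ = ∫⁻ x, f x * (Phat^[k + 1] g) x ∂μ := by
            apply lintegral_congr; intro x; rw [Function.iterate_succ_apply]

end Dual

/-- Under `θ_μ`-mixing of the induced system on `Ω`, the dual sums satisfy
`∑_{k=1}^n T̂^k 1_Ω ≤ p + a(n) + n θ_μ(p) dμ/dP` a.e. on `Ω`, where
`a(n) = ∑_{j=1}^n P([φ_j ≤ n])` and `P = m|_Ω`. -/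
theorem stmt13 {X : Type*} [MeasurableSpace X] (μ : Measure X) [SigmaFinite μ]
    (T : X → X) (hc : Conservative T μ) (herg : Ergodic T μ)
    (Phat : (X → ℝ≥0∞) → (X → ℝ≥0∞))
    (hPmeas : ∀ f, Measurable f → Measurable (Phat f))
    (hPdual : ∀ f g : X → ℝ≥0∞, Measurable f → Measurable g →
      ∫⁻ x, f (T x) * g x ∂μ = ∫⁻ x, f x * Phat g x ∂μ)
    (Ω : Set X) (hΩ : MeasurableSet Ω) (h1 : μ Ω = 1)
    -- the induced system and its transfer operator w.r.t. `P = μ|_Ω`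
    (Shat : (X → ℝ≥0∞) → (X → ℝ≥0∞))
    (hSmeas : ∀ f, Measurable f → Measurable (Shat f))
    (hSdual : ∀ f g : X → ℝ≥0∞, Measurable f → Measurable g →
      ∫⁻ x, f (inducedMap T Ω x) * g x ∂(μ.restrict Ω) =
        ∫⁻ x, f x * Shat g x ∂(μ.restrict Ω))
    -- `F j` plays the role of `σ(α_j)`; the return sums are `σ(α_j)`-measurable
    (F : ℕ → MeasurableSpace X) (hF : ∀ k, F k ≤ ‹MeasurableSpace X›)
    (hFret : ∀ j n : ℕ, MeasurableSet[F j] (Ω ∩ {x | returnSum T Ω j x ≤ n}))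
    -- `ν` plays the role of `μ ∼ m_Ω` in the mixing coefficient
    (ν : Measure X) [IsProbabilityMeasure ν]
    (hνP : ν ≪ μ.restrict Ω) (hPν : μ.restrict Ω ≪ ν)
    (θ : ℕ → ℝ) (hθ : ∀ n, 0 ≤ θ n)
    (hmix : ∀ (n k : ℕ) (A B : Set X), 1 ≤ k → MeasurableSet[F k] A → MeasurableSet B →
      |((μ.restrict Ω) (A ∩ (inducedMap T Ω)^[n + k] ⁻¹' B)).toReal -
          ((μ.restrict Ω) A).toReal * ((μ.restrict Ω) B).toReal| ≤ θ n * (ν B).toReal) :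
    ∀ n p : ℕ, 1 ≤ n → 1 ≤ p →
      ∀ᵐ x ∂(μ.restrict Ω),
        ∑ k ∈ Finset.Icc 1 n, (Phat^[k]) (Ω.indicator (1 : X → ℝ≥0∞)) x ≤
          (p : ℝ≥0∞) +
            (∑ j ∈ Finset.Icc 1 n, (μ.restrict Ω) {y | returnSum T Ω j y ≤ n}) +
            (n : ℝ≥0∞) * ENNReal.ofReal (θ p) * ν.rnDeriv (μ.restrict Ω) x := by
  intro n p hn hp
  classical
  have hT : Measurable T := herg.toMeasurePreserving.measurable
  have hTm : MeasurePreserving T μ μ := herg.toMeasurePreserving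
  set P := μ.restrict Ω with hP
  haveI hPprob : IsProbabilityMeasure P := ⟨by rw [hP, Measure.restrict_apply_univ]; exact h1⟩
  have hind : Measurable (Ω.indicator (1 : X → ℝ≥0∞)) := measurable_one.indicator hΩ
  have hSm : Measurable (inducedMap T Ω) := measurable_inducedMap hT hΩ
  set S := inducedMap T Ω with hS
  set a : ℝ≥0∞ := ∑ j ∈ Finset.Icc 1 n, P {y | returnSum T Ω j y ≤ n} with ha
  set c : ℝ≥0∞ := (n : ℝ≥0∞) * ENNReal.ofReal (θ p) with hcdef
  have hLmeas : Measurable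
      (fun x => ∑ k ∈ Finset.Icc 1 n, (Phat^[k]) (Ω.indicator (1 : X → ℝ≥0∞)) x) :=
    Finset.measurable_sum _ fun k _ => Phat_iter_meas hPmeas k hind
  have haeG : ∀ᵐ x ∂P, GoodPt T Ω x := by
    rw [ae_iff]
    have h2 : P {x | ¬ GoodPt T Ω x} = μ ({x | ¬ GoodPt T Ω x} ∩ Ω) :=
      Measure.restrict_apply' hΩ
    rw [h2]
    refine le_antisymm (le_trans (measure_mono ?_) (le_of_eq (null_bad hc hΩ))) zero_le
    rintro x ⟨hx1, hx2⟩
    exact ⟨hx2, hx1⟩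
  refine ae_le_of_forall_setLIntegral_le_of_sigmaFinite hLmeas ?_
  intro s hs _
  set B := s ∩ Ω with hBdef
  have hB : MeasurableSet B := hs.inter hΩ
  have hBΩ : B ⊆ Ω := Set.inter_subset_right
  have hBs : B ⊆ s := Set.inter_subset_left
  have hPsB : P s = μ B := Measure.restrict_apply' hΩ
  have hPB : P B = μ B := by
    rw [Measure.restrict_apply' hΩ]
    congr 1
    exact Set.inter_eq_left.mpr hBΩ
  -- A' j : the σ(α_{j-p})-measurable event
  set A' : ℕ → Set X := fun j => Ω ∩ {y | returnSum T Ω (j - p) y ≤ n} with hA'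
  have hA'meas : ∀ j, MeasurableSet (A' j) := fun j => hF (j - p) _ (hFret (j - p) n)
  -- Step A : rewrite each dual term as an integral over Ω
  have keyk : ∀ k, ∫⁻ x in s, (Phat^[k]) (Ω.indicator (1 : X → ℝ≥0∞)) x ∂P =
      ∫⁻ x, B.indicator (1 : X → ℝ≥0∞) (T^[k] x) ∂P := by
    intro k
    have hmk : Measurable ((Phat^[k]) (Ω.indicator (1 : X → ℝ≥0∞))) :=
      Phat_iter_meas hPmeas k hind
    calc ∫⁻ x in s, (Phat^[k]) (Ω.indicator (1 : X → ℝ≥0∞)) x ∂P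
        = ∫⁻ x in B, (Phat^[k]) (Ω.indicator (1 : X → ℝ≥0∞)) x ∂μ := by
          rw [hP, Measure.restrict_restrict hs]
      _ = ∫⁻ x, B.indicator (1 : X → ℝ≥0∞) x *
            (Phat^[k]) (Ω.indicator (1 : X → ℝ≥0∞)) x ∂μ := by
          rw [← lintegral_indicator hB]
          apply lintegral_congr
          intro x
          by_cases hx : x ∈ B <;> simp [hx]
      _ = ∫⁻ x, B.indicator (1 : X → ℝ≥0∞) (T^[k] x) * Ω.indicator (1 : X → ℝ≥0∞) x ∂μ :=
          (Phat_iter_dual hT hPmeas hPdual k (measurable_one.indicator hB) hind).symm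
      _ = ∫⁻ x in Ω, B.indicator (1 : X → ℝ≥0∞) (T^[k] x) ∂μ := by
          rw [← lintegral_indicator hΩ]
          apply lintegral_congr
          intro x
          by_cases hx : x ∈ Ω <;> simp [hx]
      _ = ∫⁻ x, B.indicator (1 : X → ℝ≥0∞) (T^[k] x) ∂P := by rw [hP]
  have hmB : ∀ k : ℕ, Measurable (fun x => B.indicator (1 : X → ℝ≥0∞) (T^[k] x)) :=
    fun k => (measurable_one.indicator hB).comp (hT.iterate k)
  -- the pointwise comparison functions
  set h : ℕ → X → ℝ≥0∞ := fun j x =>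
    if j ≤ p then B.indicator (1 : X → ℝ≥0∞) (S^[j] x)
    else (A' j).indicator (1 : X → ℝ≥0∞) x * B.indicator (1 : X → ℝ≥0∞) (S^[j] x) with hh
  have hmh : ∀ j : ℕ, Measurable (h j) := by
    intro j
    by_cases hjp : j ≤ p <;> simp only [hh, hjp, if_true, if_false, reduceIte]
    · exact (measurable_one.indicator hB).comp (hSm.iterate j)
    · exact (measurable_one.indicator (hA'meas j)).mul
        ((measurable_one.indicator hB).comp (hSm.iterate j))
  -- pointwise bound for good points
  have hptwise : ∀ x, GoodPt T Ω x →
      (∑ k ∈ Finset.Icc 1 n, B.indicator (1 : X → ℝ≥0∞) (T^[k] x)) ≤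
        ∑ j ∈ Finset.Icc 1 n, h j x := by
    intro x hx
    rw [hx.count_eq hBΩ n]
    refine Finset.sum_le_sum fun j hj => ?_
    by_cases hjp : j ≤ p
    · simp only [hh, hjp, if_true, reduceIte]
      split_ifs with hr
      · exact le_refl _
      · exact zero_le
    · simp only [hh, hjp, if_false, reduceIte]
      split_ifs with hr
      · have hxA : x ∈ A' j := by
          refine ⟨hx.1, ?_⟩
          have hmono := returnSum_mono T Ω x (Nat.sub_le j p)
          exact le_trans hmono hr
        rw [Set.indicator_of_mem hxA, Pi.one_apply, one_mul]
      · exact zero_le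
  -- integral of each comparison term
  have hintj : ∀ j ∈ Finset.Icc 1 n, ∫⁻ x, h j x ∂P ≤
      (if j ≤ p then P s else 0) +
      (if j ≤ p then 0 else P {y | returnSum T Ω (j - p) y ≤ n} * P s) +
      ENNReal.ofReal (θ p) * ν s := by
    intro j hj
    by_cases hjp : j ≤ p
    · simp only [hh, hjp, if_true, reduceIte]
      have heq : ∫⁻ x, B.indicator (1 : X → ℝ≥0∞) (S^[j] x) ∂P = P (S^[j] ⁻¹' B) := by
        rw [← lintegral_indicator_one ((hSm.iterate j) hB)]
        apply lintegral_congr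
        intro x
        by_cases hx : S^[j] x ∈ B <;> simp [hx, Set.indicator_apply]
      rw [heq]
      have hkac : P (S^[j] ⁻¹' B) ≤ μ B := by
        rw [hP, Measure.restrict_apply' hΩ, Set.inter_comm]
        exact kac_iter_le hT hTm hΩ hc (h1 ▸ one_ne_top) hB hBΩ j
      calc P (S^[j] ⁻¹' B) ≤ μ B := hkac
        _ = P s := hPsB.symm
        _ ≤ P s + 0 + ENNReal.ofReal (θ p) * ν s := by
            rw [add_zero]; exact le_self_add
    · simp only [hh, hjp, if_false, reduceIte]
      have heq : ∫⁻ x, (A' j).indicator (1 : X → ℝ≥0∞) x *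
          B.indicator (1 : X → ℝ≥0∞) (S^[j] x) ∂P = P (A' j ∩ S^[j] ⁻¹' B) := by
        rw [← lintegral_indicator_one ((hA'meas j).inter ((hSm.iterate j) hB))]
        apply lintegral_congr
        intro x
        by_cases hx1 : x ∈ A' j <;> by_cases hx2 : S^[j] x ∈ B <;>
          simp [hx1, hx2, Set.indicator_apply]
      rw [heq]
      have hple : p + (j - p) = j := by omega
      have hmix' := hmix p (j - p) (A' j) B (by omega) (hFret (j - p) n) hB
      rw [hple] at hmix'
      have habs := abs_le.mp hmix'
      have h1' : (P (A' j ∩ S^[j] ⁻¹' B)).toReal ≤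
          (P (A' j)).toReal * (P B).toReal + θ p * (ν B).toReal := by linarith [habs.2]
      have hfin1 : P (A' j ∩ S^[j] ⁻¹' B) ≠ ∞ := measure_ne_top _ _
      have hstep : P (A' j ∩ S^[j] ⁻¹' B) ≤ P (A' j) * P B + ENNReal.ofReal (θ p) * ν B := by
        calc P (A' j ∩ S^[j] ⁻¹' B)
            = ENNReal.ofReal ((P (A' j ∩ S^[j] ⁻¹' B)).toReal) :=
              (ENNReal.ofReal_toReal hfin1).symm
          _ ≤ ENNReal.ofReal ((P (A' j)).toReal * (P B).toReal + θ p * (ν B).toReal) :=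
              ENNReal.ofReal_le_ofReal h1'
          _ ≤ ENNReal.ofReal ((P (A' j)).toReal * (P B).toReal) +
              ENNReal.ofReal (θ p * (ν B).toReal) := ENNReal.ofReal_add_le
          _ = P (A' j) * P B + ENNReal.ofReal (θ p) * ν B := by
              rw [ENNReal.ofReal_mul ENNReal.toReal_nonneg,
                ENNReal.ofReal_mul (hθ p),
                ENNReal.ofReal_toReal (measure_ne_top _ _),
                ENNReal.ofReal_toReal (measure_ne_top _ _),
                ENNReal.ofReal_toReal (measure_ne_top _ _)]
      calc P (A' j ∩ S^[j] ⁻¹' B) ≤ P (A' j) * P B + ENNReal.ofReal (θ p) * ν B := hstep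
        _ ≤ P {y | returnSum T Ω (j - p) y ≤ n} * P s + ENNReal.ofReal (θ p) * ν s := by
            exact add_le_add
              (mul_le_mul' (measure_mono Set.inter_subset_right)
                (le_of_eq (hPB.trans hPsB.symm)))
              (mul_le_mul_right (measure_mono hBs) _)
        _ = 0 + P {y | returnSum T Ω (j - p) y ≤ n} * P s + ENNReal.ofReal (θ p) * ν s := by
            rw [zero_add]
  -- sum of the bounds
  have hsum1 : (∑ j ∈ Finset.Icc 1 n, if j ≤ p then P s else 0) ≤ (p : ℝ≥0∞) * P s := by
    rw [← Finset.sum_filter]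
    rw [Finset.sum_const]
    have hcard : ((Finset.Icc 1 n).filter (fun j => j ≤ p)).card ≤ p := by
      calc ((Finset.Icc 1 n).filter (fun j => j ≤ p)).card
          ≤ (Finset.Icc 1 p).card := by
            apply Finset.card_le_card
            intro j hj
            simp only [Finset.mem_filter, Finset.mem_Icc] at hj ⊢
            omega
        _ = p := by rw [Nat.card_Icc]; omega
    calc ((Finset.Icc 1 n).filter (fun j => j ≤ p)).card • P s
        = (((Finset.Icc 1 n).filter (fun j => j ≤ p)).card : ℝ≥0∞) * P s := by
          rw [nsmul_eq_mul]
      _ ≤ (p : ℝ≥0∞) * P s := mul_le_mul_left (by exact_mod_cast hcard) _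
  have hsum2 : (∑ j ∈ Finset.Icc 1 n,
      if j ≤ p then 0 else P {y | returnSum T Ω (j - p) y ≤ n} * P s) ≤ a * P s := by
    have hflip : ∀ j : ℕ, (if j ≤ p then (0:ℝ≥0∞) else P {y | returnSum T Ω (j - p) y ≤ n} * P s)
        = (if ¬ j ≤ p then P {y | returnSum T Ω (j - p) y ≤ n} * P s else 0) := by
      intro j; by_cases hjp : j ≤ p <;> simp [hjp]
    simp only [hflip]
    rw [← Finset.sum_filter]
    have hset : (Finset.Icc 1 n).filter (fun j => ¬ j ≤ p) = Finset.Icc (p + 1) n := by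
      ext j
      simp only [Finset.mem_filter, Finset.mem_Icc]
      omega
    rw [hset, ← Finset.sum_mul]
    refine mul_le_mul_left ?_ (P s)
    calc (∑ j ∈ Finset.Icc (p + 1) n, P {y | returnSum T Ω (j - p) y ≤ n})
        = ∑ i ∈ Finset.Icc 1 (n - p), P {y | returnSum T Ω i y ≤ n} := by
          refine Finset.sum_nbij' (fun j => j - p) (fun i => i + p) ?_ ?_ ?_ ?_ ?_
          · intro j hj; simp only [Finset.mem_Icc] at hj ⊢; omega
          · intro i hi; simp only [Finset.mem_Icc] at hi ⊢; omega
          · intro j hj; simp only [Finset.mem_Icc] at hj; omega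
          · intro i hi; simp only [Finset.mem_Icc] at hi; omega
          · intro j hj; rfl
      _ ≤ a := by
          rw [ha]
          apply Finset.sum_le_sum_of_subset
          intro i hi
          simp only [Finset.mem_Icc] at hi ⊢
          omega
  have hsum3 : (∑ _j ∈ Finset.Icc 1 n, ENNReal.ofReal (θ p) * ν s) = c * ν s := by
    rw [Finset.sum_const, Nat.card_Icc, nsmul_eq_mul, hcdef]
    have : (n + 1 - 1 : ℕ) = n := by omega
    rw [this, mul_assoc]
  -- assemble the left-hand side estimate
  have hLHS : ∫⁻ x in s, (∑ k ∈ Finset.Icc 1 n,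
      (Phat^[k]) (Ω.indicator (1 : X → ℝ≥0∞)) x) ∂P ≤
      (p : ℝ≥0∞) * P s + a * P s + c * ν s := by
    calc ∫⁻ x in s, (∑ k ∈ Finset.Icc 1 n, (Phat^[k]) (Ω.indicator (1 : X → ℝ≥0∞)) x) ∂P
        = ∑ k ∈ Finset.Icc 1 n, ∫⁻ x in s, (Phat^[k]) (Ω.indicator (1 : X → ℝ≥0∞)) x ∂P :=
          lintegral_finset_sum _ fun k _ => Phat_iter_meas hPmeas k hind
      _ = ∑ k ∈ Finset.Icc 1 n, ∫⁻ x, B.indicator (1 : X → ℝ≥0∞) (T^[k] x) ∂P :=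
          Finset.sum_congr rfl fun k _ => keyk k
      _ = ∫⁻ x, (∑ k ∈ Finset.Icc 1 n, B.indicator (1 : X → ℝ≥0∞) (T^[k] x)) ∂P :=
          (lintegral_finset_sum _ fun k _ => hmB k).symm
      _ ≤ ∫⁻ x, (∑ j ∈ Finset.Icc 1 n, h j x) ∂P := by
          refine lintegral_mono_ae (haeG.mono fun x hx => ?_)
          exact hptwise x hx
      _ = ∑ j ∈ Finset.Icc 1 n, ∫⁻ x, h j x ∂P :=
          lintegral_finset_sum _ fun j _ => hmh j
      _ ≤ ∑ j ∈ Finset.Icc 1 n, ((if j ≤ p then P s else 0) +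
            (if j ≤ p then 0 else P {y | returnSum T Ω (j - p) y ≤ n} * P s) +
            ENNReal.ofReal (θ p) * ν s) := Finset.sum_le_sum hintj
      _ = (∑ j ∈ Finset.Icc 1 n, if j ≤ p then P s else 0) +
          (∑ j ∈ Finset.Icc 1 n,
            if j ≤ p then 0 else P {y | returnSum T Ω (j - p) y ≤ n} * P s) +
          (∑ _j ∈ Finset.Icc 1 n, ENNReal.ofReal (θ p) * ν s) := by
          rw [Finset.sum_add_distrib, Finset.sum_add_distrib]
      _ ≤ (p : ℝ≥0∞) * P s + a * P s + c * ν s := by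
          refine add_le_add (add_le_add hsum1 hsum2) (le_of_eq hsum3)
  -- the right-hand side integral
  have hRHS : ∫⁻ x in s, ((p : ℝ≥0∞) + a + c * ν.rnDeriv P x) ∂P =
      (p : ℝ≥0∞) * P s + a * P s + c * ν s := by
    have hrn : Measurable (ν.rnDeriv P) := Measure.measurable_rnDeriv ν P
    calc ∫⁻ x in s, ((p : ℝ≥0∞) + a + c * ν.rnDeriv P x) ∂P
        = (∫⁻ _x in s, ((p : ℝ≥0∞) + a) ∂P) + ∫⁻ x in s, c * ν.rnDeriv P x ∂P :=
          lintegral_add_left measurable_const _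
      _ = ((p : ℝ≥0∞) + a) * P s + c * ∫⁻ x in s, ν.rnDeriv P x ∂P := by
          rw [setLIntegral_const, lintegral_const_mul c hrn]
      _ = ((p : ℝ≥0∞) + a) * P s + c * ν s := by
          rw [Measure.setLIntegral_rnDeriv hνP s]
      _ = (p : ℝ≥0∞) * P s + a * P s + c * ν s := by rw [add_mul]
  calc ∫⁻ x in s, (∑ k ∈ Finset.Icc 1 n, (Phat^[k]) (Ω.indicator (1 : X → ℝ≥0∞)) x) ∂P
      ≤ (p : ℝ≥0∞) * P s + a * P s + c * ν s := hLHS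
    _ = ∫⁻ x in s, ((p : ℝ≥0∞) + a + c * ν.rnDeriv P x) ∂P := hRHS.symm
end

section
/- If A is a limited set for a weakly pointwise dual ergodic transformation T, then a_n(T) ∼ a_n(A), where a_n(A) := ∑_{k=0}^{n−1} m(A ∩ T^{−k}A)/m(A)², and consequently the Laplace sums satisfy u_A(λ) ∼ u_B(λ) as λ ↓ 0 for any B ⊆ A of finite positive measure. -/
set_option maxHeartbeats 1000000

open MeasureTheory Filter Topology ENNReal

section Aux


lemma summable_aux {r : ℝ} (hr0 : 0 ≤ r) (hr1 : r < 1) {w : ℕ → ℝ} {C : ℝ}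
    (h0 : ∀ n, 0 ≤ w n) (hC : ∀ n, w n ≤ C * (n + 1)) :
    Summable (fun n => r ^ n * w n) := by
  have s1 : Summable (fun n : ℕ => (n : ℝ) ^ 1 * r ^ n) :=
    summable_pow_mul_geometric_of_norm_lt_one 1 (by rw [Real.norm_eq_abs, abs_of_nonneg hr0]; exact hr1)
  have s2 : Summable (fun n : ℕ => r ^ n) := summable_geometric_of_lt_one hr0 hr1
  refine Summable.of_nonneg_of_le (fun n => mul_nonneg (pow_nonneg hr0 n) (h0 n)) (fun n => ?_)
    (((s1.add s2).mul_left C))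
  have := mul_le_mul_of_nonneg_left (hC n) (pow_nonneg hr0 n)
  calc r ^ n * w n ≤ r ^ n * (C * (n + 1)) := this
    _ = C * ((n:ℝ) ^ 1 * r ^ n + r ^ n) := by ring

lemma abel_id {r : ℝ} (hr0 : 0 ≤ r) (hr1 : r < 1) {w : ℕ → ℝ} {C : ℝ}
    (h0 : ∀ n, 0 ≤ w n) (hC : ∀ n, w n ≤ C) :
    ∑' n : ℕ, r ^ n * w n
      = (1 - r) * ∑' n : ℕ, r ^ n * (∑ k ∈ Finset.range (n + 1), w k) := by
  have hC0 : (0:ℝ) ≤ C := le_trans (h0 0) (hC 0)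
  have hCn : ∀ n, w n ≤ C * (n + 1) := fun n => (hC n).trans (by nlinarith [Nat.cast_nonneg (α := ℝ) n])
  have hU0 : ∀ n : ℕ, 0 ≤ ∑ k ∈ Finset.range n, w k :=
    fun n => Finset.sum_nonneg fun k _ => h0 k
  have hUC : ∀ n : ℕ, (∑ k ∈ Finset.range (n+1), w k) ≤ C * (n + 1) := by
    intro n
    calc (∑ k ∈ Finset.range (n+1), w k) ≤ ∑ k ∈ Finset.range (n+1), C :=
          Finset.sum_le_sum fun k _ => hC k
      _ = C * (n+1) := by simp [mul_comm]
  have SU : Summable (fun n : ℕ => r ^ n * (∑ k ∈ Finset.range (n+1), w k)) :=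
    summable_aux hr0 hr1 (fun n => hU0 _) hUC
  have hUC' : ∀ n : ℕ, (∑ k ∈ Finset.range n, w k) ≤ C * (n + 1) := by
    intro n
    cases n with
    | zero => simp; positivity
    | succ m => exact (hUC m).trans (by push_cast; nlinarith [Nat.cast_nonneg (α := ℝ) m])
  have SU0 : Summable (fun n : ℕ => r ^ n * (∑ k ∈ Finset.range n, w k)) :=
    summable_aux hr0 hr1 hU0 hUC'
  have key : ∀ n : ℕ, r ^ n * w n
      = r ^ n * (∑ k ∈ Finset.range (n+1), w k) - r ^ n * (∑ k ∈ Finset.range n, w k) := by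
    intro n; rw [Finset.sum_range_succ]; ring
  have shift : ∑' n : ℕ, r ^ n * (∑ k ∈ Finset.range n, w k)
      = r * ∑' n : ℕ, r ^ n * (∑ k ∈ Finset.range (n+1), w k) := by
    rw [Summable.tsum_eq_zero_add SU0]
    simp only [Finset.range_zero, Finset.sum_empty, mul_zero, pow_succ, zero_add]
    rw [← tsum_mul_left]
    congr 1; funext n; ring
  calc ∑' n : ℕ, r ^ n * w n
      = ∑' n : ℕ, (r ^ n * (∑ k ∈ Finset.range (n+1), w k) - r ^ n * (∑ k ∈ Finset.range n, w k)) := by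
        exact tsum_congr key
    _ = (∑' n : ℕ, r ^ n * (∑ k ∈ Finset.range (n+1), w k)) - ∑' n : ℕ, r ^ n * (∑ k ∈ Finset.range n, w k) :=
        Summable.tsum_sub SU SU0
    _ = (1 - r) * ∑' n : ℕ, r ^ n * (∑ k ∈ Finset.range (n+1), w k) := by rw [shift]; ring

lemma abel_main (u v : ℕ → ℝ) (C : ℝ)
    (hu0 : ∀ n, 0 ≤ u n) (hv0 : ∀ n, 0 ≤ v n) (huC : ∀ n, u n ≤ C) (hvC : ∀ n, v n ≤ C)
    (hUV : Tendsto (fun n => (∑ k ∈ Finset.range n, u k) / (∑ k ∈ Finset.range n, v k))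
      atTop (𝓝 1))
    (hV : Tendsto (fun n => ∑ k ∈ Finset.range n, v k) atTop atTop) :
    Tendsto (fun l : ℝ => (∑' n : ℕ, Real.exp (-l * n) * u n) /
      (∑' n : ℕ, Real.exp (-l * n) * v n)) (𝓝[>] 0) (𝓝 1) := by
  have hC0 : (0:ℝ) ≤ C := le_trans (hu0 0) (huC 0)
  set U : ℕ → ℝ := fun n => ∑ k ∈ Finset.range n, u k with hU
  set V : ℕ → ℝ := fun n => ∑ k ∈ Finset.range n, v k with hVdef
  have hUnn : ∀ n, 0 ≤ U n := fun n => Finset.sum_nonneg fun k _ => hu0 k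
  have hVnn : ∀ n, 0 ≤ V n := fun n => Finset.sum_nonneg fun k _ => hv0 k
  have hUb : ∀ n, U (n+1) ≤ C * (n+1) := by
    intro n
    calc U (n+1) ≤ ∑ k ∈ Finset.range (n+1), C := Finset.sum_le_sum fun k _ => huC k
      _ = C * (n+1) := by simp [mul_comm]
  have hVb : ∀ n, V (n+1) ≤ C * (n+1) := by
    intro n
    calc V (n+1) ≤ ∑ k ∈ Finset.range (n+1), C := Finset.sum_le_sum fun k _ => hvC k
      _ = C * (n+1) := by simp [mul_comm]
  set Hu : ℝ → ℝ := fun l => ∑' n : ℕ, Real.exp (-l) ^ n * U (n+1) with hHu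
  set Hv : ℝ → ℝ := fun l => ∑' n : ℕ, Real.exp (-l) ^ n * V (n+1) with hHv
  -- basic facts about r = exp(-l)
  have hr : ∀ l : ℝ, 0 < l → 0 < Real.exp (-l) ∧ Real.exp (-l) < 1 := by
    intro l hl
    refine ⟨Real.exp_pos _, ?_⟩
    rw [show (1:ℝ) = Real.exp 0 by simp]
    exact Real.exp_lt_exp.mpr (by linarith)
  -- ratio rewriting
  have hratio : ∀ l : ℝ, 0 < l →
      (∑' n : ℕ, Real.exp (-l * n) * u n) / (∑' n : ℕ, Real.exp (-l * n) * v n)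
        = Hu l / Hv l := by
    intro l hl
    obtain ⟨hr0, hr1⟩ := hr l hl
    have hrw : ∀ w : ℕ → ℝ, (∑' n : ℕ, Real.exp (-l * n) * w n)
        = ∑' n : ℕ, Real.exp (-l) ^ n * w n := by
      intro w
      refine tsum_congr fun n => ?_
      rw [show -l * (n:ℝ) = (n:ℝ) * (-l) by ring, Real.exp_nat_mul]
    rw [hrw u, hrw v, abel_id hr0.le hr1 hu0 huC, abel_id hr0.le hr1 hv0 hvC]
    have h1r : (1:ℝ) - Real.exp (-l) ≠ 0 := by linarith
    exact mul_div_mul_left _ _ h1r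
  -- summability of the H-series
  have SUu : ∀ l : ℝ, 0 < l → Summable (fun n : ℕ => Real.exp (-l) ^ n * U (n+1)) :=
    fun l hl => summable_aux (hr l hl).1.le (hr l hl).2 (fun n => hUnn _) hUb
  have SUv : ∀ l : ℝ, 0 < l → Summable (fun n : ℕ => Real.exp (-l) ^ n * V (n+1)) :=
    fun l hl => summable_aux (hr l hl).1.le (hr l hl).2 (fun n => hVnn _) hVb
  -- Hv tends to infinity
  have hHvTop : Tendsto Hv (𝓝[>] (0:ℝ)) atTop := by
    rw [tendsto_atTop]
    intro b
    set M : ℝ := max b 1 with hM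
    obtain ⟨N, hN⟩ := (tendsto_atTop.mp hV (M + 1)).exists_forall_of_atTop
    have hVN : M + 1 ≤ V (N + 1) := hN _ (Nat.le_succ N)
    have hcont : Tendsto (fun l : ℝ => Real.exp (-l) ^ N * (M + 1)) (𝓝[>] (0:ℝ))
        (𝓝 (M + 1)) := by
      have : ContinuousAt (fun l : ℝ => Real.exp (-l) ^ N * (M + 1)) 0 := by
        fun_prop
      exact tendsto_nhdsWithin_of_tendsto_nhds (by simpa using this.tendsto)
    have hM1 : M < M + 1 := by linarith
    filter_upwards [hcont.eventually_const_lt hM1, self_mem_nhdsWithin] with l hl1 hl2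
    have hl : (0:ℝ) < l := hl2
    have hterm : Real.exp (-l) ^ N * (M + 1) ≤ Real.exp (-l) ^ N * V (N + 1) :=
      mul_le_mul_of_nonneg_left hVN (pow_nonneg (hr l hl).1.le N)
    have hle : Real.exp (-l) ^ N * V (N + 1) ≤ Hv l :=
      Summable.le_tsum (SUv l hl) N fun j _ => mul_nonneg (pow_nonneg (hr l hl).1.le j) (hVnn _)
    have : b ≤ M := le_max_left _ _
    linarith
  -- main estimate
  rw [Metric.tendsto_nhds]
  intro ε hε
  set e3 : ℝ := min (ε/3) 1 with he3def
  have he3 : 0 < e3 := lt_min (by linarith) one_pos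
  have he3' : e3 ≤ 1 := min_le_right _ _
  have he3ε : e3 ≤ ε / 3 := min_le_left _ _
  -- eventual comparison of U and V
  have hev : ∀ᶠ n in atTop, |U n / V n - 1| < e3 ∧ 1 ≤ V n :=
    ((hUV.sub_const 1).abs.eventually_lt_const (by simpa using he3)).and
      (hV.eventually_ge_atTop 1)
  obtain ⟨N0, hN0⟩ := hev.exists_forall_of_atTop
  have hcomp : ∀ n, N0 ≤ n → U n ≤ (1 + e3) * V n ∧ (1 - e3) * V n ≤ U n := by
    intro n hn
    obtain ⟨h1, h2⟩ := hN0 n hn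
    have hVpos : 0 < V n := lt_of_lt_of_le one_pos h2
    rw [abs_lt] at h1
    constructor
    · have : U n / V n ≤ 1 + e3 := by linarith [h1.2]
      calc U n = U n / V n * V n := by field_simp
        _ ≤ (1 + e3) * V n := mul_le_mul_of_nonneg_right this hVpos.le
    · have : 1 - e3 ≤ U n / V n := by linarith [h1.1]
      calc (1 - e3) * V n ≤ U n / V n * V n := mul_le_mul_of_nonneg_right this hVpos.le
        _ = U n := by field_simp
  set K : ℝ := ∑ i ∈ Finset.range N0, C * (i + 1) with hK
  have hK0 : 0 ≤ K := Finset.sum_nonneg fun i _ => by positivity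
  filter_upwards [self_mem_nhdsWithin, hHvTop.eventually_ge_atTop (max 1 (K / e3))]
    with l hl hHvl
  have hl : (0:ℝ) < l := hl
  obtain ⟨hr0, hr1⟩ := hr l hl
  set r : ℝ := Real.exp (-l) with hrdef
  have hsu := SUu l hl
  have hsv := SUv l hl
  have hsu' : Summable (fun i : ℕ => r ^ (i + N0) * U (i + N0 + 1)) :=
    (summable_nat_add_iff (f := fun n : ℕ => r ^ n * U (n+1)) N0).mpr hsu
  have hsv' : Summable (fun i : ℕ => r ^ (i + N0) * V (i + N0 + 1)) :=
    (summable_nat_add_iff (f := fun n : ℕ => r ^ n * V (n+1)) N0).mpr hsv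
  have hsplitu : (∑ i ∈ Finset.range N0, r ^ i * U (i+1))
      + (∑' i : ℕ, r ^ (i + N0) * U (i + N0 + 1)) = Hu l := Summable.sum_add_tsum_nat_add N0 hsu
  have hsplitv : (∑ i ∈ Finset.range N0, r ^ i * V (i+1))
      + (∑' i : ℕ, r ^ (i + N0) * V (i + N0 + 1)) = Hv l := Summable.sum_add_tsum_nat_add N0 hsv
  set S1 := ∑ i ∈ Finset.range N0, r ^ i * U (i+1) with hS1
  set S2 := ∑ i ∈ Finset.range N0, r ^ i * V (i+1) with hS2
  set T1 := ∑' i : ℕ, r ^ (i + N0) * U (i + N0 + 1) with hT1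
  set T2 := ∑' i : ℕ, r ^ (i + N0) * V (i + N0 + 1) with hT2
  have hSbound : ∀ (W : ℕ → ℝ), (∀ n, 0 ≤ W n) → (∀ n, W (n+1) ≤ C * (n+1)) →
      (0 ≤ ∑ i ∈ Finset.range N0, r ^ i * W (i+1) ∧
        (∑ i ∈ Finset.range N0, r ^ i * W (i+1)) ≤ K) := by
    intro W hW0 hWb
    constructor
    · exact Finset.sum_nonneg fun i _ => mul_nonneg (pow_nonneg hr0.le i) (hW0 _)
    · refine Finset.sum_le_sum fun i _ => ?_
      calc r ^ i * W (i+1) ≤ 1 * W (i+1) :=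
            mul_le_mul_of_nonneg_right (pow_le_one₀ hr0.le hr1.le) (hW0 _)
        _ = W (i+1) := one_mul _
        _ ≤ C * (i+1) := hWb i
  obtain ⟨hS10, hS1K⟩ := hSbound U hUnn hUb
  obtain ⟨hS20, hS2K⟩ := hSbound V hVnn hVb
  have hT10 : 0 ≤ T1 := tsum_nonneg fun i => mul_nonneg (pow_nonneg hr0.le _) (hUnn _)
  have hT20 : 0 ≤ T2 := tsum_nonneg fun i => mul_nonneg (pow_nonneg hr0.le _) (hVnn _)
  have hT12u : T1 ≤ (1 + e3) * T2 := by
    rw [← tsum_mul_left]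
    refine Summable.tsum_le_tsum (fun i => ?_) hsu' (hsv'.mul_left _)
    rw [← mul_assoc, mul_comm (1+e3) (r ^ (i + N0)), mul_assoc]
    exact mul_le_mul_of_nonneg_left
      ((hcomp (i + N0 + 1) (by omega)).1) (pow_nonneg hr0.le _)
  have hT12l : (1 - e3) * T2 ≤ T1 := by
    rw [← tsum_mul_left]
    refine Summable.tsum_le_tsum (fun i => ?_) (hsv'.mul_left _) hsu'
    rw [← mul_assoc, mul_comm (1-e3) (r ^ (i + N0)), mul_assoc]
    exact mul_le_mul_of_nonneg_left
      ((hcomp (i + N0 + 1) (by omega)).2) (pow_nonneg hr0.le _)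
  have hHv1 : 1 ≤ Hv l := le_trans (le_max_left _ _) hHvl
  have hHvK : K ≤ e3 * Hv l := by
    have := le_trans (le_max_right 1 (K / e3)) hHvl
    calc K = (K / e3) * e3 := by field_simp
      _ ≤ Hv l * e3 := mul_le_mul_of_nonneg_right this he3.le
      _ = e3 * Hv l := mul_comm _ _
  have hHvpos : 0 < Hv l := lt_of_lt_of_le one_pos hHv1
  -- upper bound : Hu l ≤ (1 + 2*e3) * Hv l
  have hupper : Hu l ≤ (1 + 2*e3) * Hv l := by
    have hT2Hv : T2 ≤ Hv l := by nlinarith [hsplitv]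
    have : Hu l ≤ K + (1 + e3) * T2 := by nlinarith [hsplitu]
    nlinarith [mul_le_mul_of_nonneg_left hT2Hv (by linarith : (0:ℝ) ≤ 1 + e3)]
  -- lower bound : (1 - 2*e3) * Hv l ≤ Hu l
  have hlower : (1 - 2*e3) * Hv l ≤ Hu l := by
    have hT2eq : T2 = Hv l - S2 := by linarith [hsplitv]
    have h1 : (1 - e3) * (Hv l - S2) ≤ T1 := by rw [← hT2eq]; exact hT12l
    have h2 : Hu l = S1 + T1 := by linarith [hsplitu]
    nlinarith [mul_le_mul_of_nonneg_left hS2K (by linarith : (0:ℝ) ≤ 1 - e3),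
      mul_nonneg (by linarith : (0:ℝ) ≤ e3) hS20]
  rw [hratio l hl]
  have hub : Hu l / Hv l ≤ 1 + 2*e3 := by
    rw [div_le_iff₀ hHvpos]; linarith
  have hlb : 1 - 2*e3 ≤ Hu l / Hv l := by
    rw [le_div_iff₀ hHvpos]; linarith
  have : |Hu l / Hv l - 1| ≤ 2*e3 := abs_le.mpr ⟨by linarith, by linarith⟩
  calc dist (Hu l / Hv l) 1 = |Hu l / Hv l - 1| := Real.dist_eq _ _
    _ ≤ 2*e3 := this
    _ < ε := by linarith

lemma div_sum_tendsto_atTop (f : ℕ → ℝ≥0∞) (hf : ∀ k, f k ≠ ⊤) (htop : ∑' k, f k = ⊤)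
    (d : ℝ) (hd : 0 < d) :
    Tendsto (fun n => ∑ k ∈ Finset.range n, (f k).toReal / d) atTop atTop := by
  rw [tendsto_atTop]
  intro M
  have h1 : Tendsto (fun n => ∑ k ∈ Finset.range n, f k) atTop (𝓝 ⊤) :=
    htop ▸ ENNReal.tendsto_nat_tsum f
  have h2 : ∀ᶠ n in atTop,
      ENNReal.ofReal (max M 0 * d) < ∑ k ∈ Finset.range n, f k :=
    h1.eventually_const_lt ofReal_lt_top
  filter_upwards [h2] with n hn
  have hS : (∑ k ∈ Finset.range n, f k) ≠ ⊤ :=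
    (ENNReal.sum_lt_top.mpr fun k _ => (hf k).lt_top).ne
  have h3 : max M 0 * d < (∑ k ∈ Finset.range n, f k).toReal :=
    (ENNReal.ofReal_lt_iff_lt_toReal (by positivity) hS).mp hn
  have h4 : (∑ k ∈ Finset.range n, f k).toReal = ∑ k ∈ Finset.range n, (f k).toReal :=
    ENNReal.toReal_sum fun k _ => hf k
  rw [← Finset.sum_div]
  rw [h4] at h3
  have : max M 0 ≤ (∑ k ∈ Finset.range n, (f k).toReal) / d := by
    rw [le_div_iff₀ hd]; exact h3.le
  exact le_trans (le_max_left _ _) this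

lemma bounded_conv {X : Type*} [MeasurableSpace X] (ν : Measure X)
    (g : ℕ → X → ℝ≥0∞) (hg : ∀ n, Measurable (g n)) (c : ℝ) (hc : 0 < c)
    (hν : ν Set.univ = ENNReal.ofReal c) (M : ℝ≥0∞) (hM : M ≠ ⊤)
    (hbound : ∀ᶠ n in atTop, ∀ᵐ x ∂ν, g n x ≤ M)
    (hmeas : ∀ ε : ℝ, 0 < ε →
      Tendsto (fun n => ν {x | ε ≤ |(g n x).toReal - c|}) atTop (𝓝 0)) :
    Tendsto (fun n => (∫⁻ x, g n x ∂ν).toReal) atTop (𝓝 (c * c)) := by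
  have hνfin : ν Set.univ ≠ ⊤ := by rw [hν]; exact ofReal_ne_top
  have hνc : (ν Set.univ).toReal = c := by rw [hν, toReal_ofReal hc.le]
  rw [Metric.tendsto_nhds]
  intro ε0 hε0
  set Mr : ℝ := M.toReal with hMr
  have hMr0 : 0 ≤ Mr := toReal_nonneg
  set ε' : ℝ := min (c/2) (ε0 / (4*(c+1))) with hε'def
  have hε'pos : 0 < ε' := lt_min (by linarith) (by positivity)
  have hε'c : ε' ≤ c/2 := min_le_left _ _
  have hε'ε : ε' ≤ ε0 / (4*(c+1)) := min_le_right _ _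
  set δ : ℝ := ε0 / (4*(Mr + c + 1)) with hδdef
  have hδpos : 0 < δ := by positivity
  set bad : ℕ → Set X := fun n => {x | ε' ≤ |(g n x).toReal - c|} with hbad
  have hbadmeas : ∀ n, MeasurableSet (bad n) := by
    intro n
    exact measurableSet_le measurable_const (((hg n).ennreal_toReal.sub measurable_const).abs)
  have hβ : Tendsto (fun n => (ν (bad n)).toReal) atTop (𝓝 0) := by
    have := (hmeas ε' hε'pos)
    have hcont : ContinuousAt ENNReal.toReal 0 := ENNReal.continuousAt_toReal (by simp)
    have h := hcont.tendsto.comp this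
    rw [ENNReal.toReal_zero] at h
    exact h
  have hβfin : ∀ n, ν (bad n) ≠ ⊤ := fun n => (lt_of_le_of_lt (measure_mono (Set.subset_univ _))
    (lt_top_iff_ne_top.mpr hνfin)).ne
  -- facts on points not in bad n
  have hgood : ∀ n x, x ∉ bad n → g n x ≠ ⊤ ∧
      ENNReal.ofReal (c - ε') ≤ g n x ∧ g n x ≤ ENNReal.ofReal (c + ε') := by
    intro n x hx
    simp only [hbad, Set.mem_setOf_eq, not_le] at hx
    have hne : g n x ≠ ⊤ := by
      intro h
      rw [h] at hx
      simp only [ENNReal.toReal_top, zero_sub, abs_neg, abs_of_nonneg hc.le] at hx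
      linarith
    have habs := abs_lt.mp hx
    refine ⟨hne, ?_, ?_⟩
    · rw [← ENNReal.ofReal_toReal hne]
      exact ENNReal.ofReal_le_ofReal (by linarith)
    · rw [← ENNReal.ofReal_toReal hne]
      exact ENNReal.ofReal_le_ofReal (by linarith)
  filter_upwards [hbound, hβ.eventually_lt_const hδpos] with n hbnd hβn
  have hβ0 : 0 ≤ (ν (bad n)).toReal := toReal_nonneg
  set β : ℝ := (ν (bad n)).toReal with hβdef
  -- upper bound for the integral
  have hup : ∫⁻ x, g n x ∂ν ≤ M * ν (bad n) + ENNReal.ofReal (c + ε') * ν Set.univ := by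
    have hle : ∀ᵐ x ∂ν, g n x ≤
        (bad n).indicator (fun _ => M) x + ENNReal.ofReal (c + ε') := by
      filter_upwards [hbnd] with x hx
      by_cases hxb : x ∈ bad n
      · rw [Set.indicator_of_mem hxb]
        exact le_trans hx le_self_add
      · rw [Set.indicator_of_notMem hxb, zero_add]
        exact (hgood n x hxb).2.2
    calc ∫⁻ x, g n x ∂ν
        ≤ ∫⁻ x, ((bad n).indicator (fun _ => M) x + ENNReal.ofReal (c + ε')) ∂ν :=
          lintegral_mono_ae hle
      _ = M * ν (bad n) + ENNReal.ofReal (c + ε') * ν Set.univ := by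
          rw [lintegral_add_right _ measurable_const, lintegral_indicator_const (hbadmeas n),
            lintegral_const]
  have hupfin : M * ν (bad n) + ENNReal.ofReal (c + ε') * ν Set.univ ≠ ⊤ := by
    apply ENNReal.add_ne_top.mpr
    exact ⟨ENNReal.mul_ne_top hM (hβfin n), ENNReal.mul_ne_top ofReal_ne_top hνfin⟩
  have hfin : ∫⁻ x, g n x ∂ν ≠ ⊤ := (lt_of_le_of_lt hup (lt_top_iff_ne_top.mpr hupfin)).ne
  -- lower bound
  have hlow : ENNReal.ofReal (c - ε') * ν ((bad n)ᶜ) ≤ ∫⁻ x, g n x ∂ν := by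
    have hle : ∀ x, ((bad n)ᶜ).indicator (fun _ => ENNReal.ofReal (c - ε')) x ≤ g n x := by
      intro x
      by_cases hxb : x ∈ (bad n)ᶜ
      · rw [Set.indicator_of_mem hxb]
        exact (hgood n x hxb).2.1
      · rw [Set.indicator_of_notMem hxb]
        exact zero_le
    calc ENNReal.ofReal (c - ε') * ν ((bad n)ᶜ)
        = ∫⁻ x, ((bad n)ᶜ).indicator (fun _ => ENNReal.ofReal (c - ε')) x ∂ν :=
          (lintegral_indicator_const (hbadmeas n).compl _).symm
      _ ≤ ∫⁻ x, g n x ∂ν := lintegral_mono hle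
  -- convert to real bounds
  have hcompl : (ν ((bad n)ᶜ)).toReal = c - β := by
    rw [measure_compl (hbadmeas n) (hβfin n), ENNReal.toReal_sub_of_le
      (measure_mono (Set.subset_univ _)) hνfin, hνc]
  have hupr : (∫⁻ x, g n x ∂ν).toReal ≤ Mr * β + (c + ε') * c := by
    have := ENNReal.toReal_mono hupfin hup
    rwa [ENNReal.toReal_add (ENNReal.mul_ne_top hM (hβfin n))
      (ENNReal.mul_ne_top ofReal_ne_top hνfin), ENNReal.toReal_mul, ENNReal.toReal_mul,
      toReal_ofReal (by linarith : (0:ℝ) ≤ c + ε'), hνc] at this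
  have hlowr : (c - ε') * (c - β) ≤ (∫⁻ x, g n x ∂ν).toReal := by
    have := ENNReal.toReal_mono hfin hlow
    rwa [ENNReal.toReal_mul, toReal_ofReal (by linarith : (0:ℝ) ≤ c - ε'), hcompl] at this
  -- numeric conclusion
  rw [Real.dist_eq, abs_lt]
  have hβν : β ≤ c := by rw [← hνc]; exact ENNReal.toReal_mono hνfin (measure_mono (Set.subset_univ _))
  have key1 : Mr * β ≤ Mr * δ := mul_le_mul_of_nonneg_left hβn.le hMr0
  have key2 : c * β ≤ c * δ := mul_le_mul_of_nonneg_left hβn.le hc.le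
  have e1 : ε' * c ≤ ε0 / 4 := by
    have h := mul_le_mul_of_nonneg_right hε'ε hc.le
    have h2 : ε0 / (4*(c+1)) * c ≤ ε0 / 4 := by
      rw [div_mul_eq_mul_div, div_le_div_iff₀ (by positivity) (by norm_num)]
      nlinarith
    linarith
  have e2 : Mr * δ ≤ ε0 / 4 := by
    rw [hδdef, mul_div_assoc']
    rw [div_le_div_iff₀ (by positivity) (by norm_num)]
    nlinarith
  have e3 : c * δ ≤ ε0 / 4 := by
    rw [hδdef, mul_div_assoc']
    rw [div_le_div_iff₀ (by positivity) (by norm_num)]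
    nlinarith
  have hexp : (c - ε') * (c - β) = c*c - c*β - ε'*c + ε'*β := by ring
  have hexp2 : (c + ε') * c = c*c + ε'*c := by ring
  have h5 : c*c - c*β - ε'*c + ε'*β ≤ (∫⁻ x, g n x ∂ν).toReal := hexp ▸ hlowr
  have h6 : (∫⁻ x, g n x ∂ν).toReal ≤ Mr * β + (c*c + ε'*c) := hexp2 ▸ hupr
  constructor
  · linarith [mul_nonneg hε'pos.le hβ0, key2, e3, e1]
  · linarith [key1, e2, e1]

end Aux

/-- If `A` is a limited set for a weakly pointwise dual ergodic `T` with return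
sequence `a_n`, then `a_n ∼ a_n(A) = ∑_{k<n} m(A ∩ T^{−k}A)/m(A)²`, and
consequently `u_A(λ) ∼ u_B(λ)` as `λ ↓ 0` for every `B ⊆ A` of positive finite
measure. -/
theorem stmt16 {X : Type*} [MeasurableSpace X] (μ : Measure X) [SigmaFinite μ]
    (T : X → X) (hc : Conservative T μ) (herg : Ergodic T μ)
    (Phat : (X → ℝ≥0∞) → (X → ℝ≥0∞))
    (hPmeas : ∀ f, Measurable f → Measurable (Phat f))
    (hPdual : ∀ f g : X → ℝ≥0∞, Measurable f → Measurable g →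
      ∫⁻ x, f (T x) * g x ∂μ = ∫⁻ x, f x * Phat g x ∂μ)
    (a : ℕ → ℝ) (ha : ∀ n, 0 < a n)
    -- weak pointwise dual ergodicity with constants `a n`
    (hwpde_meas : ∀ f : X → ℝ≥0∞, Measurable f →
      0 < ∫⁻ y, f y ∂μ → ∫⁻ y, f y ∂μ ≠ ⊤ →
      ∀ F : Set X, MeasurableSet F → μ F ≠ ⊤ → ∀ ε : ℝ, 0 < ε →
        Tendsto (fun n : ℕ => (μ.restrict F)
          {x | ε ≤ |(∑ k ∈ Finset.range n, (Phat^[k]) f x).toReal / a n -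
                (∫⁻ y, f y ∂μ).toReal|}) atTop (𝓝 0))
    (hwpde_ae : ∀ f : X → ℝ≥0∞, Measurable f →
      0 < ∫⁻ y, f y ∂μ → ∫⁻ y, f y ∂μ ≠ ⊤ →
      ∀ᵐ x ∂μ, Filter.limsup
          (fun n : ℕ => (∑ k ∈ Finset.range n, (Phat^[k]) f x).toReal / a n) atTop =
        (∫⁻ y, f y ∂μ).toReal)
    -- `A` is a limited set
    (A : Set X) (hA : MeasurableSet A) (h0 : 0 < μ A) (hfin : μ A ≠ ⊤)
    (hlim_meas : ∀ ε : ℝ, 0 < ε →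
      Tendsto (fun n : ℕ => (μ.restrict A)
        {x | ε ≤ |(∑ k ∈ Finset.range n,
            (Phat^[k]) (A.indicator (1 : X → ℝ≥0∞)) x).toReal / a n - (μ A).toReal|})
        atTop (𝓝 0))
    (hlim_sup : Tendsto (fun n : ℕ =>
        essSup (fun x => (∑ k ∈ Finset.range n,
            (Phat^[k]) (A.indicator (1 : X → ℝ≥0∞)) x) / ENNReal.ofReal (a n))
          (μ.restrict A)) atTop (𝓝 (μ A))) :
    Tendsto (fun n : ℕ =>
        a n / (∑ k ∈ Finset.range n, (μ (A ∩ T^[k] ⁻¹' A)).toReal / (μ A).toReal ^ 2))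
      atTop (𝓝 1) ∧
    ∀ B : Set X, B ⊆ A → MeasurableSet B → 0 < μ B →
      Tendsto (fun l : ℝ =>
          (∑' n : ℕ, Real.exp (-l * n) * ((μ (A ∩ T^[n] ⁻¹' A)).toReal / (μ A).toReal ^ 2)) /
            (∑' n : ℕ, Real.exp (-l * n) * ((μ (B ∩ T^[n] ⁻¹' B)).toReal / (μ B).toReal ^ 2)))
        (𝓝[>] 0) (𝓝 1) := by
  have hTmeas : Measurable T := hc.measurable
  -- iterates of Phat are measurable
  have hiter_meas : ∀ (f : X → ℝ≥0∞), Measurable f → ∀ k, Measurable ((Phat^[k]) f) := by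
    intro f hf k
    induction k with
    | zero => simpa using hf
    | succ n ih => rw [Function.iterate_succ_apply']; exact hPmeas _ ih
  -- iterated duality
  have hdual_iter : ∀ (g : X → ℝ≥0∞), Measurable g → ∀ k, ∀ (h : X → ℝ≥0∞), Measurable h →
      ∫⁻ x, g (T^[k] x) * h x ∂μ = ∫⁻ x, g x * (Phat^[k]) h x ∂μ := by
    intro g hgm k
    induction k with
    | zero => intro h hh; simp
    | succ n ih =>
      intro h hh
      calc ∫⁻ x, g (T^[n+1] x) * h x ∂μ
          = ∫⁻ x, (fun y => g (T^[n] y)) (T x) * h x ∂μ := by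
            refine lintegral_congr fun x => ?_
            rw [Function.iterate_succ_apply]
        _ = ∫⁻ x, g (T^[n] x) * Phat h x ∂μ :=
            hPdual _ h (hgm.comp (hTmeas.iterate n)) hh
        _ = ∫⁻ x, g x * (Phat^[n]) (Phat h) x ∂μ := ih (Phat h) (hPmeas h hh)
        _ = ∫⁻ x, g x * (Phat^[n+1]) h x ∂μ := by rw [Function.iterate_succ_apply]
  -- key correlation identity
  have hkey : ∀ (B : Set X), MeasurableSet B → ∀ k,
      μ (B ∩ T^[k] ⁻¹' B) = ∫⁻ x in B, (Phat^[k]) (B.indicator 1) x ∂μ := by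
    intro B hB k
    have hBmeas : Measurable (B.indicator (1 : X → ℝ≥0∞)) := measurable_one.indicator hB
    have h1 : ∀ x, B.indicator (1 : X → ℝ≥0∞) (T^[k] x) * B.indicator 1 x
        = (B ∩ T^[k] ⁻¹' B).indicator 1 x := by
      intro x
      by_cases hx1 : x ∈ B <;> by_cases hx2 : T^[k] x ∈ B <;>
        simp [Set.indicator_apply, hx1, hx2, Set.mem_inter_iff, Set.mem_preimage]
    have h2 : ∀ x, B.indicator (1 : X → ℝ≥0∞) x * (Phat^[k]) (B.indicator 1) x
        = B.indicator (fun y => (Phat^[k]) (B.indicator 1) y) x := by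
      intro x
      by_cases hx : x ∈ B <;> simp [Set.indicator_apply, hx]
    calc μ (B ∩ T^[k] ⁻¹' B)
        = ∫⁻ x, (B ∩ T^[k] ⁻¹' B).indicator 1 x ∂μ :=
          (lintegral_indicator_one (hB.inter ((hTmeas.iterate k) hB))).symm
      _ = ∫⁻ x, B.indicator (1 : X → ℝ≥0∞) (T^[k] x) * B.indicator 1 x ∂μ :=
          lintegral_congr fun x => (h1 x).symm
      _ = ∫⁻ x, B.indicator (1 : X → ℝ≥0∞) x * (Phat^[k]) (B.indicator 1) x ∂μ :=
          hdual_iter _ hBmeas k _ hBmeas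
      _ = ∫⁻ x, B.indicator (fun y => (Phat^[k]) (B.indicator 1) y) x ∂μ :=
          lintegral_congr h2
      _ = ∫⁻ x in B, (Phat^[k]) (B.indicator 1) x ∂μ := lintegral_indicator hB _
  -- a.e. monotonicity of Phat
  have hmono : ∀ (g h : X → ℝ≥0∞), Measurable g → Measurable h → g ≤ᵐ[μ] h →
      Phat g ≤ᵐ[μ] Phat h := by
    intro g h hg hh hle
    apply ae_le_of_forall_setLIntegral_le_of_sigmaFinite (hPmeas g hg)
    intro s hs hsfin
    have hind : Measurable (s.indicator (1 : X → ℝ≥0∞)) := measurable_one.indicator hs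
    have e : ∀ (f : X → ℝ≥0∞), ∫⁻ x in s, f x ∂μ = ∫⁻ x, s.indicator (1 : X → ℝ≥0∞) x * f x ∂μ := by
      intro f
      rw [← lintegral_indicator hs]
      refine lintegral_congr fun x => ?_
      by_cases hx : x ∈ s <;> simp [Set.indicator_apply, hx]
    rw [e (Phat g), e (Phat h), ← hPdual _ g hind hg, ← hPdual _ h hind hh]
    refine lintegral_mono_ae ?_
    filter_upwards [hle] with x hx
    exact mul_le_mul_right hx _
  -- iterated monotonicity for subsets of A
  have hSmono : ∀ (B : Set X), B ⊆ A → MeasurableSet B → ∀ k,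
      (Phat^[k]) (B.indicator 1) ≤ᵐ[μ] (Phat^[k]) (A.indicator 1) := by
    intro B hBA hB k
    induction k with
    | zero =>
      refine Eventually.of_forall fun x => ?_
      simp only [Function.iterate_zero, id_eq]
      exact Set.indicator_le_indicator_of_subset hBA (fun _ => zero_le) x
    | succ n ih =>
      have := hmono _ _ (hiter_meas _ (measurable_one.indicator hB) n)
        (hiter_meas _ (measurable_one.indicator hA) n) ih
      filter_upwards [this] with x hx
      rw [Function.iterate_succ_apply', Function.iterate_succ_apply']
      exact hx
  -- the central convergence result, for any positive-measure subset of A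
  have main : ∀ B : Set X, B ⊆ A → MeasurableSet B → 0 < μ B →
      Tendsto (fun n =>
        (∑ k ∈ Finset.range n, (μ (B ∩ T^[k] ⁻¹' B)).toReal / (μ B).toReal ^ 2) / a n)
      atTop (𝓝 1) := by
    intro B hBA hB h0B
    have hfinB : μ B ≠ ⊤ := (lt_of_le_of_lt (measure_mono hBA) hfin.lt_top).ne
    set c : ℝ := (μ B).toReal with hcdef
    have hcpos : 0 < c := ENNReal.toReal_pos h0B.ne' hfinB
    set fB : X → ℝ≥0∞ := B.indicator 1 with hfB
    have hfBmeas : Measurable fB := measurable_one.indicator hB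
    have hintB : ∫⁻ y, fB y ∂μ = μ B := lintegral_indicator_one hB
    set S : ℕ → X → ℝ≥0∞ := fun n x => ∑ k ∈ Finset.range n, (Phat^[k]) fB x with hS
    have hSmeas : ∀ n, Measurable (S n) :=
      fun n => Finset.measurable_sum _ fun k _ => hiter_meas _ hfBmeas k
    set SA : ℕ → X → ℝ≥0∞ :=
      fun n x => ∑ k ∈ Finset.range n, (Phat^[k]) (A.indicator 1) x with hSA
    set g : ℕ → X → ℝ≥0∞ := fun n x => S n x / ENNReal.ofReal (a n) with hg
    have hgmeas : ∀ n, Measurable (g n) := fun n => (hSmeas n).div measurable_const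
    set ν : Measure X := μ.restrict B with hν
    have hνuniv : ν Set.univ = ENNReal.ofReal c := by
      rw [hν, Measure.restrict_apply_univ, hcdef, ofReal_toReal hfinB]
    set M : ℝ≥0∞ := μ A + 1 with hM
    have hMne : M ≠ ⊤ := by
      rw [hM]; exact ENNReal.add_ne_top.mpr ⟨hfin, one_ne_top⟩
    -- eventual uniform bound
    have hbound : ∀ᶠ n in atTop, ∀ᵐ x ∂ν, g n x ≤ M := by
      have hevss : ∀ᶠ n in atTop,
          essSup (fun x => SA n x / ENNReal.ofReal (a n)) (μ.restrict A) < M :=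
        hlim_sup.eventually_lt_const (ENNReal.lt_add_right hfin one_ne_zero)
      filter_upwards [hevss] with n hss
      have h1 : ∀ᵐ x ∂μ, S n x ≤ SA n x := by
        have : ∀ k ∈ Finset.range n, (Phat^[k]) fB ≤ᵐ[μ] (Phat^[k]) (A.indicator 1) :=
          fun k _ => hSmono B hBA hB k
        have hall : ∀ᵐ x ∂μ, ∀ k ∈ Finset.range n,
            (Phat^[k]) fB x ≤ (Phat^[k]) (A.indicator 1) x :=
          (ae_ball_iff (Finset.range n).countable_toSet).mpr (fun k hk => this k hk)
        filter_upwards [hall] with x hx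
        exact Finset.sum_le_sum hx
      have h2 : ∀ᵐ x ∂(μ.restrict A), SA n x / ENNReal.ofReal (a n) ≤ M :=
        (ENNReal.ae_le_essSup (fun x => SA n x / ENNReal.ofReal (a n))).mono
          fun x hx => le_trans hx hss.le
      have h2' : ∀ᵐ x ∂ν, SA n x / ENNReal.ofReal (a n) ≤ M :=
        ((ae_mono (Measure.restrict_mono hBA le_rfl)) h2 : _)
      filter_upwards [ae_restrict_of_ae h1, h2'] with x hx1 hx2
      exact le_trans (ENNReal.div_le_div_right hx1 _) hx2
    -- convergence in measure hypothesis
    have hmeasg : ∀ ε : ℝ, 0 < ε →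
        Tendsto (fun n => ν {x | ε ≤ |(g n x).toReal - c|}) atTop (𝓝 0) := by
      intro ε hε
      have h0B' : 0 < ∫⁻ y, fB y ∂μ := by rw [hintB]; exact h0B
      have hfinB' : ∫⁻ y, fB y ∂μ ≠ ⊤ := by rw [hintB]; exact hfinB
      have := hwpde_meas fB hfBmeas h0B' hfinB' B hB hfinB ε hε
      have hseteq : ∀ n, {x | ε ≤ |(g n x).toReal - c|}
          = {x | ε ≤ |(∑ k ∈ Finset.range n, (Phat^[k]) fB x).toReal / a n -
              (∫⁻ y, fB y ∂μ).toReal|} := by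
        intro n
        ext x
        simp only [Set.mem_setOf_eq, hg, hS, ENNReal.toReal_div,
          toReal_ofReal (ha n).le, hintB, hcdef]
      simpa only [hseteq] using this
    have hconv := bounded_conv ν g hgmeas c hcpos hνuniv M hMne hbound hmeasg
    -- identify the integral
    have hident : ∀ n, (∫⁻ x, g n x ∂ν).toReal
        = (∑ k ∈ Finset.range n, (μ (B ∩ T^[k] ⁻¹' B)).toReal) / a n := by
      intro n
      have h1 : ∫⁻ x, g n x ∂ν = (∫⁻ x, S n x ∂ν) * (ENNReal.ofReal (a n))⁻¹ := by
        rw [← lintegral_mul_const _ (hSmeas n)]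
        exact lintegral_congr fun x => div_eq_mul_inv _ _
      have h2 : ∫⁻ x, S n x ∂ν = ∑ k ∈ Finset.range n, μ (B ∩ T^[k] ⁻¹' B) := by
        rw [hS]
        rw [lintegral_finset_sum _ (fun k _ => hiter_meas _ hfBmeas k)]
        exact Finset.sum_congr rfl fun k _ => (hkey B hB k).symm
      rw [h1, h2, ENNReal.toReal_mul, ENNReal.toReal_inv, toReal_ofReal (ha n).le,
        ENNReal.toReal_sum (fun k _ => (lt_of_le_of_lt
          (measure_mono Set.inter_subset_left) hfinB.lt_top).ne), div_eq_mul_inv]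
    rw [show (fun n => (∫⁻ x, g n x ∂ν).toReal) =
        (fun n => (∑ k ∈ Finset.range n, (μ (B ∩ T^[k] ⁻¹' B)).toReal) / a n) from
        funext hident] at hconv
    have := hconv.div_const (c ^ 2)
    have hcc : c * c / c ^ 2 = 1 := by
      rw [pow_two]; field_simp
    rw [hcc] at this
    refine this.congr fun n => ?_
    rw [← Finset.sum_div, div_div, div_div, mul_comm (a n) (c ^ 2)]
  -- divergence of the correlation sums
  have hdiv : ∀ B : Set X, MeasurableSet B → 0 < μ B → μ B ≠ ⊤ →
      Tendsto (fun n => ∑ k ∈ Finset.range n,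
        (μ (B ∩ T^[k] ⁻¹' B)).toReal / (μ B).toReal ^ 2) atTop atTop := by
    intro B hB h0B hfinB
    have hcB : 0 < (μ B).toReal := ENNReal.toReal_pos h0B.ne' hfinB
    refine div_sum_tendsto_atTop _
      (fun k => (lt_of_le_of_lt (measure_mono Set.inter_subset_left) hfinB.lt_top).ne)
      ?_ _ (by positivity)
    have hae := hc.ae_mem_imp_frequently_image_mem hB.nullMeasurableSet
    have h2 : ∀ᵐ x ∂μ.restrict B,
        (∑' n : ℕ, B.indicator (1 : X → ℝ≥0∞) (T^[n] x)) = ⊤ := by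
      rw [ae_restrict_iff' hB]
      filter_upwards [hae] with x hx hxB
      by_contra h
      have ht := ENNReal.tendsto_atTop_zero_of_tsum_ne_top h
      have hev : ∀ᶠ n in atTop, B.indicator (1 : X → ℝ≥0∞) (T^[n] x) < 1 :=
        ht.eventually_lt_const zero_lt_one
      obtain ⟨n, hn1, hn2⟩ := ((hx hxB).and_eventually hev).exists
      rw [Set.indicator_of_mem hn1] at hn2
      simp at hn2
    have h3 : ∫⁻ x in B, (∑' n : ℕ, B.indicator (1 : X → ℝ≥0∞) (T^[n] x)) ∂μ = ⊤ := by
      rw [lintegral_congr_ae h2, setLIntegral_const, ENNReal.top_mul h0B.ne']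
    have h4 : ∫⁻ x in B, (∑' n : ℕ, B.indicator (1 : X → ℝ≥0∞) (T^[n] x)) ∂μ
        = ∑' n : ℕ, μ (B ∩ T^[n] ⁻¹' B) := by
      rw [lintegral_tsum (f := fun (n : ℕ) (x : X) => B.indicator (1 : X → ℝ≥0∞) (T^[n] x))
        (fun n => ((measurable_one.indicator hB).comp (hTmeas.iterate n)).aemeasurable)]
      refine tsum_congr fun n => ?_
      have hptw : ∀ x, B.indicator (1 : X → ℝ≥0∞) (T^[n] x)
          = (T^[n] ⁻¹' B).indicator 1 x := by
        intro x
        by_cases hx : T^[n] x ∈ B <;> simp [Set.indicator_apply, hx, Set.mem_preimage]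
      calc ∫⁻ x in B, B.indicator (1 : X → ℝ≥0∞) (T^[n] x) ∂μ
          = ∫⁻ x in B, (T^[n] ⁻¹' B).indicator 1 x ∂μ := lintegral_congr hptw
        _ = (μ.restrict B) (T^[n] ⁻¹' B) := lintegral_indicator_one ((hTmeas.iterate n) hB)
        _ = μ (B ∩ T^[n] ⁻¹' B) := by
            rw [Measure.restrict_apply ((hTmeas.iterate n) hB), Set.inter_comm]
    rw [← h4]
    exact h3
  have hUA := main A subset_rfl hA h0
  constructor
  · have h1 := hUA.inv₀ one_ne_zero
    rw [inv_one] at h1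
    refine h1.congr fun n => ?_
    rw [inv_div]
  · intro B hBA hB h0B
    have hfinB : μ B ≠ ⊤ := (lt_of_le_of_lt (measure_mono hBA) hfin.lt_top).ne
    have hUB := main B hBA hB h0B
    have hcA : 0 < (μ A).toReal := ENNReal.toReal_pos h0.ne' hfin
    have hcB : 0 < (μ B).toReal := ENNReal.toReal_pos h0B.ne' hfinB
    refine abel_main (fun n => (μ (A ∩ T^[n] ⁻¹' A)).toReal / (μ A).toReal ^ 2)
      (fun n => (μ (B ∩ T^[n] ⁻¹' B)).toReal / (μ B).toReal ^ 2)
      (max ((μ A).toReal / (μ A).toReal ^ 2) ((μ B).toReal / (μ B).toReal ^ 2))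
      (fun n => by positivity) (fun n => by positivity) ?_ ?_ ?_ ?_
    · intro n
      refine le_trans ?_ (le_max_left _ _)
      gcongr
      exact Set.inter_subset_left
    · intro n
      refine le_trans ?_ (le_max_right _ _)
      gcongr
      exact Set.inter_subset_left
    · have hq := hUA.div hUB one_ne_zero
      have : (1:ℝ)/1 = 1 := by norm_num
      rw [this] at hq
      refine hq.congr fun n => ?_
      exact div_div_div_cancel_right₀ (ha n).ne' _ _
    · exact hdiv B hB h0B hfinB
end

section
/- If (a(n)) is regularly varying of positive index γ and (1/a(n)) · n τ(δ₀ a(n)) → 0 for one δ₀ > 0, where τ(n) ↓ 0, then the same holds for all δ > 0; i.e. regular variation upgrades adaptedness at one scale to adaptedness at all scales. -/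
open Filter Topology

/-- If `a` is regularly varying of index `γ > 0` and `n τ(δ₀ a(n))/a(n) → 0` for one
`δ₀ > 0`, where `τ(n) ↓ 0`, then `n τ(δ a(n))/a(n) → 0` for every `δ > 0`. -/
theorem stmt18 (γ : ℝ) (hγ : 0 < γ)
    (a : ℕ → ℕ) (hapos : ∀ n, 0 < a n) (hamono : Monotone a)
    (hareg : ∀ l : ℝ, 0 < l →
      Tendsto (fun n : ℕ => (a ⌊l * n⌋₊ : ℝ) / (a n : ℝ)) atTop (𝓝 (l ^ γ)))
    (τ : ℕ → ℝ) (hτ0 : ∀ n, 0 ≤ τ n) (hτanti : Antitone τ)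
    (hτlim : Tendsto τ atTop (𝓝 0))
    (δ₀ : ℝ) (hδ₀ : 0 < δ₀)
    (h0 : Tendsto (fun n : ℕ => (n : ℝ) * τ ⌊δ₀ * a n⌋₊ / (a n : ℝ)) atTop (𝓝 0)) :
    ∀ δ : ℝ, 0 < δ →
      Tendsto (fun n : ℕ => (n : ℝ) * τ ⌊δ * a n⌋₊ / (a n : ℝ)) atTop (𝓝 0) := by
  intro δ hδ
  have hapos' : ∀ n, (0:ℝ) < (a n : ℝ) := fun n => by exact_mod_cast hapos n
  set l : ℝ := max 2 ((δ₀/δ + 1) ^ (1/γ)) with hl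
  have hl2 : (2:ℝ) ≤ l := le_max_left _ _
  have hl1 : (1:ℝ) < l := lt_of_lt_of_le one_lt_two hl2
  have hl0 : (0:ℝ) < l := by linarith
  have hratio : δ₀/δ < l ^ γ := by
    have h1 : (δ₀/δ + 1) ^ (1/γ) ≤ l := le_max_right _ _
    have hb : (0:ℝ) ≤ δ₀/δ + 1 := by positivity
    have h2 : ((δ₀/δ + 1) ^ (1/γ)) ^ γ ≤ l ^ γ :=
      Real.rpow_le_rpow (Real.rpow_nonneg hb _) h1 hγ.le
    rw [← Real.rpow_mul hb, one_div, inv_mul_cancel₀ hγ.ne', Real.rpow_one] at h2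
    have : δ₀/δ < δ₀/δ + 1 := by linarith
    calc δ₀/δ < δ₀/δ + 1 := this
      _ ≤ _ := by simpa using h2
  -- eventually the ratio exceeds δ₀/δ
  have hev : ∀ᶠ n : ℕ in atTop, δ₀/δ < (a ⌊l * n⌋₊ : ℝ) / (a n : ℝ) :=
    (hareg l hl0).eventually (eventually_gt_nhds hratio)
  obtain ⟨N, hN⟩ := eventually_atTop.mp hev
  -- the map m ↦ ⌊m/l⌋ tends to atTop
  have hcomp : Tendsto (fun m : ℕ => ⌊(m:ℝ)/l⌋₊) atTop atTop := by
    apply tendsto_nat_floor_atTop.comp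
    exact (tendsto_natCast_atTop_atTop).atTop_div_const hl0
  -- upper bound function tends to 0
  have hupper : Tendsto (fun m : ℕ =>
      2*l * ((⌊(m:ℝ)/l⌋₊ : ℝ) * τ ⌊δ₀ * a ⌊(m:ℝ)/l⌋₊⌋₊ / (a ⌊(m:ℝ)/l⌋₊ : ℝ)))
      atTop (𝓝 0) := by
    have := (h0.comp hcomp).const_mul (2*l)
    simpa using this
  apply tendsto_of_tendsto_of_tendsto_of_le_of_le' tendsto_const_nhds hupper
  · filter_upwards with m
    have := hapos' m
    have := hτ0 ⌊δ * a m⌋₊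
    positivity
  · filter_upwards [hcomp.eventually (eventually_ge_atTop (max N 1))] with m hm
    set n : ℕ := ⌊(m:ℝ)/l⌋₊ with hn
    have hn1 : 1 ≤ n := le_trans (le_max_right N 1) hm
    have hnN : N ≤ n := le_trans (le_max_left N 1) hm
    -- ⌊l n⌋ ≤ m
    have hnle : (n:ℝ) ≤ (m:ℝ)/l := Nat.floor_le (by positivity)
    have hlnm : l * (n:ℝ) ≤ (m:ℝ) := by
      rw [mul_comm]
      exact (le_div_iff₀ hl0).mp hnle
    have hfloorle : ⌊l * (n:ℝ)⌋₊ ≤ m := by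
      calc ⌊l * (n:ℝ)⌋₊ ≤ ⌊(m:ℝ)⌋₊ := Nat.floor_mono hlnm
        _ = m := Nat.floor_natCast m
    have hnm : n ≤ m := by
      have : (n:ℝ) ≤ l * (n:ℝ) := le_mul_of_one_le_left (by positivity) hl1.le
      exact_mod_cast le_trans (le_trans this hlnm) (le_refl _)
    -- key inequality from regular variation
    have hkey : δ₀ * (a n : ℝ) < δ * (a ⌊l * (n:ℝ)⌋₊ : ℝ) := by
      have h2 := hN n hnN
      rw [div_lt_div_iff₀ hδ (hapos' n)] at h2
      linarith
    have hτle : τ ⌊δ * (a m : ℝ)⌋₊ ≤ τ ⌊δ₀ * (a n : ℝ)⌋₊ := by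
      apply hτanti
      apply Nat.floor_mono
      have ham : (a ⌊l * (n:ℝ)⌋₊ : ℝ) ≤ (a m : ℝ) := by
        exact_mod_cast hamono hfloorle
      nlinarith [hkey]
    -- m ≤ 2 l n
    have hm2ln : (m:ℝ) ≤ 2 * l * n := by
      have h3 : (m:ℝ)/l < n + 1 := Nat.lt_floor_add_one _
      have h4 : (m:ℝ) < l * (n + 1) := by
        rw [div_lt_iff₀ hl0] at h3; linarith
      have h5 : (n:ℝ) + 1 ≤ 2 * n := by
        have : (1:ℝ) ≤ (n:ℝ) := by exact_mod_cast hn1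
        linarith
      nlinarith
    have hanm : (a n : ℝ) ≤ (a m : ℝ) := by exact_mod_cast hamono hnm
    calc (m:ℝ) * τ ⌊δ * a m⌋₊ / (a m : ℝ)
        ≤ (2 * l * n) * τ ⌊δ₀ * a n⌋₊ / (a n : ℝ) := by
          apply div_le_div₀ (by have := hτ0 ⌊δ₀ * (a n:ℝ)⌋₊; positivity)
          · exact mul_le_mul hm2ln hτle (hτ0 _) (by positivity)
          · exact hapos' n
          · exact hanm
      _ = 2*l * ((n : ℝ) * τ ⌊δ₀ * a n⌋₊ / (a n : ℝ)) := by ring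
end

section
/- Mittag-Leffler/stable duality: if γ ∈ (0,1], Y_γ > 0 a.s. and Z_γ = Y_γ^{−1/γ}, then for regularly varying a of index γ with asymptotic inverse b, and nonnegative random variables with S_n/a(n) → c·Y_γ in distribution (c > 0) together with the duality S_n ≤ j ⟺ φ_j ≥ n, one gets φ_n/b(n) → (1/(c Y_γ))^{1/γ} in distribution. -/
open MeasureTheory Filter Topology ENNReal

lemma polya_aux {F : ℕ → ℝ → ℝ} {G : ℝ → ℝ} (hmono : ∀ k, Monotone (F k))
    (hG : Continuous G) (hconv : ∀ t, Tendsto (fun k => F k t) atTop (𝓝 (G t)))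
    {s : ℕ → ℝ} {k : ℕ → ℕ} {l : ℝ} (hs : Tendsto s atTop (𝓝 l))
    (hk : Tendsto k atTop atTop) :
    Tendsto (fun n => F (k n) (s n)) atTop (𝓝 (G l)) := by
  rw [Metric.tendsto_nhds]
  intro ε hε
  obtain ⟨δ, hδ, hδ'⟩ := Metric.continuousAt_iff.mp (hG.continuousAt (x := l)) (ε/2) (by linarith)
  have hdm : dist (l - δ/2) l < δ := by rw [Real.dist_eq]; rw [abs_of_nonpos (by linarith)]; linarith
  have hdp : dist (l + δ/2) l < δ := by rw [Real.dist_eq]; rw [abs_of_nonneg (by linarith)]; linarith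
  have hGm : |G (l - δ/2) - G l| < ε/2 := by rw [← Real.dist_eq]; exact hδ' hdm
  have hGp : |G (l + δ/2) - G l| < ε/2 := by rw [← Real.dist_eq]; exact hδ' hdp
  have h1 : ∀ᶠ n in atTop, |F (k n) (l - δ/2) - G (l - δ/2)| < ε/2 := by
    have := (Metric.tendsto_nhds.mp ((hconv (l - δ/2)).comp hk)) (ε/2) (by linarith)
    simpa [Real.dist_eq, Function.comp] using this
  have h2 : ∀ᶠ n in atTop, |F (k n) (l + δ/2) - G (l + δ/2)| < ε/2 := by
    have := (Metric.tendsto_nhds.mp ((hconv (l + δ/2)).comp hk)) (ε/2) (by linarith)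
    simpa [Real.dist_eq, Function.comp] using this
  have h3 : ∀ᶠ n in atTop, |s n - l| < δ/2 := by
    have := (Metric.tendsto_nhds.mp hs) (δ/2) (by linarith)
    simpa [Real.dist_eq] using this
  filter_upwards [h1, h2, h3] with n e1 e2 e3
  have hm1 : F (k n) (l - δ/2) ≤ F (k n) (s n) := (hmono (k n)) (by rw [abs_lt] at e3; linarith)
  have hm2 : F (k n) (s n) ≤ F (k n) (l + δ/2) := (hmono (k n)) (by rw [abs_lt] at e3; linarith)
  rw [Real.dist_eq, abs_lt]
  rw [abs_lt] at e1 e2 hGm hGp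
  constructor <;> linarith

lemma noatom_aux {Ω : Type*} [MeasurableSpace Ω] (P : Measure Ω) [IsProbabilityMeasure P]
    (Y : Ω → ℝ) (hYmeas : Measurable Y)
    (hYcont : Continuous fun t : ℝ => (P {ω | Y ω ≤ t}).toReal) (s : ℝ) :
    P {ω | Y ω = s} = 0 := by
  have key : ∀ ε : ℝ, 0 < ε → (P {ω | Y ω = s}).toReal ≤
      (P {ω | Y ω ≤ s}).toReal - (P {ω | Y ω ≤ s - ε}).toReal := by
    intro ε hε
    have hdisj : Disjoint {ω | Y ω ≤ s - ε} {ω | Y ω = s} := by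
      rw [Set.disjoint_left]
      intro ω h1 h2
      simp only [Set.mem_setOf_eq] at h1 h2
      rw [h2] at h1; linarith
    have hms : MeasurableSet {ω | Y ω = s} := hYmeas (measurableSet_singleton s)
    have hunion : P {ω | Y ω ≤ s - ε} + P {ω | Y ω = s} ≤ P {ω | Y ω ≤ s} := by
      rw [← measure_union hdisj hms]
      apply measure_mono
      rintro ω (h | h) <;> simp only [Set.mem_setOf_eq] at h ⊢
      · linarith
      · exact h.le
    have := ENNReal.toReal_mono (measure_ne_top P _) hunion
    rw [ENNReal.toReal_add (measure_ne_top P _) (measure_ne_top P _)] at this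
    linarith
  have hlim : Tendsto (fun n : ℕ => (P {ω | Y ω ≤ s}).toReal -
      (P {ω | Y ω ≤ s - 1/(n+1)}).toReal) atTop (𝓝 0) := by
    have h1 : Tendsto (fun n : ℕ => s - 1/(n+1 : ℝ)) atTop (𝓝 s) := by
      have := tendsto_one_div_add_atTop_nhds_zero_nat (𝕜 := ℝ)
      simpa using tendsto_const_nhds.sub this
    have := (hYcont.tendsto s).comp h1
    have h2 : Tendsto (fun _ : ℕ => (P {ω | Y ω ≤ s}).toReal) atTop (𝓝 ((P {ω | Y ω ≤ s}).toReal)) := tendsto_const_nhds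
    simpa using h2.sub this
  have hle : (P {ω | Y ω = s}).toReal ≤ 0 := by
    exact ge_of_tendsto' hlim fun n => key (1/(n+1)) (by positivity)
  have : (P {ω | Y ω = s}).toReal = 0 := le_antisymm hle ENNReal.toReal_nonneg
  rwa [ENNReal.toReal_eq_zero_iff, or_iff_left (measure_ne_top P _)] at this

lemma keylim_aux (γ : ℝ) (a b : ℕ → ℕ) (hapos : ∀ n, 0 < a n)
    (hamono : Monotone a)
    (hareg : ∀ l : ℝ, 0 < l →
      Tendsto (fun n : ℕ => (a ⌊l * n⌋₊ : ℝ) / (a n : ℝ)) atTop (𝓝 (l ^ γ)))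
    (hab : Tendsto (fun n : ℕ => (a (b n) : ℝ) / (n : ℝ)) atTop (𝓝 1))
    (hγ0 : 0 < γ) {t : ℝ} (ht : 0 < t) :
    Tendsto (fun n : ℕ => (a (⌊t * b n⌋₊ + 1) : ℝ) / (n : ℝ)) atTop (𝓝 (t ^ γ)) := by
  -- b tends to infinity
  have habtop : Tendsto (fun n : ℕ => (a (b n) : ℝ)) atTop atTop := by
    have : Tendsto (fun n : ℕ => ((a (b n) : ℝ) / n) * n) atTop atTop :=
      hab.pos_mul_atTop one_pos tendsto_natCast_atTop_atTop
    apply this.congr'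
    filter_upwards [eventually_gt_atTop 0] with n hn
    field_simp
  have hbtop : Tendsto b atTop atTop := by
    rw [tendsto_atTop_atTop]
    intro M
    have := (habtop.eventually_gt_atTop (a M : ℝ)).and (eventually_ge_atTop 0)
    obtain ⟨N, hN⟩ := this.exists_forall_of_atTop
    refine ⟨N, fun n hn => ?_⟩
    by_contra hbn
    push_neg at hbn
    exact absurd (Nat.cast_le.mpr (hamono hbn.le)) (not_le.mpr (hN n hn).1)
  -- limit along floor (without +1)
  have lemA : ∀ l : ℝ, 0 < l →
      Tendsto (fun n : ℕ => (a ⌊l * b n⌋₊ : ℝ) / (n : ℝ)) atTop (𝓝 (l ^ γ)) := by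
    intro l hl
    have h1 : Tendsto (fun n : ℕ => (a ⌊l * (b n : ℝ)⌋₊ : ℝ) / (a (b n) : ℝ)) atTop
        (𝓝 (l ^ γ)) := (hareg l hl).comp hbtop
    have := h1.mul hab
    rw [mul_one] at this
    apply this.congr
    intro n
    rw [div_mul_div_comm, mul_comm ((a (b n) : ℝ)) ((n : ℝ))]
    exact mul_div_mul_right _ _ (by exact_mod_cast (hapos (b n)).ne')
  -- epsilon argument to absorb the +1
  rw [Metric.tendsto_nhds]
  intro ε hε
  obtain ⟨δ, hδ, hδ'⟩ := Metric.continuousAt_iff.mp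
    ((Real.continuousAt_rpow_const t γ (Or.inl ht.ne')) : ContinuousAt (fun u : ℝ => u ^ γ) t)
    (ε/2) (by linarith)
  set t' : ℝ := t + δ/2 with ht'def
  have ht' : t < t' := by simp [ht'def]; linarith
  have ht'γ : t' ^ γ < t ^ γ + ε/2 := by
    have : dist t' t < δ := by
      rw [Real.dist_eq, ht'def]
      rw [show t + δ/2 - t = δ/2 by ring, abs_of_nonneg (by linarith)]
      linarith
    have := hδ' this
    rw [Real.dist_eq, abs_lt] at this
    linarith
  have h1 : ∀ᶠ n in atTop, |(a ⌊t * b n⌋₊ : ℝ) / n - t ^ γ| < ε := by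
    have := (Metric.tendsto_nhds.mp (lemA t ht)) ε hε
    simpa [Real.dist_eq] using this
  have h2 : ∀ᶠ n in atTop, |(a ⌊t' * b n⌋₊ : ℝ) / n - t' ^ γ| < ε/2 := by
    have := (Metric.tendsto_nhds.mp (lemA t' (ht.trans ht'))) (ε/2) (by linarith)
    simpa [Real.dist_eq] using this
  have h3 : ∀ᶠ n in atTop, ⌊t * b n⌋₊ + 1 ≤ ⌊t' * b n⌋₊ := by
    have hb2 : ∀ᶠ n in atTop, (2 : ℝ) / (t' - t) ≤ (b n : ℝ) := by
      have : Tendsto (fun n : ℕ => (b n : ℝ)) atTop atTop :=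
        tendsto_natCast_atTop_atTop.comp hbtop
      exact this.eventually_ge_atTop _
    filter_upwards [hb2] with n hn
    have htt' : (0:ℝ) < t' - t := by linarith
    have : t * b n + 2 ≤ t' * b n := by
      have := (div_le_iff₀ htt').mp hn
      nlinarith
    calc ⌊t * b n⌋₊ + 1 ≤ ⌊t * b n⌋₊ + 2 := by omega
      _ = ⌊t * (b n : ℝ) + 2⌋₊ := by
          rw [← Nat.floor_add_natCast (by positivity) 2]; norm_num
      _ ≤ ⌊t' * b n⌋₊ := Nat.floor_le_floor this
  filter_upwards [h1, h2, h3, eventually_gt_atTop 0] with n e1 e2 e3 hn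
  have hnpos : (0:ℝ) < n := by exact_mod_cast hn
  have hm1 : (a ⌊t * b n⌋₊ : ℝ) / n ≤ (a (⌊t * b n⌋₊ + 1) : ℝ) / n := by
    gcongr
    exact_mod_cast hamono (Nat.le_succ _)
  have hm2 : (a (⌊t * b n⌋₊ + 1) : ℝ) / n ≤ (a ⌊t' * b n⌋₊ : ℝ) / n := by
    gcongr
    exact_mod_cast hamono e3
  rw [Real.dist_eq, abs_lt]
  rw [abs_lt] at e1 e2
  constructor <;> linarith

/-- Mittag-Leffler/stable duality: if `S_n/a(n) → c·Y_γ` in distribution, where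
`Y_γ > 0` has continuous distribution function, `a` is `γ`-regularly varying with
asymptotic inverse `b`, and `S_n ≤ j ⟺ φ_j ≥ n`, then
`φ_n/b(n) → (1/(c Y_γ))^{1/γ}` in distribution. -/
theorem stmt19 {Ω : Type*} [MeasurableSpace Ω] (P : Measure Ω) [IsProbabilityMeasure P]
    (γ : ℝ) (hγ0 : 0 < γ) (hγ1 : γ ≤ 1) (c : ℝ) (hc : 0 < c)
    (a b : ℕ → ℕ) (hapos : ∀ n, 0 < a n) (hbpos : ∀ n, 0 < b n)
    (hamono : Monotone a)
    (hareg : ∀ l : ℝ, 0 < l →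
      Tendsto (fun n : ℕ => (a ⌊l * n⌋₊ : ℝ) / (a n : ℝ)) atTop (𝓝 (l ^ γ)))
    (hba : Tendsto (fun n : ℕ => (b (a n) : ℝ) / (n : ℝ)) atTop (𝓝 1))
    (hab : Tendsto (fun n : ℕ => (a (b n) : ℝ) / (n : ℝ)) atTop (𝓝 1))
    (S φ : ℕ → Ω → ℕ)
    (hSmeas : ∀ n, Measurable (S n)) (hφmeas : ∀ j, Measurable (φ j))
    (hdual : ∀ (n j : ℕ) (ω : Ω), S n ω ≤ j ↔ n ≤ φ j ω)
    (Y : Ω → ℝ) (hYmeas : Measurable Y) (hYpos : ∀ ω, 0 < Y ω)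
    (hYcont : Continuous fun t : ℝ => (P {ω | Y ω ≤ t}).toReal)
    (hconv : ∀ t : ℝ,
      Tendsto (fun n : ℕ => (P {ω | (S n ω : ℝ) / (a n : ℝ) ≤ t}).toReal) atTop
        (𝓝 ((P {ω | c * Y ω ≤ t}).toReal))) :
    ∀ t : ℝ,
      Tendsto (fun n : ℕ => (P {ω | (φ n ω : ℝ) / (b n : ℝ) ≤ t}).toReal) atTop
        (𝓝 ((P {ω | (1 / (c * Y ω)) ^ (1 / γ) ≤ t}).toReal)) := by
  have hcY_noatom : ∀ s : ℝ, P {ω | c * Y ω = s} = 0 := by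
    intro s
    have hset : {ω | c * Y ω = s} = {ω | Y ω = s / c} := by
      ext ω; simp only [Set.mem_setOf_eq]
      rw [eq_div_iff hc.ne', mul_comm]
    rw [hset]
    exact noatom_aux P Y hYmeas hYcont _
  have hSsetmeas : ∀ (k : ℕ) (x : ℝ), MeasurableSet {ω | (S k ω : ℝ) / (a k : ℝ) ≤ x} :=
    fun k x => (hSmeas k) (MeasurableSet.of_discrete (s := {i : ℕ | (i : ℝ) / (a k : ℝ) ≤ x}))
  have hGcont : Continuous (fun x : ℝ => (P {ω | c * Y ω ≤ x}).toReal) := by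
    have hs : ∀ x : ℝ, {ω | c * Y ω ≤ x} = {ω | Y ω ≤ x / c} := by
      intro x; ext ω; simp only [Set.mem_setOf_eq]
      rw [le_div_iff₀ hc, mul_comm]
    simp_rw [hs]
    exact hYcont.comp (continuous_id.div_const c)
  have hFmono : ∀ k, Monotone (fun x : ℝ => (P {ω | (S k ω : ℝ) / (a k : ℝ) ≤ x}).toReal) := by
    intro k x y hxy
    exact ENNReal.toReal_mono (measure_ne_top P _)
      (measure_mono (fun ω h => le_trans h hxy))
  have hRpos : ∀ ω, 0 < (1 / (c * Y ω)) ^ (1 / γ) := by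
    intro ω
    apply Real.rpow_pos_of_pos
    have := hYpos ω; positivity
  intro t
  rcases lt_trichotomy t 0 with ht | ht | ht
  · -- t < 0
    have hL : ∀ n, {ω | (φ n ω : ℝ) / (b n : ℝ) ≤ t} = (∅ : Set Ω) := by
      intro n; rw [Set.eq_empty_iff_forall_notMem]
      intro ω h
      simp only [Set.mem_setOf_eq] at h
      have : (0:ℝ) ≤ (φ n ω : ℝ) / (b n : ℝ) := by positivity
      linarith
    have hR : {ω | (1 / (c * Y ω)) ^ (1 / γ) ≤ t} = (∅ : Set Ω) := by
      rw [Set.eq_empty_iff_forall_notMem]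
      intro ω h
      simp only [Set.mem_setOf_eq] at h
      have := hRpos ω; linarith
    simp only [hL, hR, measure_empty, ENNReal.toReal_zero]
    exact tendsto_const_nhds
  · -- t = 0
    subst ht
    have hR : {ω | (1 / (c * Y ω)) ^ (1 / γ) ≤ (0:ℝ)} = (∅ : Set Ω) := by
      rw [Set.eq_empty_iff_forall_notMem]
      intro ω h
      simp only [Set.mem_setOf_eq] at h
      have := hRpos ω; linarith
    have hL : ∀ n, {ω | (φ n ω : ℝ) / (b n : ℝ) ≤ (0:ℝ)} = {ω | n < S 1 ω} := by
      intro n; ext ω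
      simp only [Set.mem_setOf_eq]
      have hbn : (0:ℝ) < (b n : ℝ) := by exact_mod_cast hbpos n
      have h1 : (φ n ω : ℝ) / (b n : ℝ) ≤ 0 ↔ φ n ω = 0 := by
        constructor
        · intro h
          have hnum : (φ n ω : ℝ) ≤ 0 := by
            by_contra hpos
            push_neg at hpos
            nlinarith [div_pos hpos hbn]
          have : (φ n ω : ℝ) = 0 := le_antisymm hnum (by positivity)
          exact_mod_cast this
        · intro h; simp [h]
      rw [h1]
      have h2 : S 1 ω ≤ n ↔ 1 ≤ φ n ω := hdual 1 n ω
      omega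
    simp only [hR, measure_empty, ENNReal.toReal_zero, hL]
    have hanti : Antitone (fun n : ℕ => {ω | n < S 1 ω}) := by
      intro i j hij ω h
      simp only [Set.mem_setOf_eq] at h ⊢
      omega
    have hIe : (⋂ n, {ω | n < S 1 ω}) = (∅ : Set Ω) := by
      rw [Set.eq_empty_iff_forall_notMem]
      intro ω h
      simp only [Set.mem_iInter, Set.mem_setOf_eq] at h
      exact lt_irrefl _ (h (S 1 ω))
    have hmeas : ∀ n : ℕ, NullMeasurableSet {ω | n < S 1 ω} P := by
      intro n
      exact ((hSmeas 1) (MeasurableSet.of_discrete (s := {i : ℕ | n < i}))).nullMeasurableSet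
    have htm := tendsto_measure_iInter_atTop hmeas hanti ⟨0, measure_ne_top P _⟩
    rw [hIe, measure_empty] at htm
    have := (ENNReal.tendsto_toReal (by simp)).comp htm
    simpa [Function.comp_def] using this
  · -- t > 0
    set m : ℕ → ℕ := fun n => ⌊t * (b n : ℝ)⌋₊ + 1 with hmdef
    have hseteq : ∀ n, {ω | (φ n ω : ℝ) / (b n : ℝ) ≤ t}
        = {ω | (S (m n) ω : ℝ) / (a (m n) : ℝ) ≤ (n : ℝ) / (a (m n) : ℝ)}ᶜ := by
      intro n; ext ω
      simp only [Set.mem_setOf_eq, Set.mem_compl_iff]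
      have hbn : (0:ℝ) < (b n : ℝ) := by exact_mod_cast hbpos n
      have han : (0:ℝ) < (a (m n) : ℝ) := by exact_mod_cast hapos (m n)
      have h1 : (φ n ω : ℝ) / (b n : ℝ) ≤ t ↔ φ n ω ≤ ⌊t * (b n : ℝ)⌋₊ := by
        rw [div_le_iff₀ hbn, ← Nat.le_floor_iff (by positivity)]
      have h2 : φ n ω ≤ ⌊t * (b n : ℝ)⌋₊ ↔ ¬ (S (m n) ω ≤ n) := by
        rw [hdual (m n) n ω]
        simp only [hmdef]
        omega
      have h3 : S (m n) ω ≤ n ↔ (S (m n) ω : ℝ) / (a (m n) : ℝ) ≤ (n : ℝ) / (a (m n) : ℝ) := by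
        rw [div_le_div_iff_of_pos_right han, Nat.cast_le]
      exact h1.trans (h2.trans (not_congr h3))
    have hslim : Tendsto (fun n : ℕ => (n : ℝ) / (a (m n) : ℝ)) atTop (𝓝 (t ^ (-γ))) := by
      have hk := keylim_aux γ a b hapos hamono hareg hab hγ0 ht
      have htγ : (0:ℝ) < t ^ γ := Real.rpow_pos_of_pos ht γ
      have := hk.inv₀ htγ.ne'
      rw [Real.rpow_neg ht.le]
      apply this.congr
      intro n
      rw [inv_div]
    have hmtop : Tendsto m atTop atTop := by
      have hbtop' : Tendsto (fun n : ℕ => t * (b n : ℝ)) atTop atTop := by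
        apply Tendsto.const_mul_atTop ht
        apply tendsto_natCast_atTop_atTop.comp
        rw [tendsto_atTop_atTop]
        intro M
        have habtop : Tendsto (fun n : ℕ => (a (b n) : ℝ)) atTop atTop := by
          have : Tendsto (fun n : ℕ => ((a (b n) : ℝ) / n) * n) atTop atTop :=
            hab.pos_mul_atTop one_pos tendsto_natCast_atTop_atTop
          apply this.congr'
          filter_upwards [eventually_gt_atTop 0] with n hn
          field_simp
        obtain ⟨N, hN⟩ := ((habtop.eventually_gt_atTop (a M : ℝ)).and
          (eventually_ge_atTop 0)).exists_forall_of_atTop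
        refine ⟨N, fun n hn => ?_⟩
        by_contra hbn
        push_neg at hbn
        exact absurd (Nat.cast_le.mpr (hamono hbn.le)) (not_le.mpr (hN n hn).1)
      have hfl := tendsto_nat_floor_atTop (α := ℝ) |>.comp hbtop'
      exact tendsto_atTop_mono (fun n => Nat.le_succ _) hfl
    have hpolya := polya_aux hFmono hGcont hconv hslim hmtop
    have hLexpr : ∀ n, (P {ω | (φ n ω : ℝ) / (b n : ℝ) ≤ t}).toReal
        = 1 - (P {ω | (S (m n) ω : ℝ) / (a (m n) : ℝ) ≤ (n : ℝ) / (a (m n) : ℝ)}).toReal := by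
      intro n
      rw [hseteq n, measure_compl (hSsetmeas _ _) (measure_ne_top P _), measure_univ,
        ENNReal.toReal_sub_of_le prob_le_one (by simp)]
      simp
    have hval : (P {ω | (1 / (c * Y ω)) ^ (1 / γ) ≤ t}).toReal
        = 1 - (P {ω | c * Y ω ≤ t ^ (-γ)}).toReal := by
      have hset1 : {ω | (1 / (c * Y ω)) ^ (1 / γ) ≤ t} = {ω | t ^ (-γ) ≤ c * Y ω} := by
        ext ω; simp only [Set.mem_setOf_eq]
        have hx : 0 < c * Y ω := mul_pos hc (hYpos ω)
        rw [← Real.rpow_le_rpow_iff (z := γ)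
          (Real.rpow_nonneg (by positivity) _) ht.le hγ0]
        have e1 : ((1 / (c * Y ω)) ^ (1 / γ)) ^ γ = 1 / (c * Y ω) := by
          rw [← Real.rpow_mul (by positivity), one_div γ, inv_mul_cancel₀ hγ0.ne',
            Real.rpow_one]
        rw [e1, Real.rpow_neg ht.le, ← one_div]
        exact one_div_le hx (Real.rpow_pos_of_pos ht γ)
      rw [hset1]
      have hmeasset : MeasurableSet {ω | c * Y ω ≤ t ^ (-γ)} :=
        (measurable_const.mul hYmeas) measurableSet_Iic
      have hsplit : P {ω | t ^ (-γ) ≤ c * Y ω} = P {ω | t ^ (-γ) < c * Y ω} := by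
        apply le_antisymm
        · have hsub : {ω | t ^ (-γ) ≤ c * Y ω}
              ⊆ {ω | t ^ (-γ) < c * Y ω} ∪ {ω | c * Y ω = t ^ (-γ)} := by
            intro ω h
            simp only [Set.mem_setOf_eq] at h
            simp only [Set.mem_union, Set.mem_setOf_eq]
            rcases eq_or_lt_of_le h with he | hl
            · exact Or.inr he.symm
            · exact Or.inl hl
          calc P {ω | t ^ (-γ) ≤ c * Y ω}
              ≤ P ({ω | t ^ (-γ) < c * Y ω} ∪ {ω | c * Y ω = t ^ (-γ)}) := measure_mono hsub
            _ ≤ P {ω | t ^ (-γ) < c * Y ω} + P {ω | c * Y ω = t ^ (-γ)} := measure_union_le _ _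
            _ = P {ω | t ^ (-γ) < c * Y ω} := by rw [hcY_noatom, add_zero]
        · exact measure_mono (fun ω (h : t ^ (-γ) < c * Y ω) => le_of_lt h)
      have hcompl : {ω | t ^ (-γ) < c * Y ω} = {ω | c * Y ω ≤ t ^ (-γ)}ᶜ := by
        ext ω
        simp only [Set.mem_setOf_eq, Set.mem_compl_iff, not_le]
      rw [hsplit, hcompl, measure_compl hmeasset (measure_ne_top P _), measure_univ,
        ENNReal.toReal_sub_of_le prob_le_one (by simp)]
      simp
    rw [hval]
    exact (tendsto_const_nhds.sub hpolya).congr (fun n => (hLexpr n).symm)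
end
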